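/- arXiv:1203.5300 — 9 statements merged into one kernel-verified Lean document; each statement's English description precedes it below -/
import Mathlib

section
/- There exist 2×2 Hermitian positive semidefinite matrices A and B such that the inequality ((A+B)/2)³ ≤ ∫_0^1 (tA+(1-t)B)³ dt fails in the Loewner order. Concretely, one may take A = [[2,1],[1,1]] and B = [[1,0],[0,0]]. -/
open scoped ComplexOrder Matrix

lemma intpoly (a b c d : ℝ) : ∫ t in (0:ℝ)..1, (a + b*t + c*t^2 + d*t^3) = a + b/2 + c/3 + d/4 := by
  rw [intervalIntegral.integral_add, intervalIntegral.integral_add, intervalIntegral.integral_add,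
    intervalIntegral.integral_const, intervalIntegral.integral_const_mul,
    intervalIntegral.integral_const_mul, intervalIntegral.integral_const_mul,
    integral_id, integral_pow, integral_pow]
  · simp; ring
  all_goals exact (by fun_prop : Continuous fun t : ℝ => _).intervalIntegrable _ _

lemma cube (t : ℝ) :
    (t • (!![2, 1; 1, 1] : Matrix (Fin 2) (Fin 2) ℂ) + (1 - t) • !![1, 0; 0, 0]) ^ 3 =
    !![((1+3*t+5*t^2+4*t^3 : ℝ) : ℂ), ((0+1*t+3*t^2+4*t^3 : ℝ) : ℂ);
       ((0+1*t+3*t^2+4*t^3 : ℝ) : ℂ), ((0+0*t+1*t^2+4*t^3 : ℝ) : ℂ)] := by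
  rw [pow_succ, pow_succ, pow_one]
  ext i j
  fin_cases i <;> fin_cases j <;>
    simp [Matrix.mul_apply, Fin.sum_univ_two, Complex.real_smul] <;> ring

lemma psA : (!![2, 1; 1, 1] : Matrix (Fin 2) (Fin 2) ℂ).PosSemidef := by
  have h : (!![2, 1; 1, 1] : Matrix (Fin 2) (Fin 2) ℂ) = (!![1,1;1,0])ᴴ * !![1,1;1,0] := by
    ext i j; fin_cases i <;> fin_cases j <;>
      simp [Matrix.mul_apply, Fin.sum_univ_two, Matrix.conjTranspose_apply, one_add_one_eq_two]
  rw [h]; exact Matrix.posSemidef_conjTranspose_mul_self _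

lemma psB : (!![1, 0; 0, 0] : Matrix (Fin 2) (Fin 2) ℂ).PosSemidef := by
  have h : (!![1, 0; 0, 0] : Matrix (Fin 2) (Fin 2) ℂ) = (!![1,0;0,0])ᴴ * !![1,0;0,0] := by
    ext i j; fin_cases i <;> fin_cases j <;>
      simp [Matrix.mul_apply, Fin.sum_univ_two, Matrix.conjTranspose_apply]
  rw [h]; exact Matrix.posSemidef_conjTranspose_mul_self _

/-- The naive matrix Hermite–Hadamard inequality for `f(t) = t³` fails:
there exist positive semidefinite Hermitian `2×2` matrices `A, B` such that
`((A+B)/2)³ ≤ ∫_0^1 (tA+(1-t)B)³ dt` fails in the Loewner order. The integral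
is taken entrywise. -/
theorem matrix_hermite_hadamard_fails :
    ∃ A B : Matrix (Fin 2) (Fin 2) ℂ,
      A.IsHermitian ∧ B.IsHermitian ∧ A.PosSemidef ∧ B.PosSemidef ∧
      A = !![2, 1; 1, 1] ∧ B = !![1, 0; 0, 0] ∧
      ¬ ((Matrix.of fun i j => ∫ t in (0:ℝ)..1, ((t • A + (1 - t) • B) ^ 3) i j)
          - ((2:ℂ)⁻¹ • (A + B)) ^ 3).PosSemidef := by
  refine ⟨!![2, 1; 1, 1], !![1, 0; 0, 0], psA.isHermitian, psB.isHermitian, psA, psB,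
    rfl, rfl, ?_⟩
  have hN : (((2:ℂ)⁻¹ • ((!![2, 1; 1, 1] : Matrix (Fin 2) (Fin 2) ℂ) + !![1, 0; 0, 0])) ^ 3) =
      !![17/4, 7/4; 7/4, 3/4] := by
    rw [pow_succ, pow_succ, pow_one]
    ext i j
    fin_cases i <;> fin_cases j <;>
      · simp [Matrix.mul_apply, Fin.sum_univ_two]
        norm_num
  have hD : ∀ A B : Matrix (Fin 2) (Fin 2) ℂ, A = !![2, 1; 1, 1] → B = !![1, 0; 0, 0] →
      ((Matrix.of fun i j => ∫ t in (0:ℝ)..1, ((t • A + (1 - t) • B) ^ 3) i j)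
        - ((2:ℂ)⁻¹ • (A + B)) ^ 3)
      = !![11/12, 3/4; 3/4, 7/12] := by
    rintro A B rfl rfl
    rw [hN]
    ext i j
    fin_cases i <;> fin_cases j <;>
      · simp only [Matrix.sub_apply, Matrix.of_apply, cube, Fin.mk_zero, Fin.mk_one,
          Matrix.cons_val', Matrix.cons_val_zero, Matrix.cons_val_one, Matrix.head_cons,
          Matrix.empty_val', Matrix.cons_val_fin_one, Matrix.head_fin_const]
        rw [intervalIntegral.integral_ofReal, intpoly]
        norm_num
  rw [hD _ _ rfl rfl]
  intro h
  have h5 := h.dotProduct_mulVec_nonneg ![-4, 5]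
  simp [dotProduct, Matrix.mulVec, Fin.sum_univ_two] at h5
  rw [Complex.le_def] at h5
  norm_num at h5
end

section
/- Let A ∈ M_n be Hermitian with spectrum in an interval J, f : J → ℝ convex, Φ : M_n → M_m a unital positive linear map, and x ∈ ℂ^m a unit vector. Then f(⟨Φ(A)x, x⟩) ≤ ⟨Φ(f(A))x, x⟩. -/
open scoped InnerProductSpace
open scoped ComplexOrder

/-- Let `A` be a Hermitian `n×n` matrix with spectrum in an interval `J`, `f` convex
(and continuous) on `J`, `Φ` a unital positive linear map into `m×m` matrices and `x`
a unit vector. Then `f(⟨Φ(A)x, x⟩) ≤ ⟨Φ(f(A))x, x⟩`. -/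
theorem jensen_unital_positive_map
    {n m : ℕ} (A : Matrix (Fin n) (Fin n) ℂ) (hA : A.IsHermitian)
    (J : Set ℝ) (hJ : spectrum ℝ A ⊆ J)
    (f : ℝ → ℝ) (hconv : ConvexOn ℝ J f) (hcont : ContinuousOn f J)
    (Φ : Matrix (Fin n) (Fin n) ℂ →ₗ[ℂ] Matrix (Fin m) (Fin m) ℂ)
    (hpos : ∀ X : Matrix (Fin n) (Fin n) ℂ, X.PosSemidef → (Φ X).PosSemidef)
    (hunital : Φ 1 = 1)
    (x : EuclideanSpace ℂ (Fin m)) (hx : ‖x‖ = 1) :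
    f ((⟪Matrix.toEuclideanLin (Φ A) x, x⟫_ℂ).re) ≤
      (⟪Matrix.toEuclideanLin (Φ (cfc f A)) x, x⟫_ℂ).re := by
  classical
  set U : Matrix (Fin n) (Fin n) ℂ := (Matrix.IsHermitian.eigenvectorUnitary hA : Matrix (Fin n) (Fin n) ℂ) with hU
  set lam : Fin n → ℝ := hA.eigenvalues with hlam
  -- spectral projections
  set P : Fin n → Matrix (Fin n) (Fin n) ℂ := fun i =>
    U * Matrix.diagonal (fun j => if j = i then (1:ℂ) else 0) * star U with hP
  -- decomposition of conjugated diagonals as combinations of the P i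
  have hdiag : ∀ d : Fin n → ℂ,
      U * Matrix.diagonal d * star U = ∑ i, d i • P i := by
    intro d
    have h1 : Matrix.diagonal d
        = ∑ i, d i • Matrix.diagonal (fun j => if j = i then (1:ℂ) else 0) := by
      ext j k
      simp only [Matrix.sum_apply, Matrix.smul_apply, Matrix.diagonal_apply, smul_eq_mul]
      by_cases hjk : j = k
      · subst hjk
        simp
      · simp [hjk]
    rw [h1, Finset.mul_sum, Finset.sum_mul]
    refine Finset.sum_congr rfl fun i _ => ?_
    simp [hP, Matrix.mul_smul, Matrix.smul_mul]
  -- the weights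
  set w : Fin n → ℝ := fun i => (⟪Matrix.toEuclideanLin (Φ (P i)) x, x⟫_ℂ).re with hw
  -- key computation
  have key : ∀ d : Fin n → ℝ,
      (⟪Matrix.toEuclideanLin (Φ (U * Matrix.diagonal (fun i => (d i : ℂ)) * star U)) x, x⟫_ℂ).re
        = ∑ i, d i * w i := by
    intro d
    rw [hdiag, map_sum, map_sum, LinearMap.sum_apply, sum_inner, Complex.re_sum]
    refine Finset.sum_congr rfl fun i _ => ?_
    rw [map_smul, map_smul, LinearMap.smul_apply, inner_smul_left,
      Complex.conj_ofReal, Complex.re_ofReal_mul]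
  -- positivity of the weights
  have hw0 : ∀ i, 0 ≤ w i := by
    intro i
    have hPi : (P i).PosSemidef := by
      have hd : (Matrix.diagonal (fun j => if j = i then (1:ℂ) else 0)).PosSemidef := by
        refine Matrix.posSemidef_diagonal_iff.mpr fun j => ?_
        by_cases hj : j = i <;> simp [hj]
      have := hd.mul_mul_conjTranspose_same U
      simpa [hP, Matrix.star_eq_conjTranspose] using this
    have hM : (Φ (P i)).PosSemidef := hpos _ hPi
    have h1 : (⟪Matrix.toEuclideanLin (Φ (P i)) x, x⟫_ℂ).re
        = (⟪x, Matrix.toEuclideanLin (Φ (P i)) x⟫_ℂ).re := by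
      rw [← inner_conj_symm x (Matrix.toEuclideanLin (Φ (P i)) x), Complex.conj_re]
    show 0 ≤ (⟪Matrix.toEuclideanLin (Φ (P i)) x, x⟫_ℂ).re
    rw [h1, EuclideanSpace.inner_eq_star_dotProduct, Matrix.toEuclideanLin_apply]
    rw [dotProduct_comm]
    simpa using hM.re_dotProduct_nonneg (WithLp.equiv 2 (Fin m → ℂ) x)
  -- the weights sum to 1
  have hw1 : ∑ i, w i = 1 := by
    have h1 : U * Matrix.diagonal (fun _ : Fin n => ((1:ℝ) : ℂ)) * star U = 1 := by
      rw [show (Matrix.diagonal (fun _ : Fin n => ((1:ℝ):ℂ))) = 1 by simp [Matrix.diagonal_one],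
        mul_one]
      exact Unitary.mul_star_self_of_mem (Matrix.IsHermitian.eigenvectorUnitary hA).2
    have := key (fun _ => (1:ℝ))
    rw [h1, hunital] at this
    have hxx : (⟪Matrix.toEuclideanLin (1 : Matrix (Fin m) (Fin m) ℂ) x, x⟫_ℂ).re = 1 := by
      have h2 : Matrix.toEuclideanLin (1 : Matrix (Fin m) (Fin m) ℂ) x = x := by
        rw [Matrix.toEuclideanLin_apply, Matrix.one_mulVec]
      rw [h2, inner_self_eq_norm_sq_to_K (𝕜 := ℂ), hx]
      norm_num
    rw [hxx] at this
    simpa using this.symm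
  -- rewrite both sides
  have hA' : A = U * Matrix.diagonal (fun i => ((lam i : ℝ) : ℂ)) * star U := by
    conv_lhs => rw [hA.spectral_theorem]
    rfl
  have hcfc : cfc f A = U * Matrix.diagonal (fun i => ((f (lam i) : ℝ) : ℂ)) * star U := by
    rw [hA.cfc_eq]
    rfl
  rw [hcfc, hA', key, key]
  -- Jensen
  have hmem : ∀ i ∈ Finset.univ, lam i ∈ J := fun i _ =>
    hJ (hA.eigenvalues_mem_spectrum_real i)
  have := hconv.map_sum_le (t := Finset.univ) (w := w) (p := lam) (fun i _ => hw0 i) hw1 hmem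
  calc f (∑ i, lam i * w i) = f (∑ i, w i • lam i) := by
        simp_rw [smul_eq_mul, mul_comm]
      _ ≤ ∑ i, w i • f (lam i) := this
      _ = ∑ i, f (lam i) * w i := by simp_rw [smul_eq_mul, mul_comm]
end

section
/- Let A ∈ M_n be Hermitian with spectrum in an interval J containing 0, f : J → ℝ convex with f(0) ≤ 0, Φ : M_n → M_m a positive linear map with 0 < Φ(I_n) ≤ I_m, and x ∈ ℂ^m with ‖x‖ ≤ 1. Then f(⟨Φ(A)x, x⟩) ≤ ⟨Φ(f(A))x, x⟩. -/
open scoped InnerProductSpace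
open scoped ComplexOrder
open Matrix

lemma diag_eq_sum_smul {k : ℕ} (d : Fin k → ℂ) :
    Matrix.diagonal d = ∑ i, d i • Matrix.single i i (1:ℂ) := by
  ext a b
  simp only [Matrix.sum_apply, Matrix.smul_apply, Matrix.single, Matrix.diagonal_apply,
    Matrix.of_apply, smul_eq_mul, mul_ite, mul_one, mul_zero]
  by_cases h : a = b
  · subst h; simp
  · simp [h, Finset.sum_ite_of_false, fun i (hi : i = a ∧ i = b) => h (hi.1 ▸ hi.2)]

/-- Let `A` be a Hermitian `n×n` matrix with spectrum in an interval `J`, `f` convex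
(and continuous) on `J`, `Φ` a unital positive linear map into `m×m` matrices and `x`
a unit vector. Then `f(⟨Φ(A)x, x⟩) ≤ ⟨Φ(f(A))x, x⟩`. -/
theorem jensen_subunital_positive_map
    {n m : ℕ} (A : Matrix (Fin n) (Fin n) ℂ) (hA : A.IsHermitian)
    (J : Set ℝ) (hJ : spectrum ℝ A ⊆ J) (h0J : (0:ℝ) ∈ J)
    (f : ℝ → ℝ) (hconv : ConvexOn ℝ J f) (hcont : ContinuousOn f J) (hf0 : f 0 ≤ 0)
    (Φ : Matrix (Fin n) (Fin n) ℂ →ₗ[ℂ] Matrix (Fin m) (Fin m) ℂ)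
    (hpos : ∀ X : Matrix (Fin n) (Fin n) ℂ, X.PosSemidef → (Φ X).PosSemidef)
    (hsub : ((1 : Matrix (Fin m) (Fin m) ℂ) - Φ 1).PosSemidef) (hpd : (Φ 1).PosDef)
    (x : EuclideanSpace ℂ (Fin m)) (hx : ‖x‖ ≤ 1) :
    f ((⟪Matrix.toEuclideanLin (Φ A) x, x⟫_ℂ).re) ≤
      (⟪Matrix.toEuclideanLin (Φ (cfc f A)) x, x⟫_ℂ).re := by
  classical
  set U : Matrix (Fin n) (Fin n) ℂ := (hA.eigenvectorUnitary : Matrix (Fin n) (Fin n) ℂ) with hU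
  set lam : Fin n → ℝ := hA.eigenvalues with hlam
  set P : Fin n → Matrix (Fin n) (Fin n) ℂ :=
    fun i => U * Matrix.single i i 1 * Uᴴ with hP
  have hPsd : ∀ i, (P i).PosSemidef := by
    intro i
    have h1 : (Matrix.single i i (1:ℂ)).PosSemidef := by
      have : Matrix.single i i (1:ℂ) = Matrix.diagonal (Pi.single i 1) := by
        ext a b
        simp [Matrix.single, Matrix.diagonal_apply, Pi.single_apply]
        aesop
      rw [this]
      exact Matrix.PosSemidef.diagonal (by
        intro j
        by_cases h : j = i <;> simp [Pi.single_apply, h])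
    exact h1.mul_mul_conjTranspose_same U
  have key : ∀ d : Fin n → ℝ,
      U * Matrix.diagonal ((↑) ∘ d : Fin n → ℂ) * Uᴴ = ∑ i, (d i : ℂ) • P i := by
    intro d
    rw [show (((↑) ∘ d : Fin n → ℂ)) = fun i => (d i : ℂ) from rfl]
    rw [diag_eq_sum_smul, Finset.mul_sum, Finset.sum_mul]
    refine Finset.sum_congr rfl fun i _ => ?_
    have hsb : Matrix.single i i ((d i : ℂ)) = (d i : ℂ) • Matrix.single i i (1:ℂ) := by
      rw [Matrix.smul_single, smul_eq_mul, mul_one]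
    rw [Matrix.mul_smul, Matrix.smul_mul]
  have hAsum : A = ∑ i, (lam i : ℂ) • P i := by
    conv_lhs => rw [hA.spectral_theorem]
    rw [← key lam]
    rfl
  have hfsum : cfc f A = ∑ i, (f (lam i) : ℂ) • P i := by
    rw [hA.cfc_eq]
    rw [show hA.cfc f = U * Matrix.diagonal ((↑) ∘ (f ∘ lam) : Fin n → ℂ) * Uᴴ from rfl]
    exact key (f ∘ lam)
  have hPone : (∑ i, P i) = (1 : Matrix (Fin n) (Fin n) ℂ) := by
    have h := key (fun _ => 1)
    simp only [Complex.ofReal_one, one_smul] at h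
    rw [← h]
    rw [show ((↑) ∘ (fun _ => (1:ℝ)) : Fin n → ℂ) = (fun _ => (1:ℂ)) by funext; simp,
      Matrix.diagonal_one, mul_one]
    exact (Matrix.mem_unitaryGroup_iff).mp hA.eigenvectorUnitary.2
  set q : Matrix (Fin m) (Fin m) ℂ → ℝ :=
    fun X => (⟪Matrix.toEuclideanLin X x, x⟫_ℂ).re with hq
  have hq_nonneg : ∀ X : Matrix (Fin m) (Fin m) ℂ, X.PosSemidef → 0 ≤ q X := by
    intro X hX
    have h1 := hX.re_dotProduct_nonneg (WithLp.equiv 2 (Fin m → ℂ) x)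
    have h2 : (⟪Matrix.toEuclideanLin X x, x⟫_ℂ) =
        star (dotProduct (star (WithLp.equiv 2 (Fin m → ℂ) x))
          (X *ᵥ (WithLp.equiv 2 (Fin m → ℂ) x))) := by
      rw [EuclideanSpace.inner_eq_star_dotProduct]
      rw [show (Matrix.toEuclideanLin X x).ofLp
          = X *ᵥ (WithLp.equiv 2 (Fin m → ℂ) x) from rfl]
      rw [Matrix.dotProduct_star, dotProduct_comm]
      rfl
    simp only [hq]
    rw [h2]
    simpa using h1
  have hq_sum : ∀ (c : Fin n → ℝ) (M : Fin n → Matrix (Fin m) (Fin m) ℂ),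
      q (∑ i, (c i : ℂ) • M i) = ∑ i, c i * q (M i) := by
    intro c M
    simp only [hq, map_sum, _root_.map_smul, LinearMap.sum_apply, LinearMap.smul_apply,
      sum_inner, inner_smul_left, Complex.re_sum, Complex.conj_ofReal]
    refine Finset.sum_congr rfl fun i _ => ?_
    simp [Complex.mul_re]
  have hΦsum : ∀ (c : Fin n → ℝ),
      q (Φ (∑ i, (c i : ℂ) • P i)) = ∑ i, c i * q (Φ (P i)) := by
    intro c
    rw [map_sum]
    simp only [LinearMap.map_smul]
    exact hq_sum c (fun i => Φ (P i))
  set g : Fin n → ℝ := fun i => q (Φ (P i)) with hg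
  have hg0 : ∀ i, 0 ≤ g i := fun i => hq_nonneg _ (hpos _ (hPsd i))
  have hsumg : ∑ i, g i = q (Φ 1) := by
    have h := hΦsum (fun _ => 1)
    simp only [Complex.ofReal_one, one_smul, one_mul] at h
    rw [hPone] at h
    exact h.symm
  have hnorm : q 1 = ‖x‖ ^ 2 := by
    have h1 : Matrix.toEuclideanLin (1 : Matrix (Fin m) (Fin m) ℂ) x = x := by
      rw [Matrix.toEuclideanLin_apply, Matrix.one_mulVec]
    simp only [hq, h1]
    simpa [RCLike.re_to_complex] using inner_self_eq_norm_sq (𝕜 := ℂ) x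
  have hgle : ∑ i, g i ≤ 1 := by
    have h1 : 0 ≤ q (1 - Φ 1) := hq_nonneg _ hsub
    have h2 : q (1 - Φ 1) = q 1 - q (Φ 1) := by
      simp only [hq, map_sub, LinearMap.sub_apply, inner_sub_left, Complex.sub_re]
    have h4 : ‖x‖ ^ 2 ≤ 1 := by
      have := mul_le_one₀ hx (norm_nonneg x) hx
      simpa [sq] using this
    rw [hsumg]
    nlinarith [h1, h2, hnorm]
  have hmemJ : ∀ i, lam i ∈ J := fun i => hJ (hA.eigenvalues_mem_spectrum_real i)
  have hgoal1 : (⟪Matrix.toEuclideanLin (Φ A) x, x⟫_ℂ).re = ∑ i, g i * lam i := by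
    show q (Φ A) = _
    rw [hAsum, hΦsum lam]
    exact Finset.sum_congr rfl fun i _ => mul_comm _ _
  have hgoal2 : (⟪Matrix.toEuclideanLin (Φ (cfc f A)) x, x⟫_ℂ).re
      = ∑ i, g i * f (lam i) := by
    show q (Φ (cfc f A)) = _
    rw [hfsum, hΦsum (fun i => f (lam i))]
    exact Finset.sum_congr rfl fun i _ => mul_comm _ _
  rw [hgoal1, hgoal2]
  set t0 : ℝ := 1 - ∑ i, g i with ht0def
  have ht0 : 0 ≤ t0 := by simp only [ht0def]; linarith
  have jensen := hconv.map_sum_le (t := (Finset.univ : Finset (Option (Fin n))))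
      (w := fun o => o.elim t0 g) (p := fun o => o.elim 0 lam)
      (fun o _ => by cases o with
        | none => exact ht0
        | some i => exact hg0 i)
      (by rw [Fintype.sum_option]; simp [ht0def])
      (fun o _ => by cases o with
        | none => exact h0J
        | some i => exact hmemJ i)
  rw [Fintype.sum_option, Fintype.sum_option] at jensen
  simp only [Option.elim] at jensen
  have h1 : (t0 • (0:ℝ) + ∑ i, g i • lam i) = ∑ i, g i * lam i := by simp
  rw [h1] at jensen
  have h2 : t0 * f 0 ≤ 0 := mul_nonpos_of_nonneg_of_nonpos ht0 hf0
  calc f (∑ i, g i * lam i) ≤ t0 * f 0 + ∑ i, g i * f (lam i) := jensen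
    _ ≤ ∑ i, g i * f (lam i) := by linarith
end

section
/- For a Hermitian matrix A ∈ M_n and 1 ≤ k ≤ n, the sum of the k largest eigenvalues of A equals the maximum of ∑_{j=1}^k ⟨A x_j, x_j⟩ over all orthonormal families x_1, ..., x_k in ℂ^n. -/
open scoped InnerProductSpace

open Finset in
private lemma keyNat (g d : ℕ → ℝ) {n k : ℕ} (hk1 : 1 ≤ k) (hk : k ≤ n)
    (hg : ∀ i j, i ≤ j → j < n → g j ≤ g i)
    (hd0 : ∀ i, i < n → 0 ≤ d i) (hd1 : ∀ i, i < n → d i ≤ 1)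
    (hsum : ∑ i ∈ range n, d i = k) :
    ∑ i ∈ range n, g i * d i ≤ ∑ i ∈ range k, g i := by
  set t := g (k - 1) with ht
  have hkn : k - 1 < n := by omega
  have hA : ∀ i ∈ range k, (g i - t) * d i ≤ g i - t := by
    intro i hi
    rw [mem_range] at hi
    have h1 : 0 ≤ g i - t := sub_nonneg.2 (hg i (k - 1) (by omega) hkn)
    nlinarith [hd1 i (by omega), hd0 i (by omega)]
  have hB : ∀ i ∈ Finset.Ico k n, (g i - t) * d i ≤ 0 := by
    intro i hi
    rw [Finset.mem_Ico] at hi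
    have h1 : g i - t ≤ 0 := sub_nonpos.2 (hg (k - 1) i (by omega) hi.2)
    exact mul_nonpos_of_nonpos_of_nonneg h1 (hd0 i hi.2)
  have hsplit : ∑ i ∈ range n, (g i - t) * d i
      = ∑ i ∈ range k, (g i - t) * d i + ∑ i ∈ Finset.Ico k n, (g i - t) * d i := by
    rw [Finset.range_eq_Ico, ← Finset.sum_Ico_consecutive _ (Nat.zero_le k) hk,
      ← Finset.range_eq_Ico]
  have hmain : ∑ i ∈ range n, (g i - t) * d i ≤ ∑ i ∈ range k, (g i - t) := by
    rw [hsplit]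
    have h2 := Finset.sum_le_sum hA
    have h3 : ∑ i ∈ Finset.Ico k n, (g i - t) * d i ≤ 0 := Finset.sum_nonpos hB
    linarith
  have e1 : ∑ i ∈ range n, (g i - t) * d i
      = ∑ i ∈ range n, g i * d i - t * k := by
    simp_rw [sub_mul]
    rw [Finset.sum_sub_distrib, ← Finset.mul_sum, hsum]
  have e2 : ∑ i ∈ range k, (g i - t) = ∑ i ∈ range k, g i - t * k := by
    rw [Finset.sum_sub_distrib, Finset.sum_const, Finset.card_range]
    ring_nf
  linarith

private lemma keyFin {n k : ℕ} (hk1 : 1 ≤ k) (hk : k ≤ n) (g d : Fin n → ℝ)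
    (hg : Antitone g) (hd0 : ∀ i, 0 ≤ d i) (hd1 : ∀ i, d i ≤ 1)
    (hsum : ∑ i, d i = k) :
    ∑ i, g i * d i ≤ ∑ j : Fin k, g (Fin.castLE hk j) := by
  set G : ℕ → ℝ := fun i => if h : i < n then g ⟨i, h⟩ else 0 with hG
  set D : ℕ → ℝ := fun i => if h : i < n then d ⟨i, h⟩ else 0 with hD
  have h1 : ∑ i, g i * d i = ∑ i ∈ Finset.range n, G i * D i := by
    rw [← Fin.sum_univ_eq_sum_range (fun i => G i * D i) n]
    exact Finset.sum_congr rfl fun i _ => by simp [hG, hD, i.isLt]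
  have h2 : ∑ j : Fin k, g (Fin.castLE hk j) = ∑ j ∈ Finset.range k, G j := by
    rw [← Fin.sum_univ_eq_sum_range G k]
    refine Finset.sum_congr rfl fun j _ => ?_
    simp only [hG]
    rw [dif_pos (lt_of_lt_of_le j.isLt hk)]
    rfl
  rw [h1, h2]
  refine keyNat G D hk1 hk ?_ ?_ ?_ ?_
  · intro i j hij hj
    have hi : i < n := lt_of_le_of_lt hij hj
    simp only [hG]
    rw [dif_pos hi, dif_pos hj]
    exact hg hij
  · intro i hi
    simp only [hD]
    rw [dif_pos hi]
    exact hd0 _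
  · intro i hi
    simp only [hD]
    rw [dif_pos hi]
    exact hd1 _
  · rw [← Fin.sum_univ_eq_sum_range D n, ← hsum]
    exact Finset.sum_congr rfl fun i _ => by simp [hD, i.isLt]

/-- The `j`-th largest eigenvalue (counted with multiplicity, `j = 0` is the largest)
of a Hermitian matrix. -/
noncomputable def eigDesc {n : ℕ} {A : Matrix (Fin n) (Fin n) ℂ}
    (hA : A.IsHermitian) (j : Fin n) : ℝ :=
  hA.eigenvalues (Tuple.sort hA.eigenvalues j.rev)

/-- Ky Fan's maximum principle: the sum of the `k` largest eigenvalues of a Hermitian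
matrix `A` is the maximum of `∑_{j=1}^k ⟨A x_j, x_j⟩` over orthonormal families
`x_1, …, x_k`. -/
theorem ky_fan_maximum_principle {n : ℕ} (A : Matrix (Fin n) (Fin n) ℂ)
    (hA : A.IsHermitian) (k : ℕ) (hk1 : 1 ≤ k) (hk : k ≤ n) :
    IsGreatest
      {r : ℝ | ∃ x : Fin k → EuclideanSpace ℂ (Fin n), Orthonormal ℂ x ∧
        r = ∑ j, (⟪Matrix.toEuclideanLin A (x j), x j⟫_ℂ).re}
      (∑ j : Fin k, eigDesc hA (Fin.castLE hk j)) := by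
  classical
  set B := hA.eigenvectorBasis with hB
  set e : Fin n ≃ Fin n := Fin.revPerm.trans (Tuple.sort hA.eigenvalues) with he
  have hTB : ∀ i : Fin n, Matrix.toEuclideanLin A (B i)
      = (hA.eigenvalues i : ℂ) • B i := by
    intro i
    have h := hA.mulVec_eigenvectorBasis i
    rw [RCLike.real_smul_eq_coe_smul (K := ℂ)] at h
    exact congrArg (WithLp.equiv 2 (Fin n → ℂ)).symm h
  have hterm : ∀ i : Fin n,
      (⟪Matrix.toEuclideanLin A (B i), B i⟫_ℂ).re = hA.eigenvalues i := by
    intro i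
    rw [hTB i, inner_smul_left]
    have : ⟪B i, B i⟫_ℂ = 1 := by
      rw [inner_self_eq_norm_sq_to_K, B.orthonormal.1 i]
      norm_num
    simp [this, Complex.conj_ofReal]
  have heig : ∀ j : Fin n, eigDesc hA j = hA.eigenvalues (e j) := fun j => rfl
  constructor
  · refine ⟨fun j => B (e (Fin.castLE hk j)), ?_, ?_⟩
    · exact B.orthonormal.comp _ (e.injective.comp (Fin.castLE_injective hk))
    · exact Finset.sum_congr rfl fun j _ => by rw [hterm, heig]
  · rintro r ⟨x, hx, rfl⟩
    -- expansion of the quadratic form in the eigenbasis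
    have hexp : ∀ v : EuclideanSpace ℂ (Fin n),
        (⟪Matrix.toEuclideanLin A v, v⟫_ℂ).re
          = ∑ i, hA.eigenvalues i * ‖⟪B i, v⟫_ℂ‖ ^ 2 := by
      intro v
      have hc : ⟪Matrix.toEuclideanLin A v, v⟫_ℂ
          = ∑ i, ((hA.eigenvalues i * ‖⟪B i, v⟫_ℂ‖ ^ 2 : ℝ) : ℂ) := by
        calc ⟪Matrix.toEuclideanLin A v, v⟫_ℂ
            = ⟪Matrix.toEuclideanLin A (∑ i, ⟪B i, v⟫_ℂ • B i), v⟫_ℂ := by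
              rw [B.sum_repr']
          _ = ∑ i, ((hA.eigenvalues i * ‖⟪B i, v⟫_ℂ‖ ^ 2 : ℝ) : ℂ) := by
              rw [map_sum, sum_inner]
              refine Finset.sum_congr rfl fun i _ => ?_
              rw [map_smul, hTB i, smul_smul, inner_smul_left]
              have h1 := RCLike.conj_mul (⟪B i, v⟫_ℂ)
              push_cast
              rw [map_mul, Complex.conj_ofReal]
              rw [mul_comm (starRingEnd ℂ (⟪B i, v⟫_ℂ)) _, mul_assoc, h1]
              push_cast
              norm_cast
              exact (Complex.ofReal_mul _ _).symm
      rw [hc, Complex.re_sum]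
      exact Finset.sum_congr rfl fun i _ => Complex.ofReal_re _
    set c : Fin n → ℝ := fun i => ∑ j, ‖⟪B i, x j⟫_ℂ‖ ^ 2 with hcdef
    have hr : ∑ j, (⟪Matrix.toEuclideanLin A (x j), x j⟫_ℂ).re
        = ∑ i, hA.eigenvalues i * c i := by
      simp_rw [hexp]
      rw [Finset.sum_comm]
      exact Finset.sum_congr rfl fun i _ => (Finset.mul_sum _ _ _).symm
    have hc0 : ∀ i, 0 ≤ c i :=
      fun i => Finset.sum_nonneg fun j _ => by positivity
    have hc1 : ∀ i, c i ≤ 1 := by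
      intro i
      have hb := hx.sum_inner_products_le (B i) (s := Finset.univ)
      have hflip : c i = ∑ j, ‖⟪x j, B i⟫_ℂ‖ ^ 2 :=
        Finset.sum_congr rfl fun j _ => by rw [norm_inner_symm]
      rw [hflip]
      calc ∑ j, ‖⟪x j, B i⟫_ℂ‖ ^ 2 ≤ ‖B i‖ ^ 2 := hb
        _ = 1 := by rw [B.orthonormal.1 i]; norm_num
    have hcsum : ∑ i, c i = (k : ℝ) := by
      rw [Finset.sum_comm]
      have hone : ∀ j, ∑ i, ‖⟪B i, x j⟫_ℂ‖ ^ 2 = 1 := by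
        intro j
        have h2 := B.sum_inner_mul_inner (x j) (x j)
        have h5 : ⟪x j, x j⟫_ℂ = 1 := by
          rw [inner_self_eq_norm_sq_to_K, hx.1 j]; norm_num
        have h3 : ∑ i, ((‖⟪B i, x j⟫_ℂ‖ ^ 2 : ℝ) : ℂ) = 1 := by
          rw [← h5, ← h2]
          refine Finset.sum_congr rfl fun i _ => ?_
          rw [← inner_conj_symm (x j) (B i), RCLike.conj_mul]
          push_cast; norm_cast
        exact_mod_cast h3
      calc ∑ j : Fin k, ∑ i : Fin n, ‖⟪B i, x j⟫_ℂ‖ ^ 2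
          = ∑ _j : Fin k, (1 : ℝ) := Finset.sum_congr rfl fun j _ => hone j
        _ = (k : ℝ) := by simp
    rw [hr]
    have hreindex : ∑ i, hA.eigenvalues i * c i
        = ∑ i, eigDesc hA i * c (e i) := by
      rw [← Equiv.sum_comp e (fun i => hA.eigenvalues i * c i)]
      exact Finset.sum_congr rfl fun i _ => by rw [heig]
    rw [hreindex]
    refine keyFin hk1 hk (eigDesc hA) (fun i => c (e i)) ?_ (fun i => hc0 _)
      (fun i => hc1 _) ?_
    · intro i j hij
      unfold eigDesc
      exact Tuple.monotone_sort hA.eigenvalues (Fin.rev_le_rev.mpr hij)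
    · rw [Equiv.sum_comp e c, hcsum]
end

section
/- Let A, B ∈ M_n be Hermitian with spectra in [ω, Ω] and f convex on [ω, Ω]. Then Tr(f((A+B)/2)) ≤ Tr(∫_0^1 f(tA+(1-t)B) dt). -/
open Matrix in
private lemma entry_sesq {n : ℕ} (P X : Matrix (Fin n) (Fin n) ℂ) (i : Fin n) :
    (star P * X * P) i i = star (fun k => P k i) ⬝ᵥ (X *ᵥ fun k => P k i) := by
  simp only [Matrix.mul_apply, dotProduct, Matrix.mulVec, Matrix.star_apply,
    Pi.star_apply, Finset.sum_mul, Finset.mul_sum]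
  rw [Finset.sum_comm]
  exact Finset.sum_congr rfl fun k _ => Finset.sum_congr rfl fun l _ => by ring

open Matrix in
private lemma unit_col {n : ℕ} {U : Matrix (Fin n) (Fin n) ℂ}
    (hU : star U * U = 1) (i : Fin n) :
    star (fun k => U k i) ⬝ᵥ (fun k => U k i) = 1 := by
  have h := entry_sesq U 1 i
  rw [Matrix.mul_one, hU, Matrix.one_mulVec] at h
  rw [← h, Matrix.one_apply_eq]

open Matrix in
private lemma col_quad {n : ℕ} {U X : Matrix (Fin n) (Fin n) ℂ} {ev : Fin n → ℝ}
    (h1 : star U * U = 1)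
    (hXeq : X = U * Matrix.diagonal (Complex.ofReal ∘ ev) * star U) (i : Fin n) :
    star (fun k => U k i) ⬝ᵥ (X *ᵥ fun k => U k i) = (ev i : ℂ) := by
  subst hXeq
  rw [← entry_sesq]
  have h2 : star U * (U * Matrix.diagonal (Complex.ofReal ∘ ev) * star U) * U
      = Matrix.diagonal (Complex.ofReal ∘ ev) := by
    simp only [Matrix.mul_assoc]
    rw [h1, Matrix.mul_one, ← Matrix.mul_assoc, h1, Matrix.one_mul]
  rw [h2]
  simp

open Matrix in
private lemma quad_diag_repr {n : ℕ} {U : Matrix (Fin n) (Fin n) ℂ}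
    (h1 : star U * U = 1) (h2 : U * star U = 1)
    {v : Fin n → ℂ} (hv : star v ⬝ᵥ v = 1) :
    ∃ w : Fin n → ℝ, (∀ j, 0 ≤ w j) ∧ ∑ j, w j = 1 ∧
      ∀ d : Fin n → ℝ,
        (star v ⬝ᵥ ((U * Matrix.diagonal (Complex.ofReal ∘ d) * star U) *ᵥ v)).re
          = ∑ j, w j * d j := by
  set y : Fin n → ℂ := star U *ᵥ v with hy
  have key : ∀ d : Fin n → ℂ, star v ⬝ᵥ ((U * Matrix.diagonal d * star U) *ᵥ v)
      = ∑ j, d j * (star (y j) * y j) := by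
    intro d
    rw [← Matrix.mulVec_mulVec, ← Matrix.mulVec_mulVec]
    rw [Matrix.dotProduct_mulVec (star v) U]
    have hsv : star v ᵥ* U = star y := by
      rw [hy, Matrix.star_mulVec, Matrix.star_eq_conjTranspose, Matrix.conjTranspose_conjTranspose]
    rw [hsv]
    simp only [dotProduct, Matrix.mulVec_diagonal, Pi.star_apply]
    exact Finset.sum_congr rfl fun j _ => by ring
  have hstar : ∀ j, star (y j) * y j = ((Complex.normSq (y j) : ℝ) : ℂ) := fun j => by
    rw [Complex.star_def, ← Complex.normSq_eq_conj_mul_self]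
  have hnorm : ∑ j, Complex.normSq (y j) = 1 := by
    have hD1 : Matrix.diagonal (fun _ : Fin n => (1 : ℂ)) = 1 := Matrix.diagonal_one
    have h3 := key (fun _ => 1)
    rw [hD1, Matrix.mul_one, h2, Matrix.one_mulVec, hv] at h3
    have : (((∑ j, Complex.normSq (y j) : ℝ)) : ℂ) = 1 := by
      push_cast
      calc (∑ j, (Complex.normSq (y j) : ℂ))
          = ∑ j, (fun _ : Fin n => (1:ℂ)) j * (star (y j) * y j) :=
            Finset.sum_congr rfl fun j _ => by simp [Complex.normSq_eq_conj_mul_self]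
        _ = 1 := h3.symm
    exact_mod_cast this
  refine ⟨fun j => Complex.normSq (y j), fun j => Complex.normSq_nonneg _, hnorm, fun d => ?_⟩
  rw [key]
  have : ∀ j, ((d j : ℂ)) * (star (y j) * y j)
      = ((Complex.normSq (y j) * d j : ℝ) : ℂ) := fun j => by
    rw [hstar]; push_cast; ring
  simp only [Function.comp_apply, this]
  rw [← Complex.ofReal_sum]
  simp

open Matrix in
private lemma quad_repr {n : ℕ} {X : Matrix (Fin n) (Fin n) ℂ} (hX : X.IsHermitian)
    {v : Fin n → ℂ} (hv : star v ⬝ᵥ v = 1) :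
    ∃ w : Fin n → ℝ, (∀ j, 0 ≤ w j) ∧ ∑ j, w j = 1 ∧
      ((star v ⬝ᵥ (X *ᵥ v)).re = ∑ j, w j * hX.eigenvalues j) ∧
      ∀ g : ℝ → ℝ, (star v ⬝ᵥ (cfc g X *ᵥ v)).re = ∑ j, w j * g (hX.eigenvalues j) := by
  have h1 : star (hX.eigenvectorUnitary : Matrix (Fin n) (Fin n) ℂ) *
      (hX.eigenvectorUnitary : Matrix (Fin n) (Fin n) ℂ) = 1 :=
    Unitary.star_mul_self_of_mem (SetLike.coe_mem _)
  have h2 : (hX.eigenvectorUnitary : Matrix (Fin n) (Fin n) ℂ) *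
      star (hX.eigenvectorUnitary : Matrix (Fin n) (Fin n) ℂ) = 1 :=
    Unitary.mul_star_self_of_mem (SetLike.coe_mem _)
  obtain ⟨w, hw0, hw1, hrepr⟩ := quad_diag_repr h1 h2 hv
  refine ⟨w, hw0, hw1, ?_, fun g => ?_⟩
  · have hsp : X = (hX.eigenvectorUnitary : Matrix (Fin n) (Fin n) ℂ) *
        Matrix.diagonal (Complex.ofReal ∘ hX.eigenvalues) *
        star (hX.eigenvectorUnitary : Matrix (Fin n) (Fin n) ℂ) := hX.spectral_theorem
    calc (star v ⬝ᵥ (X *ᵥ v)).re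
        = (star v ⬝ᵥ (((hX.eigenvectorUnitary : Matrix (Fin n) (Fin n) ℂ) *
            Matrix.diagonal (Complex.ofReal ∘ hX.eigenvalues) *
            star (hX.eigenvectorUnitary : Matrix (Fin n) (Fin n) ℂ)) *ᵥ v)).re := by
          rw [← hsp]
      _ = ∑ j, w j * hX.eigenvalues j := hrepr hX.eigenvalues
  · have hc : cfc g X = (hX.eigenvectorUnitary : Matrix (Fin n) (Fin n) ℂ) *
        Matrix.diagonal (Complex.ofReal ∘ (g ∘ hX.eigenvalues)) *
        star (hX.eigenvectorUnitary : Matrix (Fin n) (Fin n) ℂ) := by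
      rw [hX.cfc_eq g]; rfl
    rw [hc]
    exact hrepr (g ∘ hX.eigenvalues)

open Matrix in
private lemma rayleigh_mem {n : ℕ} {X : Matrix (Fin n) (Fin n) ℂ} (hX : X.IsHermitian)
    {ω Ω : ℝ} (hspec : spectrum ℝ X ⊆ Set.Icc ω Ω) {v : Fin n → ℂ} (hv : star v ⬝ᵥ v = 1) :
    (star v ⬝ᵥ (X *ᵥ v)).re ∈ Set.Icc ω Ω := by
  obtain ⟨w, hw0, hw1, hid, _⟩ := quad_repr hX hv
  have hmem : ∀ j, hX.eigenvalues j ∈ Set.Icc ω Ω :=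
    fun j => hspec (hX.eigenvalues_mem_spectrum_real j)
  rw [hid]
  constructor
  · calc ω = ∑ j, w j * ω := by rw [← Finset.sum_mul, hw1, one_mul]
    _ ≤ ∑ j, w j * hX.eigenvalues j :=
        Finset.sum_le_sum fun j _ => mul_le_mul_of_nonneg_left (hmem j).1 (hw0 j)
  · calc ∑ j, w j * hX.eigenvalues j ≤ ∑ j, w j * Ω :=
        Finset.sum_le_sum fun j _ => mul_le_mul_of_nonneg_left (hmem j).2 (hw0 j)
    _ = Ω := by rw [← Finset.sum_mul, hw1, one_mul]

open Matrix in
private lemma jensen_quad {n : ℕ} {X : Matrix (Fin n) (Fin n) ℂ} (hX : X.IsHermitian)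
    {ω Ω : ℝ} {f : ℝ → ℝ} (hconv : ConvexOn ℝ (Set.Icc ω Ω) f)
    (hspec : spectrum ℝ X ⊆ Set.Icc ω Ω) {v : Fin n → ℂ} (hv : star v ⬝ᵥ v = 1) :
    f ((star v ⬝ᵥ (X *ᵥ v)).re) ≤ (star v ⬝ᵥ (cfc f X *ᵥ v)).re := by
  obtain ⟨w, hw0, hw1, hid, hrepr⟩ := quad_repr hX hv
  rw [hid, hrepr f]
  have := hconv.map_sum_le (t := Finset.univ) (w := w) (p := fun j => hX.eigenvalues j)
    (fun i _ => hw0 i) hw1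
    (fun i _ => hspec (hX.eigenvalues_mem_spectrum_real i))
  simpa [smul_eq_mul] using this



open Matrix in
private lemma unitary_entry_abs_le_one {n : ℕ} {U : Matrix (Fin n) (Fin n) ℂ}
    (h2 : U * star U = 1) (i k : Fin n) : ‖U i k‖ ≤ 1 := by
  have h := congrFun (congrFun h2 i) i
  rw [Matrix.mul_apply, Matrix.one_apply_eq] at h
  have hsum : ∑ l, Complex.normSq (U i l) = 1 := by
    have : (((∑ l, Complex.normSq (U i l) : ℝ)) : ℂ) = 1 := by
      push_cast
      rw [← h]
      exact Finset.sum_congr rfl fun l _ => by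
        rw [Matrix.star_apply, Complex.star_def, Complex.mul_conj]
    exact_mod_cast this
  have hle : Complex.normSq (U i k) ≤ 1 :=
    hsum ▸ Finset.single_le_sum (fun l _ => Complex.normSq_nonneg (U i l)) (Finset.mem_univ k)
  rw [Complex.norm_def]
  calc Real.sqrt (Complex.normSq (U i k)) ≤ Real.sqrt 1 := Real.sqrt_le_sqrt hle
    _ = 1 := Real.sqrt_one

open Matrix in
private lemma cfc_entry_bound {n : ℕ} {X : Matrix (Fin n) (Fin n) ℂ} (hX : X.IsHermitian)
    {g : ℝ → ℝ} {c : ℝ} (hg : ∀ x ∈ spectrum ℝ X, |g x| ≤ c) (i j : Fin n) :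
    ‖cfc g X i j‖ ≤ n * c := by
  have h2 : (hX.eigenvectorUnitary : Matrix (Fin n) (Fin n) ℂ) *
      star (hX.eigenvectorUnitary : Matrix (Fin n) (Fin n) ℂ) = 1 :=
    Unitary.mul_star_self_of_mem (SetLike.coe_mem _)
  have hc0 : 0 ≤ c := le_trans (abs_nonneg _) (hg _ (hX.eigenvalues_mem_spectrum_real i))
  have hcf : cfc g X = (hX.eigenvectorUnitary : Matrix (Fin n) (Fin n) ℂ) *
      Matrix.diagonal (Complex.ofReal ∘ (g ∘ hX.eigenvalues)) *
      star (hX.eigenvectorUnitary : Matrix (Fin n) (Fin n) ℂ) := by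
    rw [hX.cfc_eq g]; rfl
  rw [hcf]
  set U : Matrix (Fin n) (Fin n) ℂ := (hX.eigenvectorUnitary : Matrix (Fin n) (Fin n) ℂ)
  have hentry : (U * Matrix.diagonal (Complex.ofReal ∘ (g ∘ hX.eigenvalues)) * star U) i j
      = ∑ k, U i k * (g (hX.eigenvalues k) : ℂ) * star (U j k) := by
    rw [Matrix.mul_apply]
    refine Finset.sum_congr rfl fun k _ => ?_
    rw [Matrix.mul_diagonal, Matrix.star_apply]
    rfl
  rw [hentry]
  calc ‖∑ k, U i k * (g (hX.eigenvalues k) : ℂ) * star (U j k)‖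
      ≤ ∑ k, ‖U i k * (g (hX.eigenvalues k) : ℂ) * star (U j k)‖ :=
        norm_sum_le _ _
    _ ≤ ∑ _k : Fin n, c := by
        refine Finset.sum_le_sum fun k _ => ?_
        rw [norm_mul, norm_mul, Complex.norm_real, Real.norm_eq_abs, Complex.star_def, Complex.norm_conj]
        calc ‖U i k‖ * |g (hX.eigenvalues k)| * ‖U j k‖
            ≤ 1 * c * 1 := by
              gcongr
              · exact unitary_entry_abs_le_one h2 i k
              · exact hg _ (hX.eigenvalues_mem_spectrum_real k)
              · exact unitary_entry_abs_le_one h2 j k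
          _ = c := by ring
    _ = n * c := by
        rw [Finset.sum_const, Finset.card_univ, Fintype.card_fin, nsmul_eq_mul]



private lemma contOn_spectrum {n : ℕ} (X : Matrix (Fin n) (Fin n) ℂ) (g : ℝ → ℝ) :
    ContinuousOn g (spectrum ℝ X) := by
  rw [continuousOn_iff_continuous_restrict]
  have : Finite (spectrum ℝ X) := X.finite_real_spectrum
  fun_prop

open Matrix Polynomial in
private lemma cfc_comb_entry_continuousOn {n : ℕ} {A B : Matrix (Fin n) (Fin n) ℂ}
    (hM : ∀ t : ℝ, (t • A + (1 - t) • B).IsHermitian)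
    {ω Ω : ℝ}
    (hspec : ∀ t ∈ Set.Icc (0:ℝ) 1, spectrum ℝ (t • A + (1 - t) • B) ⊆ Set.Icc ω Ω)
    {f : ℝ → ℝ} (hcont : ContinuousOn f (Set.Icc ω Ω)) (i j : Fin n) :
    ContinuousOn (fun t : ℝ => (cfc f (t • A + (1 - t) • B)) i j) (Set.Icc 0 1) := by
  have happrox : ∀ k : ℕ, ∃ p : ℝ[X],
      ∀ x ∈ Set.Icc ω Ω, |f x - p.eval x| ≤ 1 / (k + 1) := by
    intro k
    have fc : C(Set.Icc ω Ω, ℝ) := ⟨_, continuousOn_iff_continuous_restrict.mp hcont⟩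
    obtain ⟨p, hp⟩ := exists_polynomial_near_continuousMap ω Ω
      ⟨_, continuousOn_iff_continuous_restrict.mp hcont⟩ (1/(k+1)) (by positivity)
    refine ⟨p, fun x hx => ?_⟩
    have h1 := ContinuousMap.norm_coe_le_norm
      (p.toContinuousMapOn (Set.Icc ω Ω) - ⟨_, continuousOn_iff_continuous_restrict.mp hcont⟩)
      ⟨x, hx⟩
    have h2 : |p.eval x - f x| ≤ ‖p.toContinuousMapOn (Set.Icc ω Ω) -
        (⟨_, continuousOn_iff_continuous_restrict.mp hcont⟩ : C(Set.Icc ω Ω, ℝ))‖ := by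
      simpa [Real.norm_eq_abs] using h1
    rw [abs_sub_comm]
    exact le_of_lt (lt_of_le_of_lt h2 hp)
  choose p hp using happrox
  have hMcont : Continuous (fun t : ℝ => t • A + (1 - t) • B) :=
    (continuous_id.smul continuous_const).add
      ((continuous_const.sub continuous_id).smul continuous_const)
  have hGcont : ∀ k, Continuous (fun t : ℝ => (aeval (t • A + (1 - t) • B) (p k)) i j) :=
    fun k => (((p k).continuous_aeval).comp hMcont).matrix_elem i j
  have hbound : ∀ k : ℕ, ∀ t ∈ Set.Icc (0:ℝ) 1,
      ‖(cfc f (t • A + (1 - t) • B)) i j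
        - (aeval (t • A + (1 - t) • B) (p k)) i j‖ ≤ n * (1/(k+1)) := by
    intro k t ht
    have hpoly : cfc ((p k).eval) (t • A + (1 - t) • B)
        = aeval (t • A + (1 - t) • B) (p k) := cfc_polynomial (p k) _ (hM t)
    have hsub : cfc (fun x => f x - (p k).eval x) (t • A + (1 - t) • B)
        = cfc f (t • A + (1 - t) • B) - cfc ((p k).eval) (t • A + (1 - t) • B) :=
      cfc_sub _ _ _ (contOn_spectrum _ _) (contOn_spectrum _ _)
    have hB : ∀ x ∈ spectrum ℝ (t • A + (1 - t) • B), |f x - (p k).eval x| ≤ 1/(k+1) :=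
      fun x hx => hp k x (hspec t ht hx)
    have := cfc_entry_bound (hM t) hB i j
    rw [hsub, hpoly] at this
    simpa using this
  have htu : TendstoUniformlyOn (fun (k : ℕ) (t : ℝ) => (aeval (t • A + (1 - t) • B) (p k)) i j)
      (fun t : ℝ => (cfc f (t • A + (1 - t) • B)) i j) Filter.atTop (Set.Icc (0:ℝ) 1) := by
    rw [Metric.tendstoUniformlyOn_iff]
    intro ε hε
    have hlim : Filter.Tendsto (fun k : ℕ => (n : ℝ) * (1/(k+1))) Filter.atTop (nhds 0) := by
      simpa using tendsto_one_div_add_atTop_nhds_zero_nat.const_mul (n : ℝ)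
    filter_upwards [hlim.eventually_lt_const hε] with k hk t ht
    rw [Complex.dist_eq]
    exact lt_of_le_of_lt (hbound k t ht) hk
  exact htu.continuousOn (Filter.Frequently.of_forall fun k => (hGcont k).continuousOn)

open Matrix in
private lemma quad_comb {n : ℕ} (A B : Matrix (Fin n) (Fin n) ℂ) (t : ℝ) (u : Fin n → ℂ) :
    (star u ⬝ᵥ ((t • A + (1 - t) • B) *ᵥ u)).re
      = t * (star u ⬝ᵥ (A *ᵥ u)).re + (1 - t) * (star u ⬝ᵥ (B *ᵥ u)).re := by
  rw [Matrix.add_mulVec, Matrix.smul_mulVec, Matrix.smul_mulVec,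
    dotProduct_add, dotProduct_smul, dotProduct_smul,
    Complex.add_re, Complex.smul_re, Complex.smul_re]
  rfl

open Matrix in
private lemma spec_comb {n : ℕ} {A B : Matrix (Fin n) (Fin n) ℂ}
    (hA : A.IsHermitian) (hB : B.IsHermitian) {ω Ω : ℝ}
    (hJA : spectrum ℝ A ⊆ Set.Icc ω Ω) (hJB : spectrum ℝ B ⊆ Set.Icc ω Ω)
    (hM : ∀ t : ℝ, (t • A + (1 - t) • B).IsHermitian) :
    ∀ t ∈ Set.Icc (0:ℝ) 1, spectrum ℝ (t • A + (1 - t) • B) ⊆ Set.Icc ω Ω := by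
  intro t ht x hx
  rw [(hM t).spectrum_real_eq_range_eigenvalues] at hx
  obtain ⟨i, rfl⟩ := hx
  have h1 : star ((hM t).eigenvectorUnitary : Matrix (Fin n) (Fin n) ℂ) *
      ((hM t).eigenvectorUnitary : Matrix (Fin n) (Fin n) ℂ) = 1 :=
    Unitary.star_mul_self_of_mem (SetLike.coe_mem _)
  have hunit := unit_col h1 i
  have hsp : (t • A + (1 - t) • B) = ((hM t).eigenvectorUnitary : Matrix (Fin n) (Fin n) ℂ) *
      Matrix.diagonal (Complex.ofReal ∘ (hM t).eigenvalues) *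
      star ((hM t).eigenvectorUnitary : Matrix (Fin n) (Fin n) ℂ) := (hM t).spectral_theorem
  have heig := col_quad h1 hsp i
  have h6 : (hM t).eigenvalues i =
      (star (fun k => ((hM t).eigenvectorUnitary : Matrix (Fin n) (Fin n) ℂ) k i) ⬝ᵥ
        ((t • A + (1 - t) • B) *ᵥ fun k =>
          ((hM t).eigenvectorUnitary : Matrix (Fin n) (Fin n) ℂ) k i)).re := by
    rw [heig]; simp
  rw [h6, quad_comb]
  have hA' := rayleigh_mem hA hJA hunit
  have hB' := rayleigh_mem hB hJB hunit
  simpa [smul_eq_mul] using (convex_Icc ω Ω) hA' hB' ht.1 (by linarith [ht.2]) (by ring)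

private lemma scalarHH {ω Ω a b : ℝ} {f : ℝ → ℝ} (hconv : ConvexOn ℝ (Set.Icc ω Ω) f)
    (hcont : ContinuousOn f (Set.Icc ω Ω)) (ha : a ∈ Set.Icc ω Ω) (hb : b ∈ Set.Icc ω Ω) :
    f ((a + b) / 2) ≤ ∫ t in (0:ℝ)..1, f (t * a + (1 - t) * b) := by
  have hmem : ∀ t ∈ Set.Icc (0:ℝ) 1, t * a + (1 - t) * b ∈ Set.Icc ω Ω := fun t ht => by
    simpa [smul_eq_mul] using (convex_Icc ω Ω) ha hb ht.1 (by linarith [ht.2]) (by ring)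
  have hmem' : ∀ t ∈ Set.Icc (0:ℝ) 1, (1 - t) * a + t * b ∈ Set.Icc ω Ω := fun t ht => by
    simpa [smul_eq_mul] using (convex_Icc ω Ω) ha hb (by linarith [ht.2]) ht.1 (by ring)
  have hφc : ContinuousOn (fun t => f (t * a + (1 - t) * b)) (Set.Icc 0 1) :=
    ContinuousOn.comp hcont (by fun_prop) hmem
  have hψc : ContinuousOn (fun t => f ((1 - t) * a + t * b)) (Set.Icc 0 1) :=
    ContinuousOn.comp hcont (by fun_prop) hmem'
  have hφi : IntervalIntegrable (fun t => f (t * a + (1 - t) * b)) MeasureTheory.volume 0 1 :=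
    hφc.intervalIntegrable_of_Icc zero_le_one
  have hψi : IntervalIntegrable (fun t => f ((1 - t) * a + t * b)) MeasureTheory.volume 0 1 :=
    hψc.intervalIntegrable_of_Icc zero_le_one
  have hflip : (∫ t in (0:ℝ)..1, f ((1 - t) * a + t * b))
      = ∫ t in (0:ℝ)..1, f (t * a + (1 - t) * b) := by
    have h := intervalIntegral.integral_comp_sub_left (a := (0:ℝ)) (b := 1)
      (fun s => f (s * a + (1 - s) * b)) 1
    simp only [sub_sub_cancel, sub_zero, sub_self] at h
    exact h
  have hpt : ∀ t ∈ Set.Icc (0:ℝ) 1,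
      f ((a + b)/2) ≤ (f (t * a + (1 - t) * b) + f ((1 - t) * a + t * b)) / 2 := by
    intro t ht
    have h := hconv.2 (hmem t ht) (hmem' t ht)
      (by norm_num : (0:ℝ) ≤ 1/2) (by norm_num : (0:ℝ) ≤ 1/2) (by norm_num)
    have he : (1/2 : ℝ) • (t * a + (1 - t) * b) + (1/2 : ℝ) • ((1 - t) * a + t * b)
        = (a + b)/2 := by
      simp only [smul_eq_mul]; ring
    rw [he] at h
    calc f ((a+b)/2) ≤ 1/2 * f (t * a + (1 - t) * b) + 1/2 * f ((1 - t) * a + t * b) := by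
          simpa [smul_eq_mul] using h
      _ = (f (t * a + (1 - t) * b) + f ((1 - t) * a + t * b)) / 2 := by ring
  calc f ((a + b)/2) = ∫ _t in (0:ℝ)..1, f ((a + b)/2) := by
        rw [intervalIntegral.integral_const]; simp
    _ ≤ ∫ t in (0:ℝ)..1, (f (t * a + (1 - t) * b) + f ((1 - t) * a + t * b)) / 2 := by
        refine intervalIntegral.integral_mono_on zero_le_one intervalIntegrable_const
          ((hφi.add hψi).div_const 2) hpt
    _ = ((∫ t in (0:ℝ)..1, f (t * a + (1 - t) * b))
          + ∫ t in (0:ℝ)..1, f ((1 - t) * a + t * b)) / 2 := by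
        rw [intervalIntegral.integral_div, intervalIntegral.integral_add hφi hψi]
    _ = ∫ t in (0:ℝ)..1, f (t * a + (1 - t) * b) := by rw [hflip]; ring



open Matrix in
/-- Trace Hermite–Hadamard: for Hermitian `A, B` with spectra in `[ω, Ω]` and `f`
convex (and continuous) on `[ω, Ω]`,
`Tr f((A+B)/2) ≤ Tr ∫_0^1 f(tA+(1-t)B) dt` (integral taken entrywise). -/
theorem trace_hermite_hadamard
    {n : ℕ} (A B : Matrix (Fin n) (Fin n) ℂ)
    (hA : A.IsHermitian) (hB : B.IsHermitian) (ω Ω : ℝ)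
    (hJA : spectrum ℝ A ⊆ Set.Icc ω Ω) (hJB : spectrum ℝ B ⊆ Set.Icc ω Ω)
    (f : ℝ → ℝ) (hconv : ConvexOn ℝ (Set.Icc ω Ω) f)
    (hcont : ContinuousOn f (Set.Icc ω Ω)) :
    (Matrix.trace (cfc f ((1/2 : ℝ) • (A + B)))).re ≤
      (Matrix.trace (Matrix.of fun i j =>
        ∫ t in (0:ℝ)..1, (cfc f (t • A + (1 - t) • B)) i j : Matrix (Fin n) (Fin n) ℂ)).re := by
  rcases Nat.eq_zero_or_pos n with hn | hn
  · subst hn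
    simp [Matrix.trace]
  have hermsmul : ∀ (s : ℝ) (X : Matrix (Fin n) (Fin n) ℂ), X.IsHermitian →
      (s • X).IsHermitian := fun s X hX => by
    show (s • X)ᴴ = s • X
    rw [Matrix.conjTranspose_smul, star_trivial, hX.eq]
  have hM : ∀ t : ℝ, (t • A + (1 - t) • B).IsHermitian :=
    fun t => (hermsmul t A hA).add (hermsmul (1 - t) B hB)
  have hC : ((1/2 : ℝ) • (A + B)).IsHermitian := hermsmul _ _ (hA.add hB)
  have hMspec := spec_comb hA hB hJA hJB hM
  have tr_eq : ∀ (X : Matrix (Fin n) (Fin n) ℂ), Matrix.trace X = ∑ i, X i i := fun X => rfl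
  -- eigenvector unitary of the midpoint
  have h1 : star (hC.eigenvectorUnitary : Matrix (Fin n) (Fin n) ℂ) *
      (hC.eigenvectorUnitary : Matrix (Fin n) (Fin n) ℂ) = 1 :=
    Unitary.star_mul_self_of_mem (SetLike.coe_mem _)
  have h2 : (hC.eigenvectorUnitary : Matrix (Fin n) (Fin n) ℂ) *
      star (hC.eigenvectorUnitary : Matrix (Fin n) (Fin n) ℂ) = 1 :=
    Unitary.mul_star_self_of_mem (SetLike.coe_mem _)
  set U : Matrix (Fin n) (Fin n) ℂ := (hC.eigenvectorUnitary : Matrix (Fin n) (Fin n) ℂ) with hUdef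
  have hunit : ∀ i, star (fun k => U k i) ⬝ᵥ (fun k => U k i) = 1 := unit_col h1
  have haA : ∀ i, (star (fun k => U k i) ⬝ᵥ (A *ᵥ fun k => U k i)).re ∈ Set.Icc ω Ω :=
    fun i => rayleigh_mem hA hJA (hunit i)
  have haB : ∀ i, (star (fun k => U k i) ⬝ᵥ (B *ᵥ fun k => U k i)).re ∈ Set.Icc ω Ω :=
    fun i => rayleigh_mem hB hJB (hunit i)
  -- eigenvalues of midpoint matrix
  have hsp : (1/2 : ℝ) • (A + B) = U * Matrix.diagonal (Complex.ofReal ∘ hC.eigenvalues) *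
      star U := hC.spectral_theorem
  have heig : ∀ i, hC.eigenvalues i
      = ((star (fun k => U k i) ⬝ᵥ (A *ᵥ fun k => U k i)).re
        + (star (fun k => U k i) ⬝ᵥ (B *ᵥ fun k => U k i)).re) / 2 := by
    intro i
    have h3 := col_quad h1 hsp i
    have h4 : ((1/2 : ℝ) • (A + B)) = (1/2 : ℝ) • A + (1 - (1/2 : ℝ)) • B := by
      rw [smul_add]; norm_num
    have h6 : (star (fun k => U k i) ⬝ᵥ (((1/2 : ℝ) • (A + B)) *ᵥ fun k => U k i)).re
        = hC.eigenvalues i := by rw [h3]; simp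
    rw [← h6, h4, quad_comb]
    ring
  -- LHS value
  have hLHS : (Matrix.trace (cfc f ((1/2 : ℝ) • (A + B)))).re = ∑ i, f (hC.eigenvalues i) := by
    have hcf : cfc f ((1/2 : ℝ) • (A + B)) = U *
        Matrix.diagonal (Complex.ofReal ∘ (f ∘ hC.eigenvalues)) * star U := by
      rw [hC.cfc_eq f]; rfl
    rw [hcf, Matrix.trace_mul_cycle, h1, Matrix.one_mul, tr_eq]
    rw [Complex.re_sum]
    refine Finset.sum_congr rfl fun i _ => ?_
    simp [Matrix.diagonal_apply_eq]
  -- entrywise continuity and integrability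
  have hFcont : ∀ i j, ContinuousOn (fun t : ℝ => (cfc f (t • A + (1 - t) • B)) i j)
      (Set.Icc 0 1) := cfc_comb_entry_continuousOn hM hMspec hcont
  have hFint : ∀ i j, IntervalIntegrable (fun t : ℝ => (cfc f (t • A + (1 - t) • B)) i j)
      MeasureTheory.volume 0 1 := fun i j => (hFcont i j).intervalIntegrable_of_Icc zero_le_one
  have hdcont : ∀ i, ContinuousOn (fun t : ℝ =>
      (star (fun k => U k i) ⬝ᵥ (cfc f (t • A + (1 - t) • B) *ᵥ fun k => U k i)).re)
      (Set.Icc 0 1) := by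
    intro i
    apply Complex.continuous_re.comp_continuousOn
    simp only [dotProduct, Matrix.mulVec]
    exact continuousOn_finset_sum _ fun k _ => continuousOn_const.mul
      (continuousOn_finset_sum _ fun l _ => (hFcont k l).mul continuousOn_const)
  have hdint : ∀ i, IntervalIntegrable (fun t : ℝ =>
      (star (fun k => U k i) ⬝ᵥ (cfc f (t • A + (1 - t) • B) *ᵥ fun k => U k i)).re)
      MeasureTheory.volume 0 1 := fun i => (hdcont i).intervalIntegrable_of_Icc zero_le_one
  -- trace identity pointwise in t
  have htrace : ∀ t : ℝ, ∑ i, ((cfc f (t • A + (1 - t) • B)) i i).re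
      = ∑ i, (star (fun k => U k i) ⬝ᵥ (cfc f (t • A + (1 - t) • B) *ᵥ fun k => U k i)).re := by
    intro t
    have e1 : ∑ i, (star (fun k => U k i) ⬝ᵥ (cfc f (t • A + (1 - t) • B) *ᵥ fun k => U k i))
        = ∑ i, (cfc f (t • A + (1 - t) • B)) i i := by
      calc ∑ i, (star (fun k => U k i) ⬝ᵥ (cfc f (t • A + (1 - t) • B) *ᵥ fun k => U k i))
          = ∑ i, (star U * cfc f (t • A + (1 - t) • B) * U) i i :=
            Finset.sum_congr rfl fun i _ => (entry_sesq U _ i).symm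
        _ = Matrix.trace (star U * cfc f (t • A + (1 - t) • B) * U) := (tr_eq _).symm
        _ = Matrix.trace (cfc f (t • A + (1 - t) • B)) := by
            rw [Matrix.trace_mul_cycle, h2, Matrix.one_mul]
        _ = ∑ i, (cfc f (t • A + (1 - t) • B)) i i := tr_eq _
    rw [← Complex.re_sum, ← e1, Complex.re_sum]
  -- RHS value
  have hRHS : (Matrix.trace (Matrix.of fun i j =>
        ∫ t in (0:ℝ)..1, (cfc f (t • A + (1 - t) • B)) i j : Matrix (Fin n) (Fin n) ℂ)).re
      = ∑ i, ∫ t in (0:ℝ)..1,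
          (star (fun k => U k i) ⬝ᵥ (cfc f (t • A + (1 - t) • B) *ᵥ fun k => U k i)).re := by
    rw [tr_eq, Complex.re_sum]
    calc ∑ i, (∫ t in (0:ℝ)..1, (cfc f (t • A + (1 - t) • B)) i i).re
        = ∑ i, ∫ t in (0:ℝ)..1, ((cfc f (t • A + (1 - t) • B)) i i).re := by
          refine Finset.sum_congr rfl fun i _ => ?_
          exact (Complex.reCLM.intervalIntegral_comp_comm (hFint i i)).symm
      _ = ∫ t in (0:ℝ)..1, ∑ i, ((cfc f (t • A + (1 - t) • B)) i i).re := by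
          rw [intervalIntegral.integral_finset_sum]
          intro i _
          exact (Complex.continuous_re.comp_continuousOn
            (hFcont i i)).intervalIntegrable_of_Icc zero_le_one
      _ = ∫ t in (0:ℝ)..1, ∑ i,
            (star (fun k => U k i) ⬝ᵥ (cfc f (t • A + (1 - t) • B) *ᵥ fun k => U k i)).re := by
          refine intervalIntegral.integral_congr fun t _ => htrace t
      _ = ∑ i, ∫ t in (0:ℝ)..1,
            (star (fun k => U k i) ⬝ᵥ (cfc f (t • A + (1 - t) • B) *ᵥ fun k => U k i)).re :=
          intervalIntegral.integral_finset_sum fun i _ => hdint i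
  -- per-index inequality
  have hper : ∀ i, f (hC.eigenvalues i) ≤ ∫ t in (0:ℝ)..1,
      (star (fun k => U k i) ⬝ᵥ (cfc f (t • A + (1 - t) • B) *ᵥ fun k => U k i)).re := by
    intro i
    have hai := haA i
    have hbi := haB i
    have hφmem : ∀ t ∈ Set.Icc (0:ℝ) 1,
        t * (star (fun k => U k i) ⬝ᵥ (A *ᵥ fun k => U k i)).re
          + (1 - t) * (star (fun k => U k i) ⬝ᵥ (B *ᵥ fun k => U k i)).re ∈ Set.Icc ω Ω :=
      fun t ht => by
        simpa [smul_eq_mul] using (convex_Icc ω Ω) hai hbi ht.1 (by linarith [ht.2]) (by ring)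
    have hφi : IntervalIntegrable (fun t : ℝ =>
        f (t * (star (fun k => U k i) ⬝ᵥ (A *ᵥ fun k => U k i)).re
          + (1 - t) * (star (fun k => U k i) ⬝ᵥ (B *ᵥ fun k => U k i)).re))
        MeasureTheory.volume 0 1 :=
      (ContinuousOn.comp hcont (by fun_prop) hφmem).intervalIntegrable_of_Icc zero_le_one
    calc f (hC.eigenvalues i)
        = f (((star (fun k => U k i) ⬝ᵥ (A *ᵥ fun k => U k i)).re
            + (star (fun k => U k i) ⬝ᵥ (B *ᵥ fun k => U k i)).re) / 2) := by rw [heig i]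
      _ ≤ ∫ t in (0:ℝ)..1, f (t * (star (fun k => U k i) ⬝ᵥ (A *ᵥ fun k => U k i)).re
            + (1 - t) * (star (fun k => U k i) ⬝ᵥ (B *ᵥ fun k => U k i)).re) :=
          scalarHH hconv hcont hai hbi
      _ ≤ ∫ t in (0:ℝ)..1,
            (star (fun k => U k i) ⬝ᵥ (cfc f (t • A + (1 - t) • B) *ᵥ fun k => U k i)).re := by
          refine intervalIntegral.integral_mono_on zero_le_one hφi (hdint i) fun t ht => ?_
          have hj := jensen_quad (hM t) hconv (hMspec t ht) (hunit i)
          rw [quad_comb] at hj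
          exact hj
  calc (Matrix.trace (cfc f ((1/2 : ℝ) • (A + B)))).re
      = ∑ i, f (hC.eigenvalues i) := hLHS
    _ ≤ ∑ i, ∫ t in (0:ℝ)..1,
          (star (fun k => U k i) ⬝ᵥ (cfc f (t • A + (1 - t) • B) *ᵥ fun k => U k i)).re :=
        Finset.sum_le_sum fun i _ => hper i
    _ = _ := hRHS.symm
end

section
/- Let A_1, ..., A_k ∈ M_n be Hermitian with spectra in [ω, Ω], f an increasing convex function on [ω, Ω], and Z_1, ..., Z_k ∈ M_n with ∑_{i=1}^k Z_i* Z_i = I_n. Then there exists a unitary matrix U ∈ M_n such that f(∑_{i=1}^k Z_i* A_i Z_i) ≤ U (∑_{i=1}^k Z_i* f(A_i) Z_i) U*. -/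
open scoped ComplexOrder
open scoped Matrix
open Matrix

section helpers
variable {n : ℕ}

lemma quad_diag (V : Matrix (Fin n) (Fin n) ℂ)
    (d : Fin n → ℝ) (y : Fin n → ℂ) :
    star y ⬝ᵥ (V * diagonal (fun j => (d j : ℂ)) * Vᴴ) *ᵥ y
      = ((∑ j, d j * ‖(Vᴴ *ᵥ y) j‖^2 : ℝ) : ℂ) := by
  set c := Vᴴ *ᵥ y with hc
  have h1 : (V * diagonal (fun j => (d j : ℂ)) * Vᴴ) *ᵥ y
      = V *ᵥ (diagonal (fun j => (d j : ℂ)) *ᵥ c) := by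
    simp [Matrix.mulVec_mulVec, Matrix.mul_assoc, hc]
  rw [h1, Matrix.dotProduct_mulVec]
  have h0 : star y ᵥ* V = star c := by
    rw [hc, Matrix.star_mulVec, Matrix.conjTranspose_conjTranspose]
  rw [h0]
  push_cast
  rw [dotProduct]
  refine Finset.sum_congr rfl fun j _ => ?_
  simp only [Matrix.mulVec_diagonal, Pi.star_apply, RCLike.star_def]
  rw [show (starRingEnd ℂ) (c j) * ((d j : ℂ) * c j)
      = (d j : ℂ) * ((starRingEnd ℂ) (c j) * c j) by ring, RCLike.conj_mul]
  norm_num [RCLike.ofReal_alg]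

lemma quad_one (V : Matrix (Fin n) (Fin n) ℂ) (hV : V ∈ Matrix.unitaryGroup (Fin n) ℂ)
    (y : Fin n → ℂ) :
    star y ⬝ᵥ y = ((∑ j, ‖(Vᴴ *ᵥ y) j‖^2 : ℝ) : ℂ) := by
  have := quad_diag V (fun _ => 1) y
  simp only [Complex.ofReal_one, Matrix.diagonal_one, Matrix.mul_one, one_mul] at this
  rw [← Matrix.star_eq_conjTranspose] at this
  rw [(Matrix.mem_unitaryGroup_iff.mp hV), Matrix.one_mulVec] at this
  simpa [Matrix.star_eq_conjTranspose] using this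

lemma quad_cfc {M : Matrix (Fin n) (Fin n) ℂ} (hM : M.IsHermitian) (g : ℝ → ℝ)
    (y : Fin n → ℂ) :
    star y ⬝ᵥ (cfc g M) *ᵥ y
      = ((∑ j, g (hM.eigenvalues j) *
          ‖((hM.eigenvectorUnitary : Matrix (Fin n) (Fin n) ℂ)ᴴ *ᵥ y) j‖^2 : ℝ) : ℂ) := by
  rw [hM.cfc_eq, Matrix.IsHermitian.cfc]
  rw [← Matrix.star_eq_conjTranspose]
  exact quad_diag _ (g ∘ hM.eigenvalues) y

lemma quad_self {M : Matrix (Fin n) (Fin n) ℂ} (hM : M.IsHermitian)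
    (y : Fin n → ℂ) :
    star y ⬝ᵥ M *ᵥ y
      = ((∑ j, hM.eigenvalues j *
          ‖((hM.eigenvectorUnitary : Matrix (Fin n) (Fin n) ℂ)ᴴ *ᵥ y) j‖^2 : ℝ) : ℂ) := by
  conv_lhs => rw [hM.spectral_theorem]
  rw [← Matrix.star_eq_conjTranspose]
  exact quad_diag _ hM.eigenvalues y

lemma exists_common_vec (V W : Matrix (Fin n) (Fin n) ℂ)
    (hV : V ∈ Matrix.unitaryGroup (Fin n) ℂ)
    (s t : Finset (Fin n)) (hcard : n < s.card + t.card) :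
    ∃ x : Fin n → ℂ, x ≠ 0 ∧ (∀ j ∉ s, (Vᴴ *ᵥ x) j = 0) ∧ (∀ j ∉ t, (Wᴴ *ᵥ x) j = 0) := by
  classical
  set tc := tᶜ with htc
  set M0 : Matrix ↥tc ↥s ℂ := Matrix.of (fun a b => (Wᴴ * V) a.1 b.1) with hM0
  have hcard' : Fintype.card ↥tc < Fintype.card ↥s := by
    have h1 : t.card ≤ n := by simpa using t.card_le_univ
    simp only [Fintype.card_coe, htc, Finset.card_compl, Fintype.card_fin]
    omega
  have hnotinj : ¬ Function.Injective M0.mulVecLin := by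
    intro h
    have := LinearMap.finrank_le_finrank_of_injective h
    simp only [Module.finrank_pi] at this
    omega
  obtain ⟨d, hd0, hdker⟩ : ∃ d : ↥s → ℂ, d ≠ 0 ∧ M0 *ᵥ d = 0 := by
    rw [← LinearMap.ker_eq_bot] at hnotinj
    obtain ⟨d, hd, hdne⟩ := Submodule.exists_mem_ne_zero_of_ne_bot hnotinj
    exact ⟨d, hdne, hd⟩
  set c : Fin n → ℂ := fun j => if h : j ∈ s then d ⟨j, h⟩ else 0 with hcdef
  have hc0 : c ≠ 0 := by
    obtain ⟨b, hb⟩ := Function.ne_iff.mp hd0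
    intro h
    apply hb
    have := congrFun h b.1
    simpa [hcdef, b.2] using this
  have h1 : Vᴴ *ᵥ (V *ᵥ c) = c := by
    rw [Matrix.mulVec_mulVec, ← Matrix.star_eq_conjTranspose,
      Matrix.mem_unitaryGroup_iff'.mp hV, Matrix.one_mulVec]
  refine ⟨V *ᵥ c, ?_, ?_, ?_⟩
  · intro h
    apply hc0
    rw [h, Matrix.mulVec_zero] at h1
    exact h1.symm
  · intro j hj
    rw [h1]
    simp [hcdef, hj]
  · intro j hj
    have hjtc : j ∈ tc := by simp [htc, hj]
    have h2 : (Wᴴ *ᵥ (V *ᵥ c)) j = (M0 *ᵥ d) ⟨j, hjtc⟩ := by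
      rw [Matrix.mulVec_mulVec]
      show ∑ b, (Wᴴ * V) j b * c b = ∑ b : ↥s, M0 ⟨j, hjtc⟩ b * d b
      rw [← Finset.sum_subset (Finset.subset_univ s)
        (by intro b _ hb; simp [hcdef, hb])]
      rw [← Finset.sum_attach s (fun b => (Wᴴ * V) j b * c b)]
      rw [Finset.univ_eq_attach]
      refine Finset.sum_congr rfl fun b _ => ?_
      simp [hM0, hcdef, b.2]
    rw [h2, hdker]
    rfl

lemma perm_conj_diag (σ : Equiv.Perm (Fin n)) (d : Fin n → ℂ) :
    ∃ P ∈ Matrix.unitaryGroup (Fin n) ℂ,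
      P * diagonal d * Pᴴ = diagonal (fun j => d (σ j)) := by
  classical
  set P : Matrix (Fin n) (Fin n) ℂ := (1 : Matrix (Fin n) (Fin n) ℂ).submatrix σ _root_.id with hP
  have hPH : Pᴴ = (1 : Matrix (Fin n) (Fin n) ℂ).submatrix _root_.id σ := by
    ext a b
    simp [hP, Matrix.conjTranspose_apply, Matrix.one_apply, eq_comm]
  have hmem : P ∈ Matrix.unitaryGroup (Fin n) ℂ := by
    rw [Matrix.mem_unitaryGroup_iff']
    rw [Matrix.star_eq_conjTranspose, hPH, hP]
    have : ((1 : Matrix (Fin n) (Fin n) ℂ).submatrix (_root_.id) ⇑σ)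
        * ((1 : Matrix (Fin n) (Fin n) ℂ).submatrix (⇑σ) _root_.id)
        = ((1 : Matrix (Fin n) (Fin n) ℂ) * 1).submatrix _root_.id _root_.id :=
      Matrix.submatrix_mul_equiv _ _ _ σ _
    simpa using this
  refine ⟨P, hmem, ?_⟩
  have h1 : P * diagonal d = (diagonal d).submatrix σ _root_.id := by
    have : ((1 : Matrix (Fin n) (Fin n) ℂ).submatrix (⇑σ) _root_.id)
        * ((diagonal d).submatrix (_root_.id) _root_.id)
        = ((1 : Matrix (Fin n) (Fin n) ℂ) * diagonal d).submatrix (⇑σ) _root_.id :=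
      Matrix.submatrix_mul_equiv _ _ _ (Equiv.refl _) _
    simpa [hP] using this
  have h2 : (diagonal d).submatrix (⇑σ) _root_.id * Pᴴ = (diagonal d).submatrix σ σ := by
    rw [hPH]
    have : ((diagonal d).submatrix (⇑σ) _root_.id)
        * ((1 : Matrix (Fin n) (Fin n) ℂ).submatrix _root_.id ⇑σ)
        = (diagonal d * 1).submatrix (⇑σ) ⇑σ :=
      Matrix.submatrix_mul_equiv _ _ _ (Equiv.refl _) _
    simpa using this
  rw [h1, h2]
  ext a b
  by_cases h : a = b
  · subst h; simp
  · rw [Matrix.submatrix_apply, Matrix.diagonal_apply_ne _ (fun hc => h (σ.injective hc)),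
      Matrix.diagonal_apply_ne _ h]

lemma my_sum_mulVec {ι : Type*} (s : Finset ι) (M : ι → Matrix (Fin n) (Fin n) ℂ)
    (x : Fin n → ℂ) : (∑ i ∈ s, M i) *ᵥ x = ∑ i ∈ s, M i *ᵥ x := by
  ext j
  simp only [Matrix.mulVec, dotProduct, Finset.sum_apply, Matrix.sum_apply,
    Finset.sum_mul]
  rw [Finset.sum_comm]

lemma my_dot_sum {ι : Type*} (s : Finset ι) (v : Fin n → ℂ) (w : ι → Fin n → ℂ) :
    v ⬝ᵥ (∑ i ∈ s, w i) = ∑ i ∈ s, v ⬝ᵥ w i := by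
  simp [dotProduct, Finset.sum_apply, Finset.mul_sum]
  rw [Finset.sum_comm]

lemma dot_sandwich (Z M : Matrix (Fin n) (Fin n) ℂ) (x : Fin n → ℂ) :
    star x ⬝ᵥ ((Zᴴ * M * Z) *ᵥ x) = star (Z *ᵥ x) ⬝ᵥ (M *ᵥ (Z *ᵥ x)) := by
  rw [mul_assoc, ← Matrix.mulVec_mulVec, Matrix.dotProduct_mulVec, ← Matrix.star_mulVec,
    ← Matrix.mulVec_mulVec]

lemma dot_sandwich' (Z : Matrix (Fin n) (Fin n) ℂ) (x : Fin n → ℂ) :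
    star x ⬝ᵥ ((Zᴴ * Z) *ᵥ x) = star (Z *ᵥ x) ⬝ᵥ (Z *ᵥ x) := by
  rw [← Matrix.mulVec_mulVec, Matrix.dotProduct_mulVec, ← Matrix.star_mulVec]

end helpers

set_option maxHeartbeats 1000000 in
/-- Bourin's theorem: if `A_1, …, A_k` are Hermitian with spectra in `[ω, Ω]`, `f` is
increasing, convex (and continuous) on `[ω, Ω]` and `∑ Z_i* Z_i = 1`, then there is a
unitary `U` with `f(∑ Z_i* A_i Z_i) ≤ U (∑ Z_i* f(A_i) Z_i) U*` in the Loewner order. -/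
theorem bourin_unitary_orbit
    {n k : ℕ} (A : Fin k → Matrix (Fin n) (Fin n) ℂ)
    (hA : ∀ i, (A i).IsHermitian) (ω Ω : ℝ)
    (hspec : ∀ i, spectrum ℝ (A i) ⊆ Set.Icc ω Ω)
    (f : ℝ → ℝ) (hmono : MonotoneOn f (Set.Icc ω Ω))
    (hconv : ConvexOn ℝ (Set.Icc ω Ω) f) (hcont : ContinuousOn f (Set.Icc ω Ω))
    (Z : Fin k → Matrix (Fin n) (Fin n) ℂ) (hZ : ∑ i, (Z i)ᴴ * Z i = 1) :
    ∃ U ∈ Matrix.unitaryGroup (Fin n) ℂ,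
      ((U : Matrix (Fin n) (Fin n) ℂ) * (∑ i, (Z i)ᴴ * cfc f (A i) * Z i) * Uᴴ
        - cfc f (∑ i, (Z i)ᴴ * A i * Z i)).PosSemidef := by
  classical
  set B := ∑ i, (Z i)ᴴ * A i * Z i with hBdef
  set C := ∑ i, (Z i)ᴴ * cfc f (A i) * Z i with hCdef
  have hfA : ∀ i, (cfc f (A i)).IsHermitian := fun i =>
    (cfc_predicate f (A i) : IsSelfAdjoint _)
  have hB : B.IsHermitian := by
    rw [Matrix.IsHermitian, hBdef, Matrix.conjTranspose_sum]
    refine Finset.sum_congr rfl fun i _ => ?_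
    simp [Matrix.conjTranspose_mul, mul_assoc, (hA i).eq]
  have hC : C.IsHermitian := by
    rw [Matrix.IsHermitian, hCdef, Matrix.conjTranspose_sum]
    refine Finset.sum_congr rfl fun i _ => ?_
    simp [Matrix.conjTranspose_mul, mul_assoc, (hfA i).eq]
  -- the Jensen inequality for quadratic forms
  have J : ∀ x : Fin n → ℂ, star x ⬝ᵥ x = 1 → ∃ r s : ℝ,
      star x ⬝ᵥ B *ᵥ x = (r : ℂ) ∧ star x ⬝ᵥ C *ᵥ x = (s : ℂ) ∧
      r ∈ Set.Icc ω Ω ∧ f r ≤ s := by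
    intro x hx
    set c : Fin k → Fin n → ℂ := fun i =>
      ((hA i).eigenvectorUnitary : Matrix (Fin n) (Fin n) ℂ)ᴴ *ᵥ (Z i *ᵥ x) with hcdef
    set t : Fin k × Fin n → ℝ := fun p => ‖c p.1 p.2‖^2 with htdef
    set lam : Fin k × Fin n → ℝ := fun p => (hA p.1).eigenvalues p.2 with hlamdef
    have ht0 : ∀ p, 0 ≤ t p := fun p => by positivity
    have hterm : ∀ i, star x ⬝ᵥ ((Z i)ᴴ * A i * Z i) *ᵥ x
        = ((∑ j, t (i, j) * lam (i, j) : ℝ) : ℂ) := by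
      intro i
      rw [dot_sandwich, quad_self (hA i)]
      norm_num [htdef, hlamdef, hcdef, mul_comm]
    have htermf : ∀ i, star x ⬝ᵥ ((Z i)ᴴ * cfc f (A i) * Z i) *ᵥ x
        = ((∑ j, t (i, j) * f (lam (i, j)) : ℝ) : ℂ) := by
      intro i
      rw [dot_sandwich, quad_cfc (hA i)]
      norm_num [htdef, hlamdef, hcdef, mul_comm]
    have hsum_t : ∑ p, t p = 1 := by
      have h1 : ∀ i, star x ⬝ᵥ ((Z i)ᴴ * Z i) *ᵥ x = ((∑ j, t (i, j) : ℝ) : ℂ) := by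
        intro i
        rw [dot_sandwich', quad_one ((hA i).eigenvectorUnitary :
          Matrix (Fin n) (Fin n) ℂ) (hA i).eigenvectorUnitary.2]
      have h2 : star x ⬝ᵥ (∑ i, (Z i)ᴴ * Z i) *ᵥ x = ((∑ p : Fin k × Fin n, t p : ℝ) : ℂ) :=
        calc star x ⬝ᵥ (∑ i, (Z i)ᴴ * Z i) *ᵥ x
            = ∑ i, star x ⬝ᵥ ((Z i)ᴴ * Z i) *ᵥ x := by rw [my_sum_mulVec, my_dot_sum]
          _ = ∑ i, ((∑ j, t (i, j) : ℝ) : ℂ) := Finset.sum_congr rfl fun i _ => h1 i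
          _ = ((∑ p : Fin k × Fin n, t p : ℝ) : ℂ) := by
              push_cast [Fintype.sum_prod_type]
              rfl
      rw [hZ, Matrix.one_mulVec, hx] at h2
      exact_mod_cast h2.symm
    have hmemlam : ∀ p : Fin k × Fin n, lam p ∈ Set.Icc ω Ω := fun p =>
      hspec p.1 ((hA p.1).eigenvalues_mem_spectrum_real p.2)
    refine ⟨∑ p, t p * lam p, ∑ p, t p * f (lam p), ?_, ?_, ?_, ?_⟩
    · calc star x ⬝ᵥ B *ᵥ x
            = ∑ i, star x ⬝ᵥ ((Z i)ᴴ * A i * Z i) *ᵥ x := by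
              rw [hBdef, my_sum_mulVec, my_dot_sum]
          _ = ∑ i, ((∑ j, t (i, j) * lam (i, j) : ℝ) : ℂ) :=
              Finset.sum_congr rfl fun i _ => hterm i
          _ = _ := by
              push_cast [Fintype.sum_prod_type]
              rfl
    · calc star x ⬝ᵥ C *ᵥ x
            = ∑ i, star x ⬝ᵥ ((Z i)ᴴ * cfc f (A i) * Z i) *ᵥ x := by
              rw [hCdef, my_sum_mulVec, my_dot_sum]
          _ = ∑ i, ((∑ j, t (i, j) * f (lam (i, j)) : ℝ) : ℂ) :=
              Finset.sum_congr rfl fun i _ => htermf i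
          _ = _ := by
              push_cast [Fintype.sum_prod_type]
              rfl
    · constructor
      · calc ω = ∑ p, t p * ω := by rw [← Finset.sum_mul, hsum_t, one_mul]
          _ ≤ ∑ p, t p * lam p := Finset.sum_le_sum fun p _ =>
              mul_le_mul_of_nonneg_left (hmemlam p).1 (ht0 p)
      · calc (∑ p, t p * lam p) ≤ ∑ p, t p * Ω := Finset.sum_le_sum fun p _ =>
              mul_le_mul_of_nonneg_left (hmemlam p).2 (ht0 p)
          _ = Ω := by rw [← Finset.sum_mul, hsum_t, one_mul]
    · have := hconv.map_sum_le (t := Finset.univ) (w := t) (p := lam)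
        (fun p _ => ht0 p) hsum_t (fun p _ => hmemlam p)
      simpa [smul_eq_mul] using this
  -- notation for eigen-data of B and C
  set VB : Matrix (Fin n) (Fin n) ℂ := (hB.eigenvectorUnitary : Matrix (Fin n) (Fin n) ℂ)
    with hVBdef
  set VC : Matrix (Fin n) (Fin n) ℂ := (hC.eigenvectorUnitary : Matrix (Fin n) (Fin n) ℂ)
    with hVCdef
  have hVBmem : VB ∈ Matrix.unitaryGroup (Fin n) ℂ := hB.eigenvectorUnitary.2
  have hVCmem : VC ∈ Matrix.unitaryGroup (Fin n) ℂ := hC.eigenvectorUnitary.2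
  -- the spectrum of B lies in [ω, Ω]
  have hμIcc : ∀ j, hB.eigenvalues j ∈ Set.Icc ω Ω := by
    intro j
    set y : Fin n → ℂ := ⇑(hB.eigenvectorBasis j) with hy
    have hVy : VBᴴ *ᵥ y = Pi.single j 1 := by
      rw [hVBdef, ← Matrix.star_eq_conjTranspose]
      exact hB.star_eigenvectorUnitary_mulVec j
    have hsingle : (∑ i, ‖(Pi.single j 1 : Fin n → ℂ) i‖^2) = 1 := by
      rw [Fintype.sum_eq_single j (fun b hb => by simp [Pi.single_apply, hb])]
      simp
    have hy1 : star y ⬝ᵥ y = 1 := by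
      rw [quad_one VB hVBmem y, hVy, hsingle]
      norm_num
    obtain ⟨r, s', hr, hs', hrIcc, _⟩ := J y hy1
    have h2 := quad_self hB y
    rw [hr, hVy] at h2
    have h3 : (∑ i, hB.eigenvalues i * ‖(Pi.single j 1 : Fin n → ℂ) i‖^2)
        = hB.eigenvalues j := by
      rw [Fintype.sum_eq_single j (fun b hb => by simp [Pi.single_apply, hb])]
      simp
    rw [h3] at h2
    have : r = hB.eigenvalues j := by exact_mod_cast h2
    rwa [this] at hrIcc
  -- eigenvalue comparison, after sorting
  have key : ∀ m : Fin n,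
      f (hB.eigenvalues (Tuple.sort hB.eigenvalues m))
        ≤ hC.eigenvalues (Tuple.sort hC.eigenvalues m) := by
    intro m
    set sB := Tuple.sort hB.eigenvalues with hsB
    set sC := Tuple.sort hC.eigenvalues with hsC
    set sF : Finset (Fin n) := (Finset.Ici m).image sB with hsF
    set tF : Finset (Fin n) := (Finset.Iic m).image sC with htF
    have hm := m.isLt
    have hcards : n < sF.card + tF.card := by
      rw [hsF, htF, Finset.card_image_of_injective _ sB.injective,
        Finset.card_image_of_injective _ sC.injective, Fin.card_Ici, Fin.card_Iic]
      omega
    obtain ⟨x0, hx0ne, hsup1, hsup2⟩ := exists_common_vec VB VC hVBmem sF tF hcards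
    have hVBx0 : VBᴴ *ᵥ x0 ≠ 0 := by
      intro h
      apply hx0ne
      have h4 : VB *ᵥ (VBᴴ *ᵥ x0) = x0 := by
        rw [Matrix.mulVec_mulVec, ← Matrix.star_eq_conjTranspose,
          Matrix.mem_unitaryGroup_iff.mp hVBmem, Matrix.one_mulVec]
      rw [h, Matrix.mulVec_zero] at h4
      exact h4.symm
    have hpos : 0 < ∑ j, ‖(VBᴴ *ᵥ x0) j‖^2 := by
      obtain ⟨j0, hj0⟩ := Function.ne_iff.mp hVBx0
      refine Finset.sum_pos' (fun j _ => by positivity) ⟨j0, Finset.mem_univ _, ?_⟩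
      have : (0:ℝ) < ‖(VBᴴ *ᵥ x0) j0‖ := norm_pos_iff.mpr hj0
      positivity
    set α : ℝ := Real.sqrt (∑ j, ‖(VBᴴ *ᵥ x0) j‖^2) with hα
    have hαpos : 0 < α := Real.sqrt_pos.mpr hpos
    set x : Fin n → ℂ := ((α⁻¹ : ℝ) : ℂ) • x0 with hxdef
    have hscale : ∀ (M : Matrix (Fin n) (Fin n) ℂ) (j : Fin n),
        ‖(Mᴴ *ᵥ x) j‖^2 = (α⁻¹)^2 * ‖(Mᴴ *ᵥ x0) j‖^2 := by
      intro M j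
      rw [hxdef, Matrix.mulVec_smul]
      simp [norm_smul, abs_of_pos (inv_pos.mpr hαpos), mul_pow]
    have hsum0 : ∑ j, ‖(VBᴴ *ᵥ x0) j‖^2 = α^2 := (Real.sq_sqrt hpos.le).symm
    have hα2 : (α^2 : ℝ) ≠ 0 := pow_ne_zero 2 hαpos.ne'
    have hx1 : star x ⬝ᵥ x = 1 := by
      rw [quad_one VB hVBmem x]
      have h6 : ∑ j, ‖(VBᴴ *ᵥ x) j‖^2 = 1 := by
        rw [Finset.sum_congr rfl (fun j _ => hscale VB j), ← Finset.mul_sum, hsum0,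
          inv_pow, inv_mul_cancel₀ hα2]
      rw [h6]
      norm_num
    obtain ⟨r, s', hrB, hsc, hrIcc, hfr⟩ := J x hx1
    have hw1 : ∑ j, ‖(VBᴴ *ᵥ x) j‖^2 = 1 := by
      have h5 := quad_one VB hVBmem x
      rw [hx1] at h5
      exact_mod_cast h5.symm
    have hw2 : ∑ j, ‖(VCᴴ *ᵥ x) j‖^2 = 1 := by
      have h5 := quad_one VC hVCmem x
      rw [hx1] at h5
      exact_mod_cast h5.symm
    have hrval : r = ∑ j, hB.eigenvalues j * ‖(VBᴴ *ᵥ x) j‖^2 := by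
      have h5 := quad_self hB x
      rw [hrB] at h5
      exact_mod_cast h5
    have hsval : s' = ∑ j, hC.eigenvalues j * ‖(VCᴴ *ᵥ x) j‖^2 := by
      have h5 := quad_self hC x
      rw [hsc] at h5
      exact_mod_cast h5
    have hsupp1' : ∀ j ∉ sF, (VBᴴ *ᵥ x) j = 0 := by
      intro j hj
      rw [hxdef, Matrix.mulVec_smul, Pi.smul_apply, hsup1 j hj, smul_zero]
    have hsupp2' : ∀ j ∉ tF, (VCᴴ *ᵥ x) j = 0 := by
      intro j hj
      rw [hxdef, Matrix.mulVec_smul, Pi.smul_apply, hsup2 j hj, smul_zero]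
    have hlow : hB.eigenvalues (sB m) ≤ r := by
      rw [hrval]
      calc hB.eigenvalues (sB m) = ∑ j, hB.eigenvalues (sB m) * ‖(VBᴴ *ᵥ x) j‖^2 := by
            rw [← Finset.mul_sum, hw1, mul_one]
        _ ≤ ∑ j, hB.eigenvalues j * ‖(VBᴴ *ᵥ x) j‖^2 := by
            refine Finset.sum_le_sum fun j _ => ?_
            by_cases hjs : j ∈ sF
            · obtain ⟨l, hl, rfl⟩ := Finset.mem_image.mp hjs
              exact mul_le_mul_of_nonneg_right
                (Tuple.monotone_sort hB.eigenvalues (Finset.mem_Ici.mp hl)) (by positivity)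
            · rw [hsupp1' j hjs]
              norm_num
    have hhigh : s' ≤ hC.eigenvalues (sC m) := by
      rw [hsval]
      calc (∑ j, hC.eigenvalues j * ‖(VCᴴ *ᵥ x) j‖^2)
          ≤ ∑ j, hC.eigenvalues (sC m) * ‖(VCᴴ *ᵥ x) j‖^2 := by
            refine Finset.sum_le_sum fun j _ => ?_
            by_cases hjt : j ∈ tF
            · obtain ⟨l, hl, rfl⟩ := Finset.mem_image.mp hjt
              exact mul_le_mul_of_nonneg_right
                (Tuple.monotone_sort hC.eigenvalues (Finset.mem_Iic.mp hl)) (by positivity)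
            · rw [hsupp2' j hjt]
              norm_num
        _ = hC.eigenvalues (sC m) := by rw [← Finset.mul_sum, hw2, mul_one]
    calc f (hB.eigenvalues (sB m)) ≤ f r := hmono (hμIcc (sB m)) hrIcc hlow
      _ ≤ s' := hfr
      _ ≤ hC.eigenvalues (sC m) := hhigh
  -- combine everything
  set σ : Equiv.Perm (Fin n) :=
    (Tuple.sort hB.eigenvalues).symm.trans (Tuple.sort hC.eigenvalues) with hσ
  have hdom : ∀ j, f (hB.eigenvalues j) ≤ hC.eigenvalues (σ j) := by
    intro j
    have h := key ((Tuple.sort hB.eigenvalues).symm j)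
    simpa [hσ, Equiv.trans_apply, Equiv.apply_symm_apply] using h
  obtain ⟨P, hPmem, hPdiag⟩ := perm_conj_diag σ (fun j => ((hC.eigenvalues j : ℝ) : ℂ))
  refine ⟨VB * P * VCᴴ, ?_, ?_⟩
  · refine mul_mem (mul_mem hVBmem hPmem) ?_
    rw [← Matrix.star_eq_conjTranspose]
    exact Unitary.star_mem hVCmem
  · have hCspec : C = VC * diagonal (fun j => ((hC.eigenvalues j : ℝ) : ℂ)) * VCᴴ := by
      rw [← Matrix.star_eq_conjTranspose]
      convert hC.spectral_theorem using 2
      rw [Unitary.conjStarAlgAut_apply]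
      rfl
    have hVC1 : VCᴴ * VC = 1 := by
      rw [← Matrix.star_eq_conjTranspose]
      exact Matrix.mem_unitaryGroup_iff'.mp hVCmem
    have hconjT : (VB * P * VCᴴ)ᴴ = VC * (Pᴴ * VBᴴ) := by
      simp [Matrix.conjTranspose_mul, Matrix.mul_assoc]
    have hprod : (VB * P * VCᴴ) * C * (VB * P * VCᴴ)ᴴ
        = VB * (P * diagonal (fun j => ((hC.eigenvalues j : ℝ) : ℂ)) * Pᴴ) * VBᴴ := by
      rw [hconjT]
      conv_lhs => rw [hCspec]
      simp only [← Matrix.mul_assoc]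
      rw [Matrix.mul_assoc (VB * P) VCᴴ VC, hVC1, Matrix.mul_one]
      rw [Matrix.mul_assoc (VB * P * diagonal (fun j => ((hC.eigenvalues j : ℝ) : ℂ))) VCᴴ VC,
        hVC1, Matrix.mul_one]
    rw [hprod, hPdiag]
    have hcfcB : cfc f B = VB * diagonal (fun j => ((f (hB.eigenvalues j) : ℝ) : ℂ)) * VBᴴ := by
      rw [hB.cfc_eq, Matrix.IsHermitian.cfc, ← Matrix.star_eq_conjTranspose]
      rfl
    rw [hcfcB]
    have hdiff : VB * diagonal (fun j => ((hC.eigenvalues (σ j) : ℝ) : ℂ)) * VBᴴ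
        - VB * diagonal (fun j => ((f (hB.eigenvalues j) : ℝ) : ℂ)) * VBᴴ
        = VB * diagonal (fun j => ((hC.eigenvalues (σ j) - f (hB.eigenvalues j) : ℝ) : ℂ))
          * VBᴴ := by
      rw [← Matrix.sub_mul, ← Matrix.mul_sub, Matrix.diagonal_sub]
      push_cast
      rfl
    rw [hdiff]
    refine Matrix.PosSemidef.mul_mul_conjTranspose_same ?_ VB
    refine Matrix.posSemidef_diagonal_iff.mpr fun j => ?_
    rw [Complex.zero_le_real]
    linarith [hdom j]
end

section
/- Let A ∈ M_n be Hermitian with spectrum in [ω, Ω], f increasing and convex on [ω, Ω] with 0 ∈ [ω,Ω] and f(0) ≤ 0, and Z ∈ M_n with Z*Z ≤ I_n. Then there exists a unitary U ∈ M_n with f(Z*AZ) ≤ U Z* f(A) Z U*. -/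
open scoped ComplexOrder
open scoped Matrix

open Matrix Finset

namespace BourinAux
variable {n : ℕ}

noncomputable def nsq (x : Fin n → ℂ) : ℝ := ∑ i, ‖x i‖^2

lemma nsq_nonneg (x : Fin n → ℂ) : 0 ≤ nsq x :=
  Finset.sum_nonneg fun i _ => sq_nonneg _

lemma star_mul_self_eq (z : ℂ) : star z * z = ((‖z‖^2 : ℝ) : ℂ) := by
  rw [Complex.star_def, RCLike.conj_mul]; norm_num

lemma dot_self_eq_nsq (x : Fin n → ℂ) : star x ⬝ᵥ x = (nsq x : ℂ) := by
  simp only [dotProduct, Pi.star_apply, nsq, Complex.ofReal_sum]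
  exact Finset.sum_congr rfl fun i _ => star_mul_self_eq (x i)

lemma conj_qform (V N : Matrix (Fin n) (Fin n) ℂ) (x : Fin n → ℂ) :
    star x ⬝ᵥ ((V * N * Vᴴ) *ᵥ x) = star (Vᴴ *ᵥ x) ⬝ᵥ (N *ᵥ (Vᴴ *ᵥ x)) := by
  conv_lhs => rw [← mulVec_mulVec, ← mulVec_mulVec, dotProduct_mulVec (star x) V]
  rw [star_mulVec, conjTranspose_conjTranspose]

lemma diag_qform (d : Fin n → ℝ) (c : Fin n → ℂ) :
    star c ⬝ᵥ ((diagonal fun i => (d i : ℂ)) *ᵥ c) = ((∑ i, d i * ‖c i‖^2 : ℝ) : ℂ) := by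
  simp only [dotProduct, mulVec_diagonal, Pi.star_apply, Complex.ofReal_sum]
  refine Finset.sum_congr rfl fun i _ => ?_
  have : star (c i) * ((d i : ℂ) * c i) = (d i : ℂ) * (star (c i) * c i) := by ring
  rw [this, star_mul_self_eq]
  push_cast
  ring

lemma unitary_nsq {V : Matrix (Fin n) (Fin n) ℂ} (hV : V ∈ Matrix.unitaryGroup (Fin n) ℂ)
    (x : Fin n → ℂ) : nsq (Vᴴ *ᵥ x) = nsq x := by
  have h := conj_qform V 1 x
  rw [mul_one, ← star_eq_conjTranspose V, Matrix.mem_unitaryGroup_iff.mp hV] at h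
  rw [Matrix.one_mulVec, Matrix.one_mulVec, dot_self_eq_nsq, dot_self_eq_nsq] at h
  exact_mod_cast h.symm

/-- quadratic form of a matrix given as `V * diag d * Vᴴ`. -/
lemma qform_decomp (V : Matrix (Fin n) (Fin n) ℂ) (d : Fin n → ℝ) (x : Fin n → ℂ) :
    star x ⬝ᵥ ((V * diagonal (fun i => (d i : ℂ)) * Vᴴ) *ᵥ x)
      = ((∑ i, d i * ‖(Vᴴ *ᵥ x) i‖^2 : ℝ) : ℂ) := by
  rw [conj_qform, diag_qform]

lemma spectral (B : Matrix (Fin n) (Fin n) ℂ) (hB : B.IsHermitian) :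
    B = (hB.eigenvectorUnitary : Matrix (Fin n) (Fin n) ℂ)
        * diagonal (fun i => ((hB.eigenvalues i : ℝ) : ℂ))
        * (hB.eigenvectorUnitary : Matrix (Fin n) (Fin n) ℂ)ᴴ := by
  conv_lhs => rw [hB.spectral_theorem]
  rw [Unitary.conjStarAlgAut_apply, star_eq_conjTranspose]
  rfl

lemma cfc_spectral (B : Matrix (Fin n) (Fin n) ℂ) (hB : B.IsHermitian) (f : ℝ → ℝ) :
    cfc f B = (hB.eigenvectorUnitary : Matrix (Fin n) (Fin n) ℂ)
        * diagonal (fun i => ((f (hB.eigenvalues i) : ℝ) : ℂ))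
        * (hB.eigenvectorUnitary : Matrix (Fin n) (Fin n) ℂ)ᴴ := by
  rw [hB.cfc_eq, Matrix.IsHermitian.cfc, Unitary.conjStarAlgAut_apply, star_eq_conjTranspose]
  rfl

lemma qform_eig (B : Matrix (Fin n) (Fin n) ℂ) (hB : B.IsHermitian) (x : Fin n → ℂ) :
    star x ⬝ᵥ (B *ᵥ x)
      = ((∑ i, hB.eigenvalues i
          * ‖((hB.eigenvectorUnitary : Matrix (Fin n) (Fin n) ℂ)ᴴ *ᵥ x) i‖^2 : ℝ) : ℂ) := by
  conv_lhs => rw [spectral B hB]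
  rw [qform_decomp]

lemma qform_cfc (B : Matrix (Fin n) (Fin n) ℂ) (hB : B.IsHermitian) (f : ℝ → ℝ) (x : Fin n → ℂ) :
    star x ⬝ᵥ ((cfc f B) *ᵥ x)
      = ((∑ i, f (hB.eigenvalues i)
          * ‖((hB.eigenvectorUnitary : Matrix (Fin n) (Fin n) ℂ)ᴴ *ᵥ x) i‖^2 : ℝ) : ℂ) := by
  conv_lhs => rw [cfc_spectral B hB f]
  rw [qform_decomp]

lemma jensen_scalar (h0 : (0:ℝ) ∈ Set.Icc ω Ω) {f : ℝ → ℝ}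
    (hconv : ConvexOn ℝ (Set.Icc ω Ω) f) (hf0 : f 0 ≤ 0)
    (w α : Fin n → ℝ) (hw : ∀ i, 0 ≤ w i) (hw1 : ∑ i, w i ≤ 1)
    (hα : ∀ i, α i ∈ Set.Icc ω Ω) :
    (∑ i, w i * α i) ∈ Set.Icc ω Ω ∧ f (∑ i, w i * α i) ≤ ∑ i, w i * f (α i) := by
  set w' : Option (Fin n) → ℝ := fun o => o.elim (1 - ∑ i, w i) w with hw'
  set p' : Option (Fin n) → ℝ := fun o => o.elim 0 α with hp'
  have h₀ : ∀ o ∈ Finset.univ (α := Option (Fin n)), 0 ≤ w' o := by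
    rintro (_ | i) _
    · simpa [hw'] using hw1
    · exact hw i
  have h₁ : ∑ o : Option (Fin n), w' o = 1 := by
    rw [Fintype.sum_option]
    simp [hw']
  have hmem : ∀ o ∈ Finset.univ (α := Option (Fin n)), p' o ∈ Set.Icc ω Ω := by
    rintro (_ | i) _
    · exact h0
    · exact hα i
  have hsum : ∑ o : Option (Fin n), w' o • p' o = ∑ i, w i * α i := by
    rw [Fintype.sum_option]
    simp [hw', hp']
  constructor
  · have := (convex_Icc ω Ω).sum_mem h₀ h₁ hmem
    rwa [hsum] at this
  · have := hconv.map_sum_le h₀ h₁ hmem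
    rw [hsum] at this
    refine this.trans ?_
    rw [Fintype.sum_option]
    have : (1 - ∑ i, w i) * f 0 ≤ 0 :=
      mul_nonpos_of_nonneg_of_nonpos (by linarith) hf0
    simp only [hw', hp', Option.elim, smul_eq_mul]
    nlinarith [this]


lemma jensen_vec (A : Matrix (Fin n) (Fin n) ℂ) (hA : A.IsHermitian)
    (hα : ∀ i, hA.eigenvalues i ∈ Set.Icc ω Ω)
    (h0 : (0:ℝ) ∈ Set.Icc ω Ω) {f : ℝ → ℝ}
    (hconv : ConvexOn ℝ (Set.Icc ω Ω) f) (hf0 : f 0 ≤ 0)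
    (y : Fin n → ℂ) (hy : nsq y ≤ 1) :
    Complex.re (star y ⬝ᵥ (A *ᵥ y)) ∈ Set.Icc ω Ω ∧
      f (Complex.re (star y ⬝ᵥ (A *ᵥ y))) ≤ Complex.re (star y ⬝ᵥ ((cfc f A) *ᵥ y)) := by
  set U : Matrix (Fin n) (Fin n) ℂ := (hA.eigenvectorUnitary : Matrix (Fin n) (Fin n) ℂ)
  set w : Fin n → ℝ := fun i => ‖(Uᴴ *ᵥ y) i‖^2 with hwdef
  have hw : ∀ i, 0 ≤ w i := fun i => sq_nonneg _
  have hw1 : ∑ i, w i ≤ 1 := by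
    have : ∑ i, w i = nsq y := unitary_nsq (SetLike.coe_mem hA.eigenvectorUnitary) y
    linarith
  have h1 : Complex.re (star y ⬝ᵥ (A *ᵥ y)) = ∑ i, w i * hA.eigenvalues i := by
    rw [qform_eig A hA y, Complex.ofReal_re]
    exact Finset.sum_congr rfl fun i _ => mul_comm _ _
  have h2 : Complex.re (star y ⬝ᵥ ((cfc f A) *ᵥ y)) = ∑ i, w i * f (hA.eigenvalues i) := by
    rw [qform_cfc A hA f y, Complex.ofReal_re]
    exact Finset.sum_congr rfl fun i _ => mul_comm _ _
  obtain ⟨hmem, hle⟩ := jensen_scalar h0 hconv hf0 w hA.eigenvalues hw hw1 hα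
  rw [h1, h2]
  exact ⟨hmem, hle⟩

lemma contraction_nsq {Z : Matrix (Fin n) (Fin n) ℂ}
    (hZ : ((1 : Matrix (Fin n) (Fin n) ℂ) - Zᴴ * Z).PosSemidef) (x : Fin n → ℂ) :
    nsq (Z *ᵥ x) ≤ nsq x := by
  have h := hZ.dotProduct_mulVec_nonneg x
  have hexp : star x ⬝ᵥ (((1 : Matrix (Fin n) (Fin n) ℂ) - Zᴴ * Z) *ᵥ x)
      = ((nsq x - nsq (Z *ᵥ x) : ℝ) : ℂ) := by
    rw [Matrix.sub_mulVec, dotProduct_sub, Matrix.one_mulVec, dot_self_eq_nsq]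
    have : star x ⬝ᵥ ((Zᴴ * Z) *ᵥ x) = ((nsq (Z *ᵥ x) : ℝ) : ℂ) := by
      have h2 := conj_qform Zᴴ 1 x
      rw [mul_one, conjTranspose_conjTranspose, Matrix.one_mulVec, dot_self_eq_nsq] at h2
      exact h2
    rw [this]
    push_cast
    ring
  rw [hexp] at h
  have := Complex.zero_le_real.mp h
  linarith

-- quadratic form with support restriction
lemma qform_support (V : Matrix (Fin n) (Fin n) ℂ) (d : Fin n → ℝ) (x : Fin n → ℂ)
    (s : Finset (Fin n)) (hsupp : ∀ i ∉ s, (Vᴴ *ᵥ x) i = 0) :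
    ∑ i, d i * ‖(Vᴴ *ᵥ x) i‖^2 = ∑ i ∈ s, d i * ‖(Vᴴ *ᵥ x) i‖^2 := by
  refine (Finset.sum_subset s.subset_univ fun i _ hi => ?_).symm
  rw [hsupp i hi]
  simp

noncomputable def coordSub (s : Finset (Fin n)) : Submodule ℂ (Fin n → ℂ) where
  carrier := {y | ∀ i ∉ s, y i = 0}
  add_mem' := fun ha hb i hi => by simp [ha i hi, hb i hi]
  zero_mem' := fun i _ => rfl
  smul_mem' := fun c x hx i hi => by simp [hx i hi]

noncomputable def coordEquiv (s : Finset (Fin n)) : coordSub s ≃ₗ[ℂ] (s → ℂ) where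
  toFun y := fun i => (y : Fin n → ℂ) i.val
  map_add' a b := rfl
  map_smul' c a := rfl
  invFun c := ⟨fun i => if h : i ∈ s then c ⟨i, h⟩ else 0, fun i hi => by simp [hi]⟩
  left_inv y := by
    ext i
    by_cases h : i ∈ s
    · simp [h]
    · simp [h, y.2 i h]
  right_inv c := by
    ext ⟨i, hi⟩
    simp [hi]

lemma finrank_coordSub (s : Finset (Fin n)) :
    Module.finrank ℂ (coordSub s) = s.card := by
  rw [(coordEquiv s).finrank_eq, Module.finrank_pi, Fintype.card_coe]

noncomputable def mulVecEquiv {V : Matrix (Fin n) (Fin n) ℂ}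
    (hV : V ∈ Matrix.unitaryGroup (Fin n) ℂ) : (Fin n → ℂ) ≃ₗ[ℂ] (Fin n → ℂ) :=
  LinearEquiv.ofLinear (Matrix.mulVecLin V) (Matrix.mulVecLin Vᴴ)
    (by rw [← Matrix.mulVecLin_mul, ← star_eq_conjTranspose,
          Matrix.mem_unitaryGroup_iff.mp hV, Matrix.mulVecLin_one])
    (by rw [← Matrix.mulVecLin_mul, ← star_eq_conjTranspose,
          Matrix.mem_unitaryGroup_iff'.mp hV, Matrix.mulVecLin_one])

noncomputable def K (V : Matrix (Fin n) (Fin n) ℂ) (s : Finset (Fin n)) : Submodule ℂ (Fin n → ℂ) :=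
  (coordSub s).comap (Matrix.mulVecLin Vᴴ)

lemma mem_K {V : Matrix (Fin n) (Fin n) ℂ} {s : Finset (Fin n)} {x : Fin n → ℂ} :
    x ∈ K V s ↔ ∀ i ∉ s, (Vᴴ *ᵥ x) i = 0 := Iff.rfl

lemma finrank_K {V : Matrix (Fin n) (Fin n) ℂ} (hV : V ∈ Matrix.unitaryGroup (Fin n) ℂ)
    (s : Finset (Fin n)) : Module.finrank ℂ (K V s) = s.card := by
  have h : K V s = (coordSub s).map (↑(mulVecEquiv hV) : (Fin n → ℂ) →ₗ[ℂ] (Fin n → ℂ)) := by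
    rw [Submodule.map_equiv_eq_comap_symm]
    rfl
  rw [h, LinearEquiv.finrank_map_eq, finrank_coordSub]

/-- two submodules with total finrank > n intersect nontrivially -/
lemma exists_nonzero_inter (p q : Submodule ℂ (Fin n → ℂ))
    (h : n < Module.finrank ℂ p + Module.finrank ℂ q) :
    ∃ x, x ∈ p ∧ x ∈ q ∧ x ≠ 0 := by
  have h1 := Submodule.finrank_sup_add_finrank_inf_eq p q
  have h2 : Module.finrank ℂ (p ⊔ q : Submodule ℂ (Fin n → ℂ)) ≤ n := by
    have := Submodule.finrank_le (p ⊔ q : Submodule ℂ (Fin n → ℂ))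
    simpa [Module.finrank_pi] using this
  have hpos : 0 < Module.finrank ℂ (p ⊓ q : Submodule ℂ (Fin n → ℂ)) := by omega
  have hne : (p ⊓ q : Submodule ℂ (Fin n → ℂ)) ≠ ⊥ := by
    intro hbot
    rw [hbot, finrank_bot] at hpos
    exact lt_irrefl 0 hpos
  obtain ⟨x, hx, hx0⟩ := Submodule.exists_mem_ne_zero_of_ne_bot hne
  exact ⟨x, hx.1, hx.2, hx0⟩


lemma nsq_smul (c : ℂ) (x : Fin n → ℂ) : nsq (c • x) = ‖c‖^2 * nsq x := by
  simp only [nsq, Pi.smul_apply, smul_eq_mul, norm_mul, mul_pow, Finset.mul_sum]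

lemma nsq_pos {x : Fin n → ℂ} (hx : x ≠ 0) : 0 < nsq x := by
  obtain ⟨i, hi⟩ := Function.ne_iff.mp hx
  refine Finset.sum_pos' (fun j _ => sq_nonneg _) ⟨i, Finset.mem_univ i, ?_⟩
  have hne : x i ≠ 0 := hi
  have := norm_pos_iff.mpr hne
  positivity

lemma counting (B : Matrix (Fin n) (Fin n) ℂ) (hB : B.IsHermitian) (t : ℝ)
    (W : Submodule ℂ (Fin n → ℂ))
    (hW : ∀ x ∈ W, nsq x = 1 → t ≤ Complex.re (star x ⬝ᵥ (B *ᵥ x))) :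
    Module.finrank ℂ W ≤ (Finset.univ.filter fun i => t ≤ hB.eigenvalues i).card := by
  by_contra hcon
  push_neg at hcon
  set V : Matrix (Fin n) (Fin n) ℂ := (hB.eigenvectorUnitary : Matrix (Fin n) (Fin n) ℂ) with hV
  set s' : Finset (Fin n) := Finset.univ.filter (fun i => ¬ t ≤ hB.eigenvalues i) with hs'
  have hcard : (Finset.univ.filter fun i => t ≤ hB.eigenvalues i).card + s'.card = n := by
    rw [hs', Finset.card_filter_add_card_filter_not, Finset.card_univ, Fintype.card_fin]
  obtain ⟨x, hxW, hxK, hx0⟩ := exists_nonzero_inter W (K V s') (by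
    rw [finrank_K (SetLike.coe_mem hB.eigenvectorUnitary) s']
    omega)
  set a : ℝ := nsq x with hadef
  have ha : 0 < a := nsq_pos hx0
  set u : Fin n → ℂ := ((((Real.sqrt a)⁻¹ : ℝ)) : ℂ) • x with hu
  have hnu : nsq u = 1 := by
    rw [hu, nsq_smul]
    rw [Complex.norm_real]
    rw [Real.norm_eq_abs, abs_of_nonneg (by positivity), ← hadef]
    rw [inv_pow, Real.sq_sqrt ha.le]
    field_simp
  have huW : u ∈ W := Submodule.smul_mem W _ hxW
  have huK : u ∈ K V s' := Submodule.smul_mem (K V s') _ hxK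
  set w : Fin n → ℝ := fun i => ‖(Vᴴ *ᵥ u) i‖^2 with hwdef
  have hw0 : ∀ i, 0 ≤ w i := fun i => sq_nonneg _
  have hsum1 : ∑ i ∈ s', w i = 1 := by
    have h1 : ∑ i, (1:ℝ) * w i = ∑ i ∈ s', (1:ℝ) * w i :=
      qform_support V (fun _ => 1) u s' (mem_K.mp huK)
    simp only [one_mul] at h1
    rw [← h1]
    have h2 : ∑ i, w i = nsq (Vᴴ *ᵥ u) := rfl
    rw [h2, unitary_nsq (SetLike.coe_mem hB.eigenvectorUnitary) u, hnu]
  have hre : Complex.re (star u ⬝ᵥ (B *ᵥ u)) = ∑ i ∈ s', hB.eigenvalues i * w i := by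
    rw [qform_eig B hB u, Complex.ofReal_re]
    exact qform_support V hB.eigenvalues u s' (mem_K.mp huK)
  have hlow := hW u huW hnu
  rw [hre] at hlow
  obtain ⟨i₀, hi₀s, hi₀⟩ : ∃ i ∈ s', 0 < w i := by
    refine Finset.exists_lt_of_sum_lt (f := fun _ => (0:ℝ)) ?_
    rw [hsum1, Finset.sum_const_zero]
    norm_num
  have hstrict : ∑ i ∈ s', hB.eigenvalues i * w i < ∑ i ∈ s', t * w i := by
    refine Finset.sum_lt_sum (fun i hi => ?_) ⟨i₀, hi₀s, ?_⟩
    · have : hB.eigenvalues i < t := by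
        have := Finset.mem_filter.mp hi
        exact lt_of_not_ge this.2
      exact mul_le_mul_of_nonneg_right this.le (hw0 i)
    · have : hB.eigenvalues i₀ < t := by
        have := Finset.mem_filter.mp hi₀s
        exact lt_of_not_ge this.2
      exact mul_lt_mul_of_pos_right this hi₀
  rw [← Finset.mul_sum, hsum1, mul_one] at hstrict
  linarith


lemma nsq_eigenvector (B : Matrix (Fin n) (Fin n) ℂ) (hB : B.IsHermitian) (i : Fin n) :
    nsq ⇑(hB.eigenvectorBasis i) = 1 := by
  have h1 : (hB.eigenvectorUnitary : Matrix (Fin n) (Fin n) ℂ)ᴴ *ᵥ ⇑(hB.eigenvectorBasis i)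
      = Pi.single i 1 := by
    rw [← star_eq_conjTranspose]
    exact hB.star_eigenvectorUnitary_mulVec i
  have h2 := unitary_nsq (SetLike.coe_mem hB.eigenvectorUnitary) ⇑(hB.eigenvectorBasis i)
  rw [h1] at h2
  rw [← h2, nsq]
  rw [Finset.sum_eq_single i]
  · simp
  · intro j _ hj
    simp [Pi.single_apply, hj]
  · simp

lemma eig_mem {ω Ω : ℝ} (M : Matrix (Fin n) (Fin n) ℂ) (hM : M.IsHermitian)
    (h : ∀ x : Fin n → ℂ, nsq x = 1 → Complex.re (star x ⬝ᵥ (M *ᵥ x)) ∈ Set.Icc ω Ω) :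
    ∀ i, hM.eigenvalues i ∈ Set.Icc ω Ω := by
  intro i
  have := hM.eigenvalues_eq i
  rw [this]
  exact h _ (nsq_eigenvector M hM i)

/-- on the span of eigenvectors indexed by `s`, the Rayleigh quotient is at least the
smallest eigenvalue over `s`. -/
lemma rayleigh_ge (M : Matrix (Fin n) (Fin n) ℂ) (hM : M.IsHermitian) (s : Finset (Fin n))
    (hs : s.Nonempty) (x : Fin n → ℂ)
    (hx : x ∈ K (hM.eigenvectorUnitary : Matrix (Fin n) (Fin n) ℂ) s) (h1 : nsq x = 1) :
    ∃ i₀ ∈ s, hM.eigenvalues i₀ ≤ Complex.re (star x ⬝ᵥ (M *ᵥ x)) := by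
  set V : Matrix (Fin n) (Fin n) ℂ := (hM.eigenvectorUnitary : Matrix (Fin n) (Fin n) ℂ) with hV
  set w : Fin n → ℝ := fun i => ‖(Vᴴ *ᵥ x) i‖^2 with hwdef
  have hw0 : ∀ i, 0 ≤ w i := fun i => sq_nonneg _
  have hsum1 : ∑ i ∈ s, w i = 1 := by
    have hsupp := qform_support V (fun _ => 1) x s (mem_K.mp hx)
    simp only [one_mul] at hsupp
    rw [← hsupp]
    have h2 : ∑ i, w i = nsq (Vᴴ *ᵥ x) := rfl
    rw [h2, unitary_nsq (SetLike.coe_mem hM.eigenvectorUnitary) x, h1]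
  have hre : Complex.re (star x ⬝ᵥ (M *ᵥ x)) = ∑ i ∈ s, hM.eigenvalues i * w i := by
    rw [qform_eig M hM x, Complex.ofReal_re]
    exact qform_support V hM.eigenvalues x s (mem_K.mp hx)
  obtain ⟨i₀, hi₀s, hi₀min⟩ := Finset.exists_min_image s hM.eigenvalues hs
  refine ⟨i₀, hi₀s, ?_⟩
  rw [hre]
  calc hM.eigenvalues i₀ = ∑ i ∈ s, hM.eigenvalues i₀ * w i := by
        rw [← Finset.mul_sum, hsum1, mul_one]
    _ ≤ ∑ i ∈ s, hM.eigenvalues i * w i :=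
        Finset.sum_le_sum fun i hi => mul_le_mul_of_nonneg_right (hi₀min i hi) (hw0 i)


/-- if a permuted-eigenvalue domination holds, conjugating by a suitable unitary dominates. -/
lemma exists_unitary_of_perm_dom (Bm : Matrix (Fin n) (Fin n) ℂ) (hB : Bm.IsHermitian)
    (Wm : Matrix (Fin n) (Fin n) ℂ) (hWm : Wm ∈ Matrix.unitaryGroup (Fin n) ℂ)
    (g : Fin n → ℝ) (π : Equiv.Perm (Fin n)) (hπ : ∀ i, g i ≤ hB.eigenvalues (π i)) :
    ∃ U ∈ Matrix.unitaryGroup (Fin n) ℂ,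
      ((U : Matrix (Fin n) (Fin n) ℂ) * Bm * Uᴴ
        - Wm * diagonal (fun i => ((g i : ℝ) : ℂ)) * Wmᴴ).PosSemidef := by
  set V : Matrix (Fin n) (Fin n) ℂ := (hB.eigenvectorUnitary : Matrix (Fin n) (Fin n) ℂ) with hVdef
  set V' : Matrix (Fin n) (Fin n) ℂ := V.submatrix id ⇑π with hV'def
  have hVu : V ∈ Matrix.unitaryGroup (Fin n) ℂ := SetLike.coe_mem hB.eigenvectorUnitary
  have hVV : Vᴴ * V = 1 := by
    rw [← star_eq_conjTranspose]; exact Matrix.mem_unitaryGroup_iff'.mp hVu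
  have hV'1 : V'ᴴ * V' = 1 := by
    rw [hV'def, conjTranspose_submatrix]
    have := Matrix.submatrix_mul_equiv Vᴴ V ⇑π (Equiv.refl (Fin n)) ⇑π
    simp only [Equiv.coe_refl] at this
    rw [this, hVV, Matrix.submatrix_one_equiv]
  have hV'u : V' ∈ Matrix.unitaryGroup (Fin n) ℂ := by
    rw [Matrix.mem_unitaryGroup_iff', star_eq_conjTranspose]
    exact hV'1
  set U : Matrix (Fin n) (Fin n) ℂ := Wm * V'ᴴ with hUdef
  have hUu : U ∈ Matrix.unitaryGroup (Fin n) ℂ := by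
    rw [hUdef, ← star_eq_conjTranspose]
    exact mul_mem hWm (Unitary.star_mem hV'u)
  -- B = V' * diagonal (β∘π) * V'ᴴ
  have hBdec : Bm = V' * diagonal (fun i => ((hB.eigenvalues (π i) : ℝ) : ℂ)) * V'ᴴ := by
    have hd : (diagonal (fun i => ((hB.eigenvalues i : ℝ) : ℂ))).submatrix ⇑π ⇑π
        = diagonal (fun i => ((hB.eigenvalues (π i) : ℝ) : ℂ)) :=
      Matrix.submatrix_diagonal_equiv _ π
    rw [hV'def, conjTranspose_submatrix, ← hd]
    have h1 := Matrix.submatrix_mul_equiv V (diagonal (fun i => ((hB.eigenvalues i : ℝ) : ℂ)))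
      id π ⇑π
    rw [h1]
    have h2 := Matrix.submatrix_mul_equiv
      (V * diagonal (fun i => ((hB.eigenvalues i : ℝ) : ℂ))) Vᴴ id π id
    rw [h2, Matrix.submatrix_id_id]
    exact spectral Bm hB
  have hUBU : U * Bm * Uᴴ = Wm * diagonal (fun i => ((hB.eigenvalues (π i) : ℝ) : ℂ)) * Wmᴴ := by
    conv_lhs => rw [hBdec]
    rw [hUdef, conjTranspose_mul, conjTranspose_conjTranspose]
    have c1 : Wm * V'ᴴ * (V' * diagonal (fun i => ((hB.eigenvalues (π i) : ℝ) : ℂ)) * V'ᴴ)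
        * (V' * Wmᴴ)
        = Wm * (V'ᴴ * V') * diagonal (fun i => ((hB.eigenvalues (π i) : ℝ) : ℂ)) * (V'ᴴ * V')
        * Wmᴴ := by
      simp only [Matrix.mul_assoc]
    rw [c1, hV'1, Matrix.mul_one, Matrix.mul_one]
  refine ⟨U, hUu, ?_⟩
  rw [hUBU]
  have hdiff : Wm * diagonal (fun i => ((hB.eigenvalues (π i) : ℝ) : ℂ)) * Wmᴴ
      - Wm * diagonal (fun i => ((g i : ℝ) : ℂ)) * Wmᴴ
      = Wm * diagonal (fun i => ((hB.eigenvalues (π i) - g i : ℝ) : ℂ)) * Wmᴴ := by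
    rw [← Matrix.sub_mul, ← Matrix.mul_sub, diagonal_sub]
    congr 1
    congr 1
    congr 1
    funext i
    push_cast
    ring
  rw [hdiff]
  refine Matrix.PosSemidef.mul_mul_conjTranspose_same ?_ Wm
  refine Matrix.posSemidef_diagonal_iff.mpr fun i => ?_
  rw [Complex.zero_le_real]
  linarith [hπ i]

end BourinAux

lemma diag_real_herm (d : Fin n → ℝ) :
    (diagonal (fun i => ((d i : ℝ) : ℂ))).IsHermitian := by
  have h : star (fun i => ((d i : ℝ) : ℂ)) = fun i => ((d i : ℝ) : ℂ) := by
    funext i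
    exact Complex.conj_ofReal (d i)
  rw [Matrix.IsHermitian, diagonal_conjTranspose, h]

open BourinAux

/-- Extension of Bourin's theorem to contractions: if `A` is Hermitian with spectrum in
`[ω, Ω] ∋ 0`, `f` is increasing, convex (and continuous) on `[ω, Ω]` with `f(0) ≤ 0` and
`Z*Z ≤ 1`, then there is a unitary `U` with `f(Z*AZ) ≤ U Z* f(A) Z U*`. -/
theorem bourin_contraction
    {n : ℕ} (A : Matrix (Fin n) (Fin n) ℂ) (hA : A.IsHermitian) (ω Ω : ℝ)
    (hspec : spectrum ℝ A ⊆ Set.Icc ω Ω) (h0 : (0:ℝ) ∈ Set.Icc ω Ω)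
    (f : ℝ → ℝ) (hmono : MonotoneOn f (Set.Icc ω Ω))
    (hconv : ConvexOn ℝ (Set.Icc ω Ω) f) (hcont : ContinuousOn f (Set.Icc ω Ω))
    (hf0 : f 0 ≤ 0)
    (Z : Matrix (Fin n) (Fin n) ℂ) (hZ : ((1 : Matrix (Fin n) (Fin n) ℂ) - Zᴴ * Z).PosSemidef) :
    ∃ U ∈ Matrix.unitaryGroup (Fin n) ℂ,
      ((U : Matrix (Fin n) (Fin n) ℂ) * (Zᴴ * cfc f A * Z) * Uᴴ
        - cfc f (Zᴴ * A * Z)).PosSemidef := by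

  classical
  have hM : (Zᴴ * A * Z).IsHermitian := Matrix.isHermitian_conjTranspose_mul_mul Z hA
  have hfA : (cfc f A).IsHermitian := by
    rw [cfc_spectral A hA f]
    exact Matrix.isHermitian_mul_mul_conjTranspose _ (diag_real_herm _)
  have hBh : (Zᴴ * cfc f A * Z).IsHermitian := Matrix.isHermitian_conjTranspose_mul_mul Z hfA
  have hαIcc : ∀ i, hA.eigenvalues i ∈ Set.Icc ω Ω :=
    fun i => hspec (hA.eigenvalues_mem_spectrum_real i)
  have hkey : ∀ (N : Matrix (Fin n) (Fin n) ℂ) (x : Fin n → ℂ),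
      star x ⬝ᵥ ((Zᴴ * N * Z) *ᵥ x) = star (Z *ᵥ x) ⬝ᵥ (N *ᵥ (Z *ᵥ x)) := by
    intro N x
    have h := conj_qform Zᴴ N x
    rwa [conjTranspose_conjTranspose] at h
  have hMform : ∀ x : Fin n → ℂ, nsq x = 1 →
      Complex.re (star x ⬝ᵥ ((Zᴴ * A * Z) *ᵥ x)) ∈ Set.Icc ω Ω ∧
        f (Complex.re (star x ⬝ᵥ ((Zᴴ * A * Z) *ᵥ x)))
          ≤ Complex.re (star x ⬝ᵥ ((Zᴴ * cfc f A * Z) *ᵥ x)) := by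
    intro x hx
    have hy : nsq (Z *ᵥ x) ≤ 1 := le_trans (contraction_nsq hZ x) (le_of_eq hx)
    have h := jensen_vec A hA hαIcc h0 hconv hf0 (Z *ᵥ x) hy
    rw [← hkey A x, ← hkey (cfc f A) x] at h
    exact h
  have hμIcc : ∀ i, hM.eigenvalues i ∈ Set.Icc ω Ω :=
    eig_mem _ hM (fun x hx => (hMform x hx).1)
  set g : Fin n → ℝ := fun i => f (hM.eigenvalues i) with hgdef
  have hdom : ∀ j : Fin n, g (Tuple.sort g j) ≤ hBh.eigenvalues (Tuple.sort hBh.eigenvalues j) := by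
    intro j
    set s : Finset (Fin n) := Finset.image ⇑(Tuple.sort g) (Finset.Ici j) with hsdef
    have hscard : s.card = n - j := by
      rw [hsdef, Finset.card_image_of_injective _ (Tuple.sort g).injective, Fin.card_Ici]
    have hsne : s.Nonempty := ⟨Tuple.sort g j,
      Finset.mem_image.mpr ⟨j, Finset.mem_Ici.mpr le_rfl, rfl⟩⟩
    have hWbound : ∀ x ∈ K (hM.eigenvectorUnitary : Matrix (Fin n) (Fin n) ℂ) s, nsq x = 1 →
        g (Tuple.sort g j) ≤ Complex.re (star x ⬝ᵥ ((Zᴴ * cfc f A * Z) *ᵥ x)) := by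
      intro x hx hx1
      obtain ⟨i₀, hi₀s, hi₀⟩ := rayleigh_ge _ hM s hsne x hx hx1
      obtain ⟨hmem, hjen⟩ := hMform x hx1
      have hgi : g (Tuple.sort g j) ≤ g i₀ := by
        obtain ⟨k, hk, rfl⟩ := Finset.mem_image.mp hi₀s
        exact Tuple.monotone_sort g (Finset.mem_Ici.mp hk)
      have hf2 : f (hM.eigenvalues i₀) ≤ f (Complex.re (star x ⬝ᵥ ((Zᴴ * A * Z) *ᵥ x))) :=
        hmono (hμIcc i₀) hmem hi₀
      calc g (Tuple.sort g j) ≤ g i₀ := hgi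
        _ = f (hM.eigenvalues i₀) := rfl
        _ ≤ f (Complex.re (star x ⬝ᵥ ((Zᴴ * A * Z) *ᵥ x))) := hf2
        _ ≤ Complex.re (star x ⬝ᵥ ((Zᴴ * cfc f A * Z) *ᵥ x)) := hjen
    have hcount := counting (Zᴴ * cfc f A * Z) hBh (g (Tuple.sort g j)) _ hWbound
    rw [finrank_K (SetLike.coe_mem hM.eigenvectorUnitary) s, hscard] at hcount
    by_contra hlt
    push_neg at hlt
    have hsub : (Finset.univ.filter fun i => g (Tuple.sort g j) ≤ hBh.eigenvalues i)
        ⊆ Finset.image ⇑(Tuple.sort hBh.eigenvalues) (Finset.Ioi j) := by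
      intro i hi
      have hi' := (Finset.mem_filter.mp hi).2
      refine Finset.mem_image.mpr ⟨(Tuple.sort hBh.eigenvalues).symm i, Finset.mem_Ioi.mpr ?_,
        Equiv.apply_symm_apply _ i⟩
      by_contra hk
      push_neg at hk
      have hb := Tuple.monotone_sort hBh.eigenvalues hk
      simp only [Function.comp_apply, Equiv.apply_symm_apply] at hb
      linarith
    have hcard2 := Finset.card_le_card hsub
    rw [Finset.card_image_of_injective _ (Tuple.sort hBh.eigenvalues).injective,
      Fin.card_Ioi] at hcard2
    have hj := j.isLt
    omega
  have hπ : ∀ i, g i ≤ hBh.eigenvalues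
      ((((Tuple.sort g).symm).trans (Tuple.sort hBh.eigenvalues)) i) := by
    intro i
    have h := hdom ((Tuple.sort g).symm i)
    rw [Equiv.apply_symm_apply] at h
    exact h
  obtain ⟨U, hU, hpsd⟩ := exists_unitary_of_perm_dom (Zᴴ * cfc f A * Z) hBh
    (hM.eigenvectorUnitary : Matrix (Fin n) (Fin n) ℂ)
    (SetLike.coe_mem hM.eigenvectorUnitary) g
    ((((Tuple.sort g).symm).trans (Tuple.sort hBh.eigenvalues))) hπ
  refine ⟨U, hU, ?_⟩
  have hC : cfc f (Zᴴ * A * Z)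
      = (hM.eigenvectorUnitary : Matrix (Fin n) (Fin n) ℂ)
        * diagonal (fun i => ((g i : ℝ) : ℂ))
        * (hM.eigenvectorUnitary : Matrix (Fin n) (Fin n) ℂ)ᴴ := cfc_spectral _ hM f
  rw [hC]
  exact hpsd
end

section
/- Let A ∈ M_n be Hermitian with spectrum in [ω, Ω], f increasing and convex on [ω, Ω], and Ψ : M_n → M_m a unital positive linear map. Then there exists a unitary U ∈ M_m such that f(Ψ(A)) ≤ U Ψ(f(A)) U*. -/
open scoped ComplexOrder
open scoped Matrix

namespace UOPM
open Matrix

variable {m : ℕ}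

noncomputable def permMat (σ : Equiv.Perm (Fin m)) : Matrix (Fin m) (Fin m) ℂ :=
  σ.toPEquiv.toMatrix

lemma permMat_apply (σ : Equiv.Perm (Fin m)) (i j : Fin m) :
    permMat σ i j = if σ i = j then 1 else 0 := by
  rw [permMat, PEquiv.toMatrix_toPEquiv_apply, Pi.single_apply]
  exact if_congr eq_comm rfl rfl

lemma permMat_conjTranspose (σ : Equiv.Perm (Fin m)) :
    (permMat σ)ᴴ = permMat σ.symm := by
  ext i j
  simp only [conjTranspose_apply, permMat_apply]
  rw [apply_ite (star : ℂ → ℂ), star_one, star_zero]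
  congr 1
  simp [eq_comm, Equiv.eq_symm_apply]

lemma permMat_mul_permMat (σ τ : Equiv.Perm (Fin m)) :
    permMat σ * permMat τ = permMat (σ.trans τ) := by
  rw [permMat, permMat, permMat, ← PEquiv.toMatrix_trans, ← Equiv.toPEquiv_trans]

lemma permMat_mem (σ : Equiv.Perm (Fin m)) : permMat σ ∈ Matrix.unitaryGroup (Fin m) ℂ := by
  rw [Matrix.mem_unitaryGroup_iff, star_eq_conjTranspose, permMat_conjTranspose,
    permMat_mul_permMat]
  simp [permMat]

lemma permMat_conj_diagonal (σ : Equiv.Perm (Fin m)) (d : Fin m → ℂ) :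
    permMat σ * diagonal d * (permMat σ)ᴴ = diagonal (d ∘ σ) := by
  rw [permMat_conjTranspose]
  rw [show (permMat σ.symm : Matrix (Fin m) (Fin m) ℂ) = σ.symm.toPEquiv.toMatrix from rfl]
  rw [show (permMat σ : Matrix (Fin m) (Fin m) ℂ) = σ.toPEquiv.toMatrix from rfl]
  rw [PEquiv.toMatrix_toPEquiv_mul, PEquiv.mul_toMatrix_toPEquiv]
  ext i j
  simp only [Matrix.submatrix_apply, Equiv.symm_symm, id_eq, Matrix.diagonal_apply,
    Function.comp_apply]
  by_cases h : i = j <;> simp [h, σ.injective.eq_iff]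


variable {k : ℕ}

lemma conj_perm {m : ℕ} (W : Matrix (Fin m) (Fin m) ℂ) (σ : Equiv.Perm (Fin m)) (d : Fin m → ℂ) :
    (W * permMat σ.symm) * diagonal (d ∘ σ) * (W * permMat σ.symm)ᴴ = W * diagonal d * Wᴴ := by
  have e : permMat σ.symm * diagonal (d ∘ σ) * (permMat σ.symm)ᴴ = diagonal d := by
    have e2 : (d ∘ ⇑σ) ∘ ⇑σ.symm = d := by
      funext i
      exact congrArg d (σ.apply_symm_apply i)
    rw [permMat_conj_diagonal, e2]
  conv_rhs => rw [← e]
  simp only [Matrix.conjTranspose_mul, Matrix.mul_assoc]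

lemma conj_diag_psd (V : Matrix (Fin k) (Fin k) ℂ) {d : Fin k → ℝ} (hd : ∀ i, 0 ≤ d i) :
    (V * diagonal (fun i => (d i : ℂ)) * Vᴴ).PosSemidef := by
  have h : (diagonal (fun i => (d i : ℂ))).PosSemidef :=
    PosSemidef.diagonal (fun i => by
      simpa using Complex.zero_le_real.mpr (hd i))
  exact h.mul_mul_conjTranspose_same V

lemma conj_diag_isHermitian (V : Matrix (Fin k) (Fin k) ℂ) (d : Fin k → ℝ) :
    (V * diagonal (fun i => (d i : ℂ)) * Vᴴ).IsHermitian := by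
  unfold Matrix.IsHermitian
  rw [conjTranspose_mul, conjTranspose_mul, conjTranspose_conjTranspose, diagonal_conjTranspose]
  have : star (fun i => (d i : ℂ)) = fun i => (d i : ℂ) := by
    funext i; exact Complex.conj_ofReal (d i)
  rw [this, Matrix.mul_assoc]

section rep

variable {M : Matrix (Fin k) (Fin k) ℂ} (hM : M.IsHermitian)

local notation "V" => (Matrix.IsHermitian.eigenvectorUnitary hM : Matrix (Fin k) (Fin k) ℂ)

lemma rep_spec : M = V * diagonal (fun i => (hM.eigenvalues i : ℂ)) * Vᴴ := by
  conv_lhs => rw [hM.spectral_theorem]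
  rfl

lemma rep_one : (1 : Matrix (Fin k) (Fin k) ℂ) = V * diagonal (fun _ => ((1:ℝ) : ℂ)) * Vᴴ := by
  have h1 : diagonal (fun _ : Fin k => ((1:ℝ):ℂ)) = 1 := by simp
  rw [h1, Matrix.mul_one, ← star_eq_conjTranspose,
    (Matrix.mem_unitaryGroup_iff).mp (Matrix.IsHermitian.eigenvectorUnitary hM).2]

lemma rep_cfc (f : ℝ → ℝ) :
    cfc f M = V * diagonal (fun i => ((f (hM.eigenvalues i)) : ℂ)) * Vᴴ := by
  rw [hM.cfc_eq, Matrix.IsHermitian.cfc]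
  rfl

lemma rep_affine (a b : ℝ) :
    (a : ℂ) • M + (b : ℂ) • (1 : Matrix (Fin k) (Fin k) ℂ)
      = V * diagonal (fun i => ((a * hM.eigenvalues i + b : ℝ) : ℂ)) * Vᴴ := by
  conv_lhs => rw [rep_spec hM, rep_one hM]
  have hd : (diagonal (fun i => ((a * hM.eigenvalues i + b : ℝ) : ℂ)))
      = (a:ℂ) • diagonal (fun i => (hM.eigenvalues i : ℂ))
        + (b:ℂ) • diagonal (fun _ : Fin k => ((1:ℝ):ℂ)) := by
    rw [← diagonal_smul, ← diagonal_smul, diagonal_add]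
    congr 1
    funext i
    simp only [Pi.add_apply, Pi.smul_apply, smul_eq_mul]
    push_cast
    ring
  rw [hd, Matrix.mul_add, Matrix.add_mul, Matrix.mul_smul, Matrix.smul_mul,
    Matrix.mul_smul, Matrix.smul_mul]

lemma conj_sub_psd (V₀ : Matrix (Fin k) (Fin k) ℂ) {g h : Fin k → ℝ} (hgh : ∀ i, g i ≤ h i) :
    (V₀ * diagonal (fun i => (h i : ℂ)) * V₀ᴴ - V₀ * diagonal (fun i => (g i : ℂ)) * V₀ᴴ).PosSemidef := by
  have e : V₀ * diagonal (fun i => (h i : ℂ)) * V₀ᴴ - V₀ * diagonal (fun i => (g i : ℂ)) * V₀ᴴ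
      = V₀ * diagonal (fun i => ((h i - g i : ℝ) : ℂ)) * V₀ᴴ := by
    rw [← Matrix.sub_mul, ← Matrix.mul_sub, diagonal_sub]
    congr 2
    funext i
    push_cast
    ring
  rw [e]
  exact conj_diag_psd _ (fun i => sub_nonneg.mpr (hgh i))

end rep


lemma coe_sum_smul {m : ℕ} {ι : Type*} [Fintype ι] (g : ι → EuclideanSpace ℂ (Fin m)) (c : ι → ℂ) :
    (⇑(∑ i, c i • g i) : Fin m → ℂ) = ∑ i, c i • (⇑(g i) : Fin m → ℂ) := by
  rw [WithLp.ofLp_sum]; rfl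

lemma orthonormal_dot {m : ℕ} {ι : Type*} [DecidableEq ι] (v : ι → EuclideanSpace ℂ (Fin m))
    (hv : Orthonormal ℂ v) (i j : ι) :
    star (⇑(v i) : Fin m → ℂ) ⬝ᵥ (⇑(v j) : Fin m → ℂ) = if i = j then 1 else 0 := by
  have h := orthonormal_iff_ite.mp hv i j
  rw [EuclideanSpace.inner_eq_star_dotProduct, dotProduct_comm] at h
  exact h

lemma sum_dot {m : ℕ} {ι : Type*} [Fintype ι] (f : ι → (Fin m → ℂ)) (v : Fin m → ℂ) :
    (∑ i, f i) ⬝ᵥ v = ∑ i, f i ⬝ᵥ v := by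
  simp only [dotProduct, Finset.sum_apply, Finset.sum_mul]
  rw [Finset.sum_comm]

lemma dot_sum {m : ℕ} {ι : Type*} [Fintype ι] (u : Fin m → ℂ) (g : ι → (Fin m → ℂ)) :
    u ⬝ᵥ (∑ i, g i) = ∑ i, u ⬝ᵥ g i := by
  simp only [dotProduct, Finset.sum_apply, Finset.mul_sum]
  rw [Finset.sum_comm]

lemma quad {m : ℕ} (M : Matrix (Fin m) (Fin m) ℂ) {ι : Type*} [Fintype ι] [DecidableEq ι]
    (w : ι → (Fin m → ℂ))
    (hw : ∀ i j, star (w i) ⬝ᵥ w j = if i = j then 1 else 0)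
    (μ : ι → ℝ) (hev : ∀ i, M *ᵥ w i = (μ i : ℂ) • w i) (c : ι → ℂ) :
    RCLike.re (star (∑ i, c i • w i) ⬝ᵥ (M *ᵥ ∑ i, c i • w i))
      = ∑ i, μ i * ‖c i‖^2 := by
  have h1 : M *ᵥ (∑ i, c i • w i) = ∑ i, (c i * (μ i : ℂ)) • w i := by
    rw [show M *ᵥ (∑ i, c i • w i) = M.mulVecLin (∑ i, c i • w i) from rfl, map_sum]
    refine Finset.sum_congr rfl fun i _ => ?_
    rw [_root_.map_smul, mulVecLin_apply, hev i, smul_smul]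
  rw [h1, star_sum]
  simp only [star_smul]
  rw [sum_dot]
  simp only [smul_dotProduct, dot_sum, dotProduct_smul, hw,
    smul_eq_mul, mul_ite, mul_one, mul_zero, Finset.sum_ite_eq, Finset.mem_univ, if_true]
  rw [map_sum]
  refine Finset.sum_congr rfl fun i _ => ?_
  have hz : star (c i) * (c i * (μ i : ℂ)) = ((μ i * ‖c i‖^2 : ℝ) : ℂ) := by
    rw [← mul_assoc, RCLike.star_def, RCLike.conj_mul]
    push_cast
    exact mul_comm _ _
  rw [hz]
  exact RCLike.ofReal_re _

lemma sum_normsq {m : ℕ} {ι : Type*} [Fintype ι] [DecidableEq ι]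
    (w : ι → (Fin m → ℂ))
    (hw : ∀ i j, star (w i) ⬝ᵥ w j = if i = j then 1 else 0) (c : ι → ℂ) :
    RCLike.re (star (∑ i, c i • w i) ⬝ᵥ (∑ i, c i • w i)) = ∑ i, ‖c i‖^2 := by
  have h := quad (1 : Matrix (Fin m) (Fin m) ℂ) w hw (fun _ => 1)
    (fun i => by rw [one_mulVec]; simp) c
  rw [one_mulVec] at h
  simpa using h

lemma eig_le {m : ℕ} {M : Matrix (Fin m) (Fin m) ℂ} (hM : M.IsHermitian) {c : ℝ}
    (hc : ((c:ℂ) • (1 : Matrix (Fin m) (Fin m) ℂ) - M).PosSemidef) (i : Fin m) :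
    hM.eigenvalues i ≤ c := by
  have h := hc.re_dotProduct_nonneg ⇑(hM.eigenvectorBasis i)
  have hvv : star (⇑(hM.eigenvectorBasis i) : Fin m → ℂ) ⬝ᵥ ⇑(hM.eigenvectorBasis i) = 1 := by
    simpa using orthonormal_dot _ hM.eigenvectorBasis.orthonormal i i
  rw [sub_mulVec, smul_mulVec, one_mulVec, hM.mulVec_eigenvectorBasis, dotProduct_sub,
    dotProduct_smul, dotProduct_smul, hvv] at h
  simp at h
  linarith

lemma le_eig {m : ℕ} {M : Matrix (Fin m) (Fin m) ℂ} (hM : M.IsHermitian) {c : ℝ}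
    (hc : (M - (c:ℂ) • (1 : Matrix (Fin m) (Fin m) ℂ)).PosSemidef) (i : Fin m) :
    c ≤ hM.eigenvalues i := by
  have h := hc.re_dotProduct_nonneg ⇑(hM.eigenvectorBasis i)
  have hvv : star (⇑(hM.eigenvectorBasis i) : Fin m → ℂ) ⬝ᵥ ⇑(hM.eigenvectorBasis i) = 1 := by
    simpa using orthonormal_dot _ hM.eigenvectorBasis.orthonormal i i
  rw [sub_mulVec, smul_mulVec, one_mulVec, hM.mulVec_eigenvectorBasis, dotProduct_sub,
    dotProduct_smul, dotProduct_smul, hvv] at h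
  simp at h
  linarith

lemma map_isHermitian {n m : ℕ} (Ψ : Matrix (Fin n) (Fin n) ℂ →ₗ[ℂ] Matrix (Fin m) (Fin m) ℂ)
    (hpos : ∀ X : Matrix (Fin n) (Fin n) ℂ, X.PosSemidef → (Ψ X).PosSemidef) (hunital : Ψ 1 = 1)
    {X : Matrix (Fin n) (Fin n) ℂ} (hX : X.IsHermitian) : (Ψ X).IsHermitian := by
  classical
  set c : ℝ := ∑ i, |hX.eigenvalues i| with hcdef
  have hc : ∀ i, 0 ≤ 1 * hX.eigenvalues i + c := by
    intro i
    have h1 : |hX.eigenvalues i| ≤ c :=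
      Finset.single_le_sum (f := fun i => |hX.eigenvalues i|)
        (fun _ _ => abs_nonneg _) (Finset.mem_univ i)
    have h2 := neg_abs_le (hX.eigenvalues i)
    linarith
  have hXc : (X + (c:ℂ) • 1).PosSemidef := by
    have h := rep_affine hX 1 c
    rw [show ((1:ℝ):ℂ) = (1:ℂ) by norm_num, one_smul] at h
    rw [h]
    exact conj_diag_psd _ hc
  have h3 : Ψ X = Ψ (X + (c:ℂ) • 1) - (c:ℂ) • 1 := by
    rw [map_add, LinearMap.map_smul, hunital]
    abel
  have h4 : ((c:ℂ) • (1 : Matrix (Fin m) (Fin m) ℂ)).IsHermitian := by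
    unfold Matrix.IsHermitian
    rw [conjTranspose_smul, conjTranspose_one, Complex.star_def, Complex.conj_ofReal]
  rw [h3]
  exact ((hpos _ hXc).isHermitian).sub h4

lemma weyl {m : ℕ} {B' C : Matrix (Fin m) (Fin m) ℂ} (hC : C.IsHermitian)
    (hBC : (C - B').PosSemidef)
    (v : Fin m → EuclideanSpace ℂ (Fin m)) (hv : Orthonormal ℂ v)
    (μ' : Fin m → ℝ) (hev : ∀ i, B' *ᵥ ⇑(v i) = (μ' i : ℂ) • ⇑(v i))
    (σ : Equiv.Perm (Fin m)) (t : ℝ) (k : Fin m)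
    (ht : ∀ j : Fin m, k ≤ j → t ≤ μ' (σ j)) :
    t ≤ hC.eigenvalues (Tuple.sort hC.eigenvalues k) := by
  classical
  set ν := hC.eigenvalues with hν
  set τ := Tuple.sort hC.eigenvalues with hτ
  set w := hC.eigenvectorBasis with hw
  -- subspaces
  set eE : ↥(Finset.Iic k) → EuclideanSpace ℂ (Fin m) := fun j => w (τ j) with heE
  set eF : ↥(Finset.Ici k) → EuclideanSpace ℂ (Fin m) := fun j => v (σ j) with heF
  have honE : Orthonormal ℂ eE :=
    hC.eigenvectorBasis.orthonormal.comp _ (τ.injective.comp Subtype.val_injective)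
  have honF : Orthonormal ℂ eF :=
    hv.comp _ (σ.injective.comp Subtype.val_injective)
  set E := Submodule.span ℂ (Set.range eE) with hE
  set F := Submodule.span ℂ (Set.range eF) with hF
  have hdimE : Module.finrank ℂ E = (k : ℕ) + 1 := by
    rw [hE, finrank_span_eq_card honE.linearIndependent]
    rw [Fintype.card_coe, Fin.card_Iic]
  have hdimF : Module.finrank ℂ F = m - (k : ℕ) := by
    rw [hF, finrank_span_eq_card honF.linearIndependent]
    rw [Fintype.card_coe, Fin.card_Ici]
  have hne : E ⊓ F ≠ ⊥ := by
    intro hbot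
    have hsum := Submodule.finrank_sup_add_finrank_inf_eq E F
    rw [hbot, finrank_bot, add_zero] at hsum
    have hle : Module.finrank ℂ ↥(E ⊔ F) ≤ m := by
      have := Submodule.finrank_le (E ⊔ F)
      simpa [finrank_euclideanSpace] using this
    have hk := k.isLt
    omega
  obtain ⟨x, hx, hx0⟩ := Submodule.exists_mem_ne_zero_of_ne_bot hne
  have hxE : x ∈ E := (Submodule.mem_inf.mp hx).1
  have hxF : x ∈ F := (Submodule.mem_inf.mp hx).2
  rw [hE, Submodule.mem_span_range_iff_exists_fun] at hxE
  rw [hF, Submodule.mem_span_range_iff_exists_fun] at hxF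
  obtain ⟨cE, hcE⟩ := hxE
  obtain ⟨cF, hcF⟩ := hxF
  -- dot products
  have hdotE : ∀ i j, star (⇑(eE i) : Fin m → ℂ) ⬝ᵥ ⇑(eE j) = if i = j then 1 else 0 :=
    orthonormal_dot _ honE
  have hdotF : ∀ i j, star (⇑(eF i) : Fin m → ℂ) ⬝ᵥ ⇑(eF j) = if i = j then 1 else 0 :=
    orthonormal_dot _ honF
  have hxcE : (⇑x : Fin m → ℂ) = ∑ j, cE j • ⇑(eE j) := by
    rw [← hcE, coe_sum_smul]
  have hxcF : (⇑x : Fin m → ℂ) = ∑ j, cF j • ⇑(eF j) := by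
    rw [← hcF, coe_sum_smul]
  -- norms agree
  have hnormE := sum_normsq (fun j => ⇑(eE j)) hdotE cE
  have hnormF := sum_normsq (fun j => ⇑(eF j)) hdotF cF
  rw [← hxcE] at hnormE
  rw [← hxcF] at hnormF
  set s : ℝ := RCLike.re (star (⇑x : Fin m → ℂ) ⬝ᵥ (⇑x : Fin m → ℂ)) with hs
  have hspos : 0 < s := by
    have hex : ∃ j, cE j ≠ 0 := by
      by_contra hall
      push_neg at hall
      apply hx0
      rw [← hcE]
      simp [hall]
    obtain ⟨j0, hj0⟩ := hex
    have h1 : (0:ℝ) < ‖cE j0‖^2 := pow_pos (norm_pos_iff.mpr hj0) 2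
    have h2 : ‖cE j0‖^2 ≤ ∑ j, ‖cE j‖^2 :=
      Finset.single_le_sum (f := fun j => ‖cE j‖^2) (fun _ _ => sq_nonneg _) (Finset.mem_univ _)
    rw [hnormE]
    linarith
  -- quadratic forms
  have hqC : RCLike.re (star (⇑x : Fin m → ℂ) ⬝ᵥ (C *ᵥ ⇑x)) = ∑ j : {x // x ∈ Finset.Iic k}, ν (τ ↑j) * ‖cE j‖^2 := by
    rw [hxcE]
    exact quad C _ hdotE (fun j => ν (τ (j:Fin m))) (fun j => hC.mulVec_eigenvectorBasis (τ (j:Fin m))) cE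
  have hqB : RCLike.re (star (⇑x : Fin m → ℂ) ⬝ᵥ (B' *ᵥ ⇑x)) = ∑ j : {x // x ∈ Finset.Ici k}, μ' (σ ↑j) * ‖cF j‖^2 := by
    rw [hxcF]
    exact quad B' _ hdotF (fun j => μ' (σ (j:Fin m))) (fun j => hev (σ (j:Fin m))) cF
  -- bounds
  have hmon : Monotone (ν ∘ τ) := Tuple.monotone_sort ν
  have hCub : RCLike.re (star (⇑x : Fin m → ℂ) ⬝ᵥ (C *ᵥ ⇑x)) ≤ ν (τ k) * s := by
    rw [hqC, hnormE, Finset.mul_sum]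
    refine Finset.sum_le_sum fun j _ => ?_
    have hjk : ν (τ (j:Fin m)) ≤ ν (τ k) := hmon (Finset.mem_Iic.mp j.2)
    have := sq_nonneg ‖cE j‖
    nlinarith
  have hBlb : t * s ≤ RCLike.re (star (⇑x : Fin m → ℂ) ⬝ᵥ (B' *ᵥ ⇑x)) := by
    rw [hqB, hnormF, Finset.mul_sum]
    refine Finset.sum_le_sum fun j _ => ?_
    have hjk : t ≤ μ' (σ (j:Fin m)) := ht _ (Finset.mem_Ici.mp j.2)
    have := sq_nonneg ‖cF j‖
    nlinarith
  have hmid : RCLike.re (star (⇑x : Fin m → ℂ) ⬝ᵥ (B' *ᵥ ⇑x))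
      ≤ RCLike.re (star (⇑x : Fin m → ℂ) ⬝ᵥ (C *ᵥ ⇑x)) := by
    have h := hBC.re_dotProduct_nonneg (⇑x : Fin m → ℂ)
    rw [sub_mulVec, dotProduct_sub, map_sub] at h
    linarith
  have : t * s ≤ ν (τ k) * s := by linarith
  exact le_of_mul_le_mul_right (by linarith) hspos



lemma line_le {ω Ω : ℝ} {f : ℝ → ℝ} (hmono : MonotoneOn f (Set.Icc ω Ω))
    (hconv : ConvexOn ℝ (Set.Icc ω Ω) f) {c d : ℝ}
    (hc : c ∈ Set.Icc ω Ω) (hd : d ∈ Set.Icc ω Ω) (hcd : c < d) :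
    ∃ a b : ℝ, 0 ≤ a ∧ (∀ x ∈ Set.Icc ω Ω, a * x + b ≤ f x) ∧
      a * c + b = f c - (f d - f c) ∧ a * d + b = f c := by
  have hfcd : f c ≤ f d := hmono hc hd hcd.le
  set a : ℝ := (f d - f c) / (d - c) with hadef
  have hdc : (0:ℝ) < d - c := by linarith
  have ha : 0 ≤ a := div_nonneg (by linarith) hdc.le
  have had : a * (d - c) = f d - f c := div_mul_cancel₀ _ (ne_of_gt hdc)
  refine ⟨a, f c - a * c - (f d - f c), ha, ?_, by ring, by linarith⟩
  intro x hx
  rcases le_or_gt x c with h1 | h1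
  · rcases eq_or_lt_of_le h1 with rfl | h1
    · linarith
    · have hs := hconv.slope_mono_adjacent hx hd h1 hcd
      have h2 : f c - f x ≤ a * (c - x) := by
        rw [hadef]
        have hcx : (0:ℝ) < c - x := by linarith
        calc f c - f x = ((f c - f x) / (c - x)) * (c - x) :=
              (div_mul_cancel₀ _ (ne_of_gt hcx)).symm
          _ ≤ ((f d - f c) / (d - c)) * (c - x) :=
              mul_le_mul_of_nonneg_right hs hcx.le
      linarith
  · rcases le_or_gt x d with h2 | h2
    · have hfx : f c ≤ f x := hmono hc hx h1.le
      have h3 : a * (x - c) ≤ a * (d - c) := by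
        apply mul_le_mul_of_nonneg_left (by linarith) ha
      linarith
    · have hs := hconv.slope_mono_adjacent hc hx hcd h2
      have hxd : (0:ℝ) < x - d := by linarith
      have h3 : a * (x - d) ≤ f x - f d := by
        rw [hadef]
        calc ((f d - f c) / (d - c)) * (x - d)
            ≤ ((f x - f d) / (x - d)) * (x - d) := mul_le_mul_of_nonneg_right hs hxd.le
          _ = f x - f d := div_mul_cancel₀ _ (ne_of_gt hxd)
      linarith

lemma approx_line {ω Ω : ℝ} {f : ℝ → ℝ} (hmono : MonotoneOn f (Set.Icc ω Ω))
    (hconv : ConvexOn ℝ (Set.Icc ω Ω) f) (hcont : ContinuousOn f (Set.Icc ω Ω))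
    {c : ℝ} (hc : c ∈ Set.Icc ω Ω) {ε : ℝ} (hε : 0 < ε) :
    ∃ a b : ℝ, 0 ≤ a ∧ (∀ x ∈ Set.Icc ω Ω, a * x + b ≤ f x) ∧ f c - ε ≤ a * c + b := by
  rcases eq_or_lt_of_le hc.2 with hcΩ | hcΩ
  · -- c = Ω
    rcases eq_or_lt_of_le hc.1 with hωc | hωc
    · -- ω = c = Ω
      refine ⟨0, f c, le_refl _, fun x hx => ?_, by linarith⟩
      have h1 : x ≤ c := by have := hx.2; rw [← hcΩ] at this; exact this
      have h2 : c ≤ x := by have := hx.1; rw [hωc] at this; exact this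
      have hx' : x = c := le_antisymm h1 h2
      rw [hx']; simp
    · -- ω < c = Ω : approximate from the left
      have hcontΩ : ContinuousWithinAt f (Set.Icc ω Ω) Ω := hcont Ω ⟨by linarith [hc.1], le_refl _⟩
      obtain ⟨δ, hδ, hδ'⟩ := Metric.continuousWithinAt_iff.mp hcontΩ ε hε
      set c' : ℝ := max ω (Ω - δ/2) with hc'def
      have hc'mem : c' ∈ Set.Icc ω Ω := by
        constructor
        · exact le_max_left _ _
        · apply max_le (by linarith [hc.1, hc.2]) (by linarith)
      have hc'lt : c' < Ω := by
        apply max_lt (by rw [← hcΩ]; exact hωc) (by linarith)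
      have hdist : dist c' Ω < δ := by
        rw [Real.dist_eq, abs_sub_lt_iff]
        constructor
        · linarith
        · have : Ω - δ/2 ≤ c' := le_max_right _ _
          linarith
      have hfc' : dist (f c') (f Ω) < ε := hδ' hc'mem hdist
      rw [Real.dist_eq, abs_sub_lt_iff] at hfc'
      obtain ⟨a, b, ha, hline, _, hvd⟩ := line_le hmono hconv hc'mem ⟨by linarith [hc.1], le_refl _⟩ hc'lt
      refine ⟨a, b, ha, hline, ?_⟩
      rw [hcΩ, hvd]
      linarith [hfc'.2]
  · -- c < Ω : approximate from the right
    have hcontc : ContinuousWithinAt f (Set.Icc ω Ω) c := hcont c hc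
    obtain ⟨δ, hδ, hδ'⟩ := Metric.continuousWithinAt_iff.mp hcontc ε hε
    set d : ℝ := min (c + δ/2) Ω with hddef
    have hdmem : d ∈ Set.Icc ω Ω := by
      constructor
      · apply le_min (by linarith [hc.1]) (by linarith [hc.1, hc.2])
      · exact min_le_right _ _
    have hcd : c < d := by
      apply lt_min (by linarith) hcΩ
    have hdist : dist d c < δ := by
      rw [Real.dist_eq, abs_sub_lt_iff]
      constructor
      · have : d ≤ c + δ/2 := min_le_left _ _
        linarith
      · linarith
    have hfd : dist (f d) (f c) < ε := hδ' hdmem hdist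
    rw [Real.dist_eq, abs_sub_lt_iff] at hfd
    obtain ⟨a, b, ha, hline, hvc, _⟩ := line_le hmono hconv hc hdmem hcd
    refine ⟨a, b, ha, hline, ?_⟩
    rw [hvc]
    linarith [hfd.1]


end UOPM

/-- If `A` is Hermitian with spectrum in `[ω, Ω]`, `f` is increasing, convex (and
continuous) on `[ω, Ω]` and `Ψ` is a unital positive linear map, then there is a
unitary `U` with `f(Ψ(A)) ≤ U Ψ(f(A)) U*` in the Loewner order. -/
theorem unitary_orbit_positive_map
    {n m : ℕ} (A : Matrix (Fin n) (Fin n) ℂ) (hA : A.IsHermitian) (ω Ω : ℝ)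
    (hspec : spectrum ℝ A ⊆ Set.Icc ω Ω)
    (f : ℝ → ℝ) (hmono : MonotoneOn f (Set.Icc ω Ω))
    (hconv : ConvexOn ℝ (Set.Icc ω Ω) f) (hcont : ContinuousOn f (Set.Icc ω Ω))
    (Ψ : Matrix (Fin n) (Fin n) ℂ →ₗ[ℂ] Matrix (Fin m) (Fin m) ℂ)
    (hpos : ∀ X : Matrix (Fin n) (Fin n) ℂ, X.PosSemidef → (Ψ X).PosSemidef)
    (hunital : Ψ 1 = 1) :
    ∃ U ∈ Matrix.unitaryGroup (Fin m) ℂ,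
      ((U : Matrix (Fin m) (Fin m) ℂ) * Ψ (cfc f A) * Uᴴ
        - cfc f (Ψ A)).PosSemidef := by
  classical
  have hcfcA : (cfc f A).IsHermitian := by
    rw [UOPM.rep_cfc hA f]; exact UOPM.conj_diag_isHermitian _ _
  have hB : (Ψ A).IsHermitian := UOPM.map_isHermitian Ψ hpos hunital hA
  have hC : (Ψ (cfc f A)).IsHermitian := UOPM.map_isHermitian Ψ hpos hunital hcfcA
  have hAeig : ∀ i, hA.eigenvalues i ∈ Set.Icc ω Ω := fun i =>
    hspec (hA.eigenvalues_mem_spectrum_real i)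
  -- bounds ω ≤ A ≤ Ω (as matrices)
  have hAub : ((Ω:ℂ) • (1 : Matrix (Fin n) (Fin n) ℂ) - A).PosSemidef := by
    have hpsd := UOPM.conj_sub_psd
      (Matrix.IsHermitian.eigenvectorUnitary hA : Matrix (Fin n) (Fin n) ℂ)
      (g := hA.eigenvalues) (h := fun i => 0 * hA.eigenvalues i + Ω)
      (fun i => by show hA.eigenvalues i ≤ 0 * hA.eigenvalues i + Ω
                   have := (hAeig i).2; linarith)
    rw [← UOPM.rep_affine hA 0 Ω, ← UOPM.rep_spec hA] at hpsd
    have e : (Ω:ℂ) • (1 : Matrix (Fin n) (Fin n) ℂ) - A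
        = ((0:ℝ):ℂ) • A + ((Ω:ℝ):ℂ) • 1 - A := by
      push_cast
      rw [zero_smul, zero_add]
    rw [e]
    exact hpsd
  have hAlb : (A - (ω:ℂ) • (1 : Matrix (Fin n) (Fin n) ℂ)).PosSemidef := by
    have hpsd := UOPM.conj_sub_psd
      (Matrix.IsHermitian.eigenvectorUnitary hA : Matrix (Fin n) (Fin n) ℂ)
      (g := fun i => 0 * hA.eigenvalues i + ω) (h := hA.eigenvalues)
      (fun i => by show 0 * hA.eigenvalues i + ω ≤ hA.eigenvalues i
                   have := (hAeig i).1; linarith)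
    rw [← UOPM.rep_affine hA 0 ω, ← UOPM.rep_spec hA] at hpsd
    have e : A - (ω:ℂ) • (1 : Matrix (Fin n) (Fin n) ℂ)
        = A - (((0:ℝ):ℂ) • A + ((ω:ℝ):ℂ) • 1) := by
      push_cast
      rw [zero_smul, zero_add]
    rw [e]
    exact hpsd
  have hBub : ((Ω:ℂ) • (1 : Matrix (Fin m) (Fin m) ℂ) - Ψ A).PosSemidef := by
    have h := hpos _ hAub
    rwa [map_sub, LinearMap.map_smul, hunital] at h
  have hBlb : (Ψ A - (ω:ℂ) • (1 : Matrix (Fin m) (Fin m) ℂ)).PosSemidef := by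
    have h := hpos _ hAlb
    rwa [map_sub, LinearMap.map_smul, hunital] at h
  have hBeig : ∀ i, hB.eigenvalues i ∈ Set.Icc ω Ω := fun i =>
    ⟨UOPM.le_eig hB hBlb i, UOPM.eig_le hB hBub i⟩
  set νB := hB.eigenvalues with hνB
  set σp := Tuple.sort νB with hσp
  set νC := hC.eigenvalues with hνC
  set τp := Tuple.sort νC with hτp
  -- key eigenvalue comparison
  have key : ∀ p : Fin m, f (νB (σp p)) ≤ νC (τp p) := by
    intro p
    refine le_of_forall_pos_le_add ?_
    intro ε hε
    obtain ⟨a, b, ha, hline, hval⟩ :=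
      UOPM.approx_line hmono hconv hcont (hBeig (σp p)) hε
    have hgap : ((cfc f A) - ((a:ℂ) • A + (b:ℂ) • 1)).PosSemidef := by
      have hpsd := UOPM.conj_sub_psd
        (Matrix.IsHermitian.eigenvectorUnitary hA : Matrix (Fin n) (Fin n) ℂ)
        (g := fun i => a * hA.eigenvalues i + b) (h := fun i => f (hA.eigenvalues i))
        (fun i => by show a * hA.eigenvalues i + b ≤ f (hA.eigenvalues i)
                     exact hline _ (hAeig i))
      rwa [← UOPM.rep_affine hA a b, ← UOPM.rep_cfc hA f] at hpsd
    have hCB' : ((Ψ (cfc f A)) - ((a:ℂ) • (Ψ A) + (b:ℂ) • 1)).PosSemidef := by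
      have h := hpos _ hgap
      rwa [map_sub, map_add, LinearMap.map_smul, LinearMap.map_smul, hunital] at h
    have hev : ∀ i, (((a:ℝ):ℂ) • (Ψ A) + ((b:ℝ):ℂ) • 1) *ᵥ ⇑(hB.eigenvectorBasis i)
        = (((a * νB i + b : ℝ)):ℂ) • ⇑(hB.eigenvectorBasis i) := by
      intro i
      rw [Matrix.add_mulVec, Matrix.smul_mulVec, Matrix.smul_mulVec,
        Matrix.one_mulVec, hB.mulVec_eigenvectorBasis]
      funext x
      simp only [Pi.add_apply, Pi.smul_apply, smul_eq_mul, Complex.real_smul]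
      push_cast
      ring
    have hmonB : Monotone (νB ∘ σp) := Tuple.monotone_sort νB
    have hW := UOPM.weyl hC hCB' (fun i => hB.eigenvectorBasis i)
      hB.eigenvectorBasis.orthonormal
      (fun i => a * νB i + b) hev σp (a * νB (σp p) + b) p
      (fun j hj => by
        have h1 : νB (σp p) ≤ νB (σp j) := hmonB hj
        show a * νB (σp p) + b ≤ a * νB (σp j) + b
        nlinarith)
    have hW' : a * νB (σp p) + b ≤ νC (τp p) := hW
    linarith
  -- construct the unitary
  set VB := (Matrix.IsHermitian.eigenvectorUnitary hB : Matrix (Fin m) (Fin m) ℂ) with hVB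
  set VC := (Matrix.IsHermitian.eigenvectorUnitary hC : Matrix (Fin m) (Fin m) ℂ) with hVC
  set W₁ := VB * UOPM.permMat σp.symm with hW₁def
  set W₂ := VC * UOPM.permMat τp.symm with hW₂def
  have hW₁ : W₁ ∈ Matrix.unitaryGroup (Fin m) ℂ :=
    mul_mem (Matrix.IsHermitian.eigenvectorUnitary hB).2 (UOPM.permMat_mem σp.symm)
  have hW₂ : W₂ ∈ Matrix.unitaryGroup (Fin m) ℂ :=
    mul_mem (Matrix.IsHermitian.eigenvectorUnitary hC).2 (UOPM.permMat_mem τp.symm)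
  refine ⟨W₁ * W₂ᴴ, ?_, ?_⟩
  · rw [← Matrix.star_eq_conjTranspose]
    exact mul_mem hW₁ (Unitary.star_mem hW₂)
  · have hd1 : cfc f (Ψ A) = W₁ * Matrix.diagonal (fun i => ((f (νB (σp i)) : ℝ):ℂ)) * W₁ᴴ := by
      rw [UOPM.rep_cfc hB f, ← UOPM.conj_perm VB σp (fun i => ((f (νB i) : ℝ):ℂ))]
      rfl
    have hd2 : Ψ (cfc f A) = W₂ * Matrix.diagonal (fun i => ((νC (τp i) : ℝ):ℂ)) * W₂ᴴ := by
      rw [UOPM.rep_spec hC, ← UOPM.conj_perm VC τp (fun i => ((νC i : ℝ):ℂ))]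
      rfl
    have h22 : W₂ᴴ * W₂ = 1 := by
      have h := Matrix.mem_unitaryGroup_iff'.mp hW₂
      rwa [Matrix.star_eq_conjTranspose] at h
    have hUCU : (W₁ * W₂ᴴ) * Ψ (cfc f A) * (W₁ * W₂ᴴ)ᴴ
        = W₁ * Matrix.diagonal (fun i => ((νC (τp i) : ℝ):ℂ)) * W₁ᴴ := by
      rw [hd2]
      rw [show (W₁ * W₂ᴴ)ᴴ = W₂ * W₁ᴴ from by
        rw [Matrix.conjTranspose_mul, Matrix.conjTranspose_conjTranspose]]
      simp only [Matrix.mul_assoc]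
      rw [← Matrix.mul_assoc W₂ᴴ W₂, h22, Matrix.one_mul,
        ← Matrix.mul_assoc W₂ᴴ W₂, h22, Matrix.one_mul]
    rw [hUCU, hd1]
    exact UOPM.conj_sub_psd W₁ (g := fun i => f (νB (σp i))) (h := fun i => νC (τp i)) key
end

section
/- Let A_1, ..., A_k ∈ M_n be Hermitian with spectra in [ω, Ω], f increasing and convex on [ω, Ω], and Φ_1, ..., Φ_k : M_n → M_m positive linear maps with ∑_{i=1}^k Φ_i(I_n) = I_m. Then there exists a unitary U ∈ M_m such that f(∑_{i=1}^k Φ_i(A_i)) ≤ U (∑_{i=1}^k Φ_i(f(A_i))) U*. -/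
open scoped ComplexOrder
open scoped Matrix

section Aux
open Matrix
variable {m : ℕ}

/-- conjugation of a real diagonal by a matrix -/
noncomputable def conjDiag (W : Matrix (Fin m) (Fin m) ℂ) (c : Fin m → ℝ) :
    Matrix (Fin m) (Fin m) ℂ :=
  W * Matrix.diagonal (fun i => (c i : ℂ)) * Wᴴ

lemma conjDiag_sub (W : Matrix (Fin m) (Fin m) ℂ) (c c' : Fin m → ℝ) :
    conjDiag W c' - conjDiag W c = conjDiag W (c' - c) := by
  unfold conjDiag
  rw [← Matrix.sub_mul, ← Matrix.mul_sub, Matrix.diagonal_sub]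
  congr 1
  ext i
  simp

lemma conjDiag_add (W : Matrix (Fin m) (Fin m) ℂ) (c c' : Fin m → ℝ) :
    conjDiag W c + conjDiag W c' = conjDiag W (c + c') := by
  unfold conjDiag
  rw [← Matrix.add_mul, ← Matrix.mul_add, Matrix.diagonal_add]
  congr 1; ext i; simp

lemma conjDiag_smul (W : Matrix (Fin m) (Fin m) ℂ) (c : Fin m → ℝ) (a : ℝ) :
    (a : ℂ) • conjDiag W c = conjDiag W (a • c) := by
  unfold conjDiag
  rw [← smul_mul_assoc, ← mul_smul_comm, ← Matrix.diagonal_smul]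
  have : ((a:ℂ) • fun i => ((c i):ℂ)) = fun i => (((a • c) i : ℝ) : ℂ) := by
    ext i; push_cast; simp
  rw [this]

lemma conjDiag_one {W : Matrix (Fin m) (Fin m) ℂ} (hW : W * Wᴴ = 1) (r : ℝ) :
    conjDiag W (fun _ => r) = (r : ℂ) • 1 := by
  unfold conjDiag
  rw [← Matrix.smul_one_eq_diagonal, mul_smul_comm, smul_mul_assoc, Matrix.mul_one, hW]

lemma conjDiag_psd (W : Matrix (Fin m) (Fin m) ℂ) {c : Fin m → ℝ} (hc : ∀ i, 0 ≤ c i) :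
    (conjDiag W c).PosSemidef := by
  refine Matrix.PosSemidef.mul_mul_conjTranspose_same ?_ W
  refine Matrix.posSemidef_diagonal_iff.mpr fun i => ?_
  rw [Complex.le_def]
  simpa using hc i

lemma conjDiag_isHermitian (W : Matrix (Fin m) (Fin m) ℂ) (c : Fin m → ℝ) :
    (conjDiag W c).IsHermitian := by
  unfold Matrix.IsHermitian conjDiag
  rw [Matrix.conjTranspose_mul, Matrix.conjTranspose_mul, conjTranspose_conjTranspose,
    Matrix.diagonal_conjTranspose, Matrix.mul_assoc]
  congr 2
  ext i j
  simp [Matrix.diagonal, Complex.star_def, Complex.conj_ofReal]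

lemma psd_re_nonneg {M : Matrix (Fin m) (Fin m) ℂ} (hM : M.PosSemidef) (x : Fin m → ℂ) :
    0 ≤ (star x ⬝ᵥ M *ᵥ x).re := by
  have := hM.dotProduct_mulVec_nonneg x
  have h := (Complex.le_def.mp this).1
  simpa using h

lemma quad_sub (M N : Matrix (Fin m) (Fin m) ℂ) (x : Fin m → ℂ) :
    (star x ⬝ᵥ (M - N) *ᵥ x).re = (star x ⬝ᵥ M *ᵥ x).re - (star x ⬝ᵥ N *ᵥ x).re := by
  rw [Matrix.sub_mulVec, dotProduct_sub, Complex.sub_re]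

lemma quad_conj (W : Matrix (Fin m) (Fin m) ℂ) (c : Fin m → ℝ) (x : Fin m → ℂ) :
    (star x ⬝ᵥ (conjDiag W c) *ᵥ x).re
      = ∑ i, c i * Complex.normSq ((Wᴴ *ᵥ x) i) := by
  unfold conjDiag
  set y := Wᴴ *ᵥ x with hy
  have h1 : (W * Matrix.diagonal (fun i => (c i : ℂ)) * Wᴴ) *ᵥ x
      = W *ᵥ (Matrix.diagonal (fun i => (c i : ℂ)) *ᵥ y) := by
    rw [← mulVec_mulVec, ← mulVec_mulVec]
  rw [h1, dotProduct_mulVec]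
  have h2 : star x ᵥ* W = star y := by
    rw [hy, star_mulVec, conjTranspose_conjTranspose]
  rw [h2]
  simp only [mulVec_diagonal, dotProduct, Pi.star_apply]
  rw [Complex.re_sum]
  congr 1; ext i
  have : (star (y i) : ℂ) * ((c i : ℂ) * y i) = (c i : ℂ) * (Complex.normSq (y i) : ℂ) := by
    rw [Complex.star_def, mul_comm ((starRingEnd ℂ) (y i)), mul_assoc, Complex.mul_conj]
  rw [this]
  simp

lemma quad_one_s13 (x : Fin m → ℂ) :
    (star x ⬝ᵥ (1 : Matrix (Fin m) (Fin m) ℂ) *ᵥ x).re = ∑ i, Complex.normSq (x i) := by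
  rw [Matrix.one_mulVec]
  simp only [dotProduct, Pi.star_apply]
  rw [Complex.re_sum]
  congr 1; ext i
  simp [Complex.star_def, Complex.mul_re, Complex.conj_re, Complex.conj_im, Complex.normSq_apply]

lemma sum_normSq_single (c : Fin m → ℝ) (j : Fin m) :
    ∑ i, c i * Complex.normSq ((Pi.single j (1:ℂ) : Fin m → ℂ) i) = c j := by
  rw [Finset.sum_eq_single j]
  · simp
  · intro i _ hij
    simp [Pi.single_apply, hij]
  · simp

lemma conj_diag_perm (V : Matrix (Fin m) (Fin m) ℂ) (σ : Equiv.Perm (Fin m)) (c : Fin m → ℂ) :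
    V * Matrix.diagonal c * Vᴴ
      = (V.submatrix id σ) * Matrix.diagonal (c ∘ σ) * (V.submatrix id σ)ᴴ := by
  rw [conjTranspose_submatrix, ← submatrix_diagonal_equiv c σ]
  have h1 : V.submatrix id ⇑σ * (Matrix.diagonal c).submatrix ⇑σ ⇑σ
      = (V * Matrix.diagonal c).submatrix id ⇑σ := by
    rw [← submatrix_mul_equiv V (Matrix.diagonal c) id σ ⇑σ]
  rw [h1]
  have h2 : (V * Matrix.diagonal c).submatrix id ⇑σ * Vᴴ.submatrix ⇑σ id
      = (V * Matrix.diagonal c * Vᴴ).submatrix id id := by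
    rw [← submatrix_mul_equiv (V * Matrix.diagonal c) Vᴴ id σ id]
  rw [h2, submatrix_id_id]

lemma exists_sorted_spectral (M : Matrix (Fin m) (Fin m) ℂ) (hM : M.IsHermitian) :
    ∃ (W : Matrix (Fin m) (Fin m) ℂ) (d : Fin m → ℝ),
      W ∈ Matrix.unitaryGroup (Fin m) ℂ ∧ Monotone d ∧ (∀ i, d i ∈ spectrum ℝ M) ∧
      (∀ g : ℝ → ℝ, cfc g M = conjDiag W (fun i => g (d i))) ∧
      M = conjDiag W d := by
  set σ := Tuple.sort hM.eigenvalues with hσ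
  set V := (hM.eigenvectorUnitary : Matrix (Fin m) (Fin m) ℂ) with hV
  have hVstar : star V = Vᴴ := rfl
  have hVV : Vᴴ * V = 1 := by
    rw [← hVstar]; exact Matrix.mem_unitaryGroup_iff'.mp hM.eigenvectorUnitary.2
  refine ⟨V.submatrix id σ, hM.eigenvalues ∘ σ, ?_, Tuple.monotone_sort _, ?_, ?_, ?_⟩
  · rw [Matrix.mem_unitaryGroup_iff']
    have hs : star (V.submatrix id ⇑σ) = Vᴴ.submatrix ⇑σ id := by
      rw [Matrix.star_eq_conjTranspose, conjTranspose_submatrix]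
    rw [hs, ← submatrix_mul Vᴴ V ⇑σ id ⇑σ Function.bijective_id, hVV, submatrix_one_equiv σ]
  · exact fun i => hM.eigenvalues_mem_spectrum_real _
  · intro g
    rw [hM.cfc_eq g]
    have h0 : hM.cfc g = V * Matrix.diagonal (RCLike.ofReal ∘ g ∘ hM.eigenvalues) * Vᴴ := rfl
    rw [h0, conj_diag_perm V σ (RCLike.ofReal ∘ g ∘ hM.eigenvalues)]
    rfl
  · conv_lhs => rw [hM.spectral_theorem]
    rw [Unitary.conjStarAlgAut_apply, ← hV, hVstar, conj_diag_perm V σ (RCLike.ofReal ∘ hM.eigenvalues)]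
    rfl

lemma exists_common_vec_s13 (W₁ W₂ : Matrix (Fin m) (Fin m) ℂ) (j : Fin m) :
    ∃ x : Fin m → ℂ, x ≠ 0 ∧ (∀ i, i < j → (W₁ *ᵥ x) i = 0) ∧ (∀ i, j < i → (W₂ *ᵥ x) i = 0) := by
  classical
  set L₁ : (Fin m → ℂ) →ₗ[ℂ] ({i : Fin m // i < j} → ℂ) :=
    (LinearMap.funLeft ℂ ℂ Subtype.val).comp (Matrix.mulVecLin W₁) with hL₁
  set L₂ : (Fin m → ℂ) →ₗ[ℂ] ({i : Fin m // j < i} → ℂ) :=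
    (LinearMap.funLeft ℂ ℂ Subtype.val).comp (Matrix.mulVecLin W₂) with hL₂
  set S := LinearMap.ker L₁
  set T := LinearMap.ker L₂
  have hcard1 : Fintype.card {i : Fin m // i < j} = (j : ℕ) := by
    rw [Fintype.card_subtype, Finset.filter_gt_eq_Iio, Fin.card_Iio]
  have hcard2 : Fintype.card {i : Fin m // j < i} = m - 1 - (j : ℕ) := by
    rw [Fintype.card_subtype, Finset.filter_lt_eq_Ioi, Fin.card_Ioi]
  have hdom : Module.finrank ℂ (Fin m → ℂ) = m := by
    simp [Module.finrank_fintype_fun_eq_card]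
  have h1 : Module.finrank ℂ (LinearMap.range L₁) + Module.finrank ℂ S = m := by
    have := LinearMap.finrank_range_add_finrank_ker L₁; rwa [hdom] at this
  have h2 : Module.finrank ℂ (LinearMap.range L₂) + Module.finrank ℂ T = m := by
    have := LinearMap.finrank_range_add_finrank_ker L₂; rwa [hdom] at this
  have hr1 : Module.finrank ℂ (LinearMap.range L₁) ≤ (j : ℕ) := by
    have := Submodule.finrank_le (LinearMap.range L₁)
    rwa [Module.finrank_fintype_fun_eq_card, hcard1] at this
  have hr2 : Module.finrank ℂ (LinearMap.range L₂) ≤ m - 1 - (j : ℕ) := by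
    have := Submodule.finrank_le (LinearMap.range L₂)
    rwa [Module.finrank_fintype_fun_eq_card, hcard2] at this
  have hsup : Module.finrank ℂ ↥(S ⊔ T) ≤ m := by
    have := Submodule.finrank_le (S ⊔ T); rwa [hdom] at this
  have hsum := Submodule.finrank_sup_add_finrank_inf_eq S T
  have hj : (j : ℕ) < m := j.2
  have hpos : 0 < Module.finrank ℂ ↥(S ⊓ T) := by omega
  have hne : S ⊓ T ≠ ⊥ := by
    intro h; rw [h] at hpos; simp [finrank_bot] at hpos
  obtain ⟨x, hx, hx0⟩ := Submodule.exists_mem_ne_zero_of_ne_bot hne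
  obtain ⟨hxS, hxT⟩ := Submodule.mem_inf.mp hx
  refine ⟨x, hx0, ?_, ?_⟩
  · intro i hi
    have := LinearMap.mem_ker.mp hxS
    exact congrFun this ⟨i, hi⟩
  · intro i hi
    have := LinearMap.mem_ker.mp hxT
    exact congrFun this ⟨i, hi⟩

lemma exists_minorant {ω Ω : ℝ} {f : ℝ → ℝ} (hmono : MonotoneOn f (Set.Icc ω Ω))
    (hconv : ConvexOn ℝ (Set.Icc ω Ω) f) (hcont : ContinuousOn f (Set.Icc ω Ω))
    {t : ℝ} (ht : t ∈ Set.Icc ω Ω) {ε : ℝ} (hε : 0 < ε) :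
    ∃ a b : ℝ, 0 ≤ a ∧ (∀ u ∈ Set.Icc ω Ω, a * u + b ≤ f u) ∧ f t - ε ≤ a * t + b := by
  rcases eq_or_lt_of_le ht.1 with h | hωt
  · subst h
    exact ⟨0, f ω, le_refl 0,
      fun u hu => by simpa using hmono ht hu hu.1,
      by simp; linarith⟩
  · obtain ⟨δ, hδ, hδ'⟩ := Metric.continuousWithinAt_iff.mp (hcont t ht) ε hε
    set s := max ω (t - δ/2) with hs
    have hst : s < t := max_lt hωt (by linarith)
    have hsmem : s ∈ Set.Icc ω Ω := ⟨le_max_left _ _, max_le (le_trans ht.1 ht.2) (by linarith [ht.2])⟩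
    have hdist : dist s t < δ := by
      rw [Real.dist_eq, abs_of_nonpos (by linarith)]
      have : t - δ/2 ≤ s := le_max_right _ _
      linarith
    have hfs : |f s - f t| < ε := by
      have := hδ' hsmem hdist
      rwa [Real.dist_eq] at this
    have hfs' : f t - ε ≤ f s := by
      rcases abs_lt.mp hfs with ⟨h1, _⟩; linarith
    have hfsle : f s ≤ f t := hmono hsmem ht (le_of_lt hst)
    set a := (f t - f s) / (t - s) with ha
    have hts : 0 < t - s := by linarith
    have ha0 : 0 ≤ a := div_nonneg (by linarith) (le_of_lt hts)
    have haa : a * (t - s) = f t - f s := by rw [ha, div_mul_cancel₀ _ hts.ne']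
    refine ⟨a, f s - a * t, ha0, ?_, by linarith⟩
    intro u hu
    rcases lt_trichotomy u s with hus | hus | hus
    · have hsl := hconv.slope_mono_adjacent hu ht hus hst
      rw [div_le_div_iff₀ (by linarith) hts] at hsl
      nlinarith [haa, mul_le_mul_of_nonneg_left (sub_le_sub_right (le_max_left ω (t - δ/2)) u) ha0]
    · subst hus
      nlinarith [haa]
    · rcases le_or_gt u t with hut | hut
      · have : f s ≤ f u := hmono hsmem hu (le_of_lt hus)
        nlinarith [haa]
      · have hsl := hconv.slope_mono_adjacent hsmem hu hst hut
        rw [div_le_div_iff₀ hts (by linarith)] at hsl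
        nlinarith [haa]

end Aux

section Main
open Matrix

/-- If `A_1, …, A_k` are Hermitian with spectra in `[ω, Ω]`, `f` is increasing, convex
(and continuous) on `[ω, Ω]` and `Φ_1, …, Φ_k` are positive linear maps with
`∑ Φ_i(1) = 1`, then there is a unitary `U` with
`f(∑ Φ_i(A_i)) ≤ U (∑ Φ_i(f(A_i))) U*` in the Loewner order. -/
theorem unitary_orbit_sum_positive_maps
    {n m k : ℕ} (A : Fin k → Matrix (Fin n) (Fin n) ℂ)
    (hA : ∀ i, (A i).IsHermitian) (ω Ω : ℝ)
    (hspec : ∀ i, spectrum ℝ (A i) ⊆ Set.Icc ω Ω)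
    (f : ℝ → ℝ) (hmono : MonotoneOn f (Set.Icc ω Ω))
    (hconv : ConvexOn ℝ (Set.Icc ω Ω) f) (hcont : ContinuousOn f (Set.Icc ω Ω))
    (Φ : Fin k → (Matrix (Fin n) (Fin n) ℂ →ₗ[ℂ] Matrix (Fin m) (Fin m) ℂ))
    (hpos : ∀ i, ∀ X : Matrix (Fin n) (Fin n) ℂ, X.PosSemidef → (Φ i X).PosSemidef)
    (hunital : ∑ i, Φ i 1 = 1) :
    ∃ U ∈ Matrix.unitaryGroup (Fin m) ℂ,
      ((U : Matrix (Fin m) (Fin m) ℂ) * (∑ i, Φ i (cfc f (A i))) * Uᴴ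
        - cfc f (∑ i, Φ i (A i))).PosSemidef := by
  classical
  -- spectral data for each A i
  choose WA dA hWAu hdAmono hdAspec hcfcA hrepA using
    fun i => exists_sorted_spectral (A i) (hA i)
  have hWA1 : ∀ i, WA i * (WA i)ᴴ = 1 := by
    intro i
    have := Matrix.mem_unitaryGroup_iff.mp (hWAu i)
    rwa [Matrix.star_eq_conjTranspose] at this
  have hdAIcc : ∀ i t, dA i t ∈ Set.Icc ω Ω := fun i t => hspec i (hdAspec i t)
  -- positivity of sums
  have hsumpsd : ∀ (X : Fin k → Matrix (Fin n) (Fin n) ℂ),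
      (∀ i, (X i).PosSemidef) → (∑ i, Φ i (X i)).PosSemidef := by
    intro X hX
    exact Finset.sum_induction _ _ (fun a b ha hb => ha.add hb) Matrix.PosSemidef.zero
      (fun i _ => hpos i _ (hX i))
  -- Hermitian images
  have hΦherm : ∀ i (H : Matrix (Fin n) (Fin n) ℂ), H.IsHermitian → (Φ i H).IsHermitian := by
    intro i H hH
    obtain ⟨W, d, hWu, -, -, -, hrep⟩ := exists_sorted_spectral H hH
    have hsplit : H = conjDiag W (fun t => max (d t) 0) - conjDiag W (fun t => max (- d t) 0) := by
      have hfun : ((fun t => max (d t) 0) - (fun t => max (- d t) 0)) = d := by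
        funext t
        rw [Pi.sub_apply]
        rcases le_total 0 (d t) with h | h
        · rw [max_eq_left h, max_eq_right (by linarith)]; ring
        · rw [max_eq_right h, max_eq_left (by linarith)]; ring
      rw [conjDiag_sub, hfun, hrep]
    rw [hsplit, map_sub]
    exact Matrix.IsHermitian.sub
      (hpos i _ (conjDiag_psd W (fun t => le_max_right _ _))).1
      (hpos i _ (conjDiag_psd W (fun t => le_max_right _ _))).1
  set B := ∑ i, Φ i (A i) with hBdef
  set C := ∑ i, Φ i (cfc f (A i)) with hCdef
  have hB : B.IsHermitian := by
    rw [hBdef]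
    show (∑ i, Φ i (A i))ᴴ = ∑ i, Φ i (A i)
    rw [Matrix.conjTranspose_sum]
    exact Finset.sum_congr rfl fun i _ => hΦherm i _ (hA i)
  have hfAherm : ∀ i, (cfc f (A i)).IsHermitian := by
    intro i; rw [hcfcA i f]; exact conjDiag_isHermitian _ _
  have hC : C.IsHermitian := by
    rw [hCdef]
    show (∑ i, Φ i (cfc f (A i)))ᴴ = ∑ i, Φ i (cfc f (A i))
    rw [Matrix.conjTranspose_sum]
    exact Finset.sum_congr rfl fun i _ => hΦherm i _ (hfAherm i)
  obtain ⟨WB, d, hWBu, hdmono, hdspecB, hcfcB, hrepB⟩ := exists_sorted_spectral B hB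
  obtain ⟨WC, e, hWCu, hemono, -, -, hrepC⟩ := exists_sorted_spectral C hC
  have hWB1 : WB * WBᴴ = 1 := by
    have := Matrix.mem_unitaryGroup_iff.mp hWBu
    rwa [Matrix.star_eq_conjTranspose] at this
  have hWB1' : WBᴴ * WB = 1 := by
    have := Matrix.mem_unitaryGroup_iff'.mp hWBu
    rwa [Matrix.star_eq_conjTranspose] at this
  have hWC1 : WC * WCᴴ = 1 := by
    have := Matrix.mem_unitaryGroup_iff.mp hWCu
    rwa [Matrix.star_eq_conjTranspose] at this
  have hWC1' : WCᴴ * WC = 1 := by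
    have := Matrix.mem_unitaryGroup_iff'.mp hWCu
    rwa [Matrix.star_eq_conjTranspose] at this
  -- combination identity
  have hcombo : ∀ a b : ℝ, C - ((a:ℂ) • B + (b:ℂ) • 1)
      = ∑ i, Φ i (cfc f (A i) - ((a:ℂ) • (A i) + (b:ℂ) • (1 : Matrix (Fin n) (Fin n) ℂ))) := by
    intro a b
    have h1 : ∀ i ∈ Finset.univ,
        Φ i (cfc f (A i) - ((a:ℂ) • (A i) + (b:ℂ) • (1 : Matrix (Fin n) (Fin n) ℂ)))
        = Φ i (cfc f (A i)) - ((a:ℂ) • (Φ i (A i)) + (b:ℂ) • (Φ i 1)) := by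
      intro i _; simp only [map_sub, map_add, _root_.map_smul]
    rw [Finset.sum_congr rfl h1, Finset.sum_sub_distrib, Finset.sum_add_distrib,
      ← Finset.smul_sum, ← Finset.smul_sum, hunital, hBdef, hCdef]
  have hcombo2 : B - (ω:ℂ) • 1 = ∑ i, Φ i (A i - (ω:ℂ) • (1 : Matrix (Fin n) (Fin n) ℂ)) := by
    have h1 : ∀ i ∈ Finset.univ,
        Φ i (A i - (ω:ℂ) • (1 : Matrix (Fin n) (Fin n) ℂ))
        = Φ i (A i) - (ω:ℂ) • (Φ i 1) := by
      intro i _; simp only [map_sub, _root_.map_smul]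
    rw [Finset.sum_congr rfl h1, Finset.sum_sub_distrib, ← Finset.smul_sum, hunital, hBdef]
  have hcombo3 : (Ω:ℂ) • 1 - B = ∑ i, Φ i ((Ω:ℂ) • (1 : Matrix (Fin n) (Fin n) ℂ) - A i) := by
    have h1 : ∀ i ∈ Finset.univ,
        Φ i ((Ω:ℂ) • (1 : Matrix (Fin n) (Fin n) ℂ) - A i)
        = (Ω:ℂ) • (Φ i 1) - Φ i (A i) := by
      intro i _; simp only [map_sub, _root_.map_smul]
    rw [Finset.sum_congr rfl h1, Finset.sum_sub_distrib, ← Finset.smul_sum, hunital, hBdef]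
  -- PSD bounds on B
  have hBlow : (B - (ω:ℂ) • 1).PosSemidef := by
    rw [hcombo2]
    refine hsumpsd _ fun i => ?_
    have : A i - (ω:ℂ) • (1 : Matrix (Fin n) (Fin n) ℂ)
        = conjDiag (WA i) (dA i - fun _ => ω) := by
      rw [← conjDiag_sub, ← hrepA i, conjDiag_one (hWA1 i)]
    rw [this]
    exact conjDiag_psd _ fun t => by
      have := (hdAIcc i t).1; simp [sub_nonneg]; linarith
  have hBup : ((Ω:ℂ) • 1 - B).PosSemidef := by
    rw [hcombo3]
    refine hsumpsd _ fun i => ?_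
    have : (Ω:ℂ) • (1 : Matrix (Fin n) (Fin n) ℂ) - A i
        = conjDiag (WA i) ((fun _ => Ω) - dA i) := by
      rw [← conjDiag_sub, ← hrepA i, conjDiag_one (hWA1 i)]
    rw [this]
    exact conjDiag_psd _ fun t => by
      have := (hdAIcc i t).2; simp [sub_nonneg]; linarith
  -- eigenvalues of B are in [ω, Ω]
  have hdIcc : ∀ j, d j ∈ Set.Icc ω Ω := by
    intro j
    set x : Fin m → ℂ := WB *ᵥ Pi.single j 1 with hx
    have hy : WBᴴ *ᵥ x = Pi.single j 1 := by
      rw [hx, Matrix.mulVec_mulVec, hWB1', Matrix.one_mulVec]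
    have hqB : (star x ⬝ᵥ B *ᵥ x).re = d j := by
      conv_lhs => rw [hrepB]
      rw [quad_conj, hy, sum_normSq_single]
    have hq1' : (star x ⬝ᵥ ((ω:ℂ) • (1 : Matrix (Fin m) (Fin m) ℂ)) *ᵥ x).re = ω := by
      rw [← conjDiag_one hWB1, quad_conj, hy, sum_normSq_single]
    have hq1'' : (star x ⬝ᵥ ((Ω:ℂ) • (1 : Matrix (Fin m) (Fin m) ℂ)) *ᵥ x).re = Ω := by
      rw [← conjDiag_one hWB1, quad_conj, hy, sum_normSq_single]
    constructor
    · have := psd_re_nonneg hBlow x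
      rw [quad_sub, hqB, hq1'] at this
      linarith
    · have := psd_re_nonneg hBup x
      rw [quad_sub, hqB, hq1''] at this
      linarith
  -- key eigenvalue comparison
  have hkey : ∀ j, f (d j) ≤ e j := by
    intro j
    refine le_of_forall_pos_le_add fun ε hε => ?_
    obtain ⟨a, b, ha0, hminor, hval⟩ := exists_minorant hmono hconv hcont (hdIcc j) hε
    -- PSD of C - (aB + b)
    have hCab : (C - ((a:ℂ) • B + (b:ℂ) • 1)).PosSemidef := by
      rw [hcombo a b]
      refine hsumpsd _ fun i => ?_
      have hid : (a:ℂ) • (A i) + (b:ℂ) • (1 : Matrix (Fin n) (Fin n) ℂ)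
          = conjDiag (WA i) (a • dA i + fun _ => b) := by
        rw [← conjDiag_add, ← conjDiag_smul, ← hrepA i, conjDiag_one (hWA1 i)]
      rw [hcfcA i f, hid, conjDiag_sub]
      refine conjDiag_psd _ fun t => ?_
      have := hminor (dA i t) (hdAIcc i t)
      simp only [Pi.sub_apply, Pi.add_apply, Pi.smul_apply, smul_eq_mul]
      linarith
    obtain ⟨x, hx0, hxB, hxC⟩ := exists_common_vec_s13 WBᴴ WCᴴ j
    set y := WBᴴ *ᵥ x with hydef
    set z := WCᴴ *ᵥ x with hzdef
    set Sy := ∑ i, Complex.normSq (y i) with hSydef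
    set Sz := ∑ i, Complex.normSq (z i) with hSzdef
    have hq1B : (star x ⬝ᵥ (1 : Matrix (Fin m) (Fin m) ℂ) *ᵥ x).re = Sy := by
      have h1 : (1 : Matrix (Fin m) (Fin m) ℂ) = conjDiag WB (fun _ => (1:ℝ)) := by
        rw [conjDiag_one hWB1]; simp
      conv_lhs => rw [h1]
      rw [quad_conj]; simp [hSydef, hydef]
    have hq1C : (star x ⬝ᵥ (1 : Matrix (Fin m) (Fin m) ℂ) *ᵥ x).re = Sz := by
      have h1 : (1 : Matrix (Fin m) (Fin m) ℂ) = conjDiag WC (fun _ => (1:ℝ)) := by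
        rw [conjDiag_one hWC1]; simp
      conv_lhs => rw [h1]
      rw [quad_conj]; simp [hSzdef, hzdef]
    have hSyz : Sy = Sz := by rw [← hq1B, hq1C]
    have hSpos : 0 < Sy := by
      rw [← hq1B, quad_one_s13]
      obtain ⟨i, hi⟩ := Function.ne_iff.mp hx0
      exact Finset.sum_pos' (fun i _ => Complex.normSq_nonneg _)
        ⟨i, Finset.mem_univ i, Complex.normSq_pos.mpr hi⟩
    -- quad of C
    have hqC : (star x ⬝ᵥ C *ᵥ x).re ≤ e j * Sy := by
      conv_lhs => rw [hrepC]
      rw [quad_conj, hSyz]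
      rw [hSzdef, Finset.mul_sum]
      refine Finset.sum_le_sum fun i _ => ?_
      rcases le_or_gt i j with hij | hij
      · exact mul_le_mul_of_nonneg_right (hemono hij) (Complex.normSq_nonneg _)
      · rw [← hzdef, hxC i hij]
        simp
    -- quad of aB + b
    have hqAB : (a * d j + b) * Sy ≤ (star x ⬝ᵥ ((a:ℂ) • B + (b:ℂ) • 1) *ᵥ x).re := by
      have hid : (a:ℂ) • B + (b:ℂ) • (1 : Matrix (Fin m) (Fin m) ℂ)
          = conjDiag WB (a • d + fun _ => b) := by
        rw [← conjDiag_add, ← conjDiag_smul, ← hrepB, conjDiag_one hWB1]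
      rw [hid, quad_conj, hSydef, Finset.mul_sum]
      refine Finset.sum_le_sum fun i _ => ?_
      rcases lt_or_ge i j with hij | hij
      · rw [← hydef, hxB i hij]
        simp
      · have h2 : a * d j + b ≤ a * d i + b := by
          have hdd := hdmono hij
          nlinarith
        have h3 : (a • d + fun (_ : Fin m) => b) i = a * d i + b := rfl
        rw [h3]
        exact mul_le_mul_of_nonneg_right h2 (Complex.normSq_nonneg _)
    have hdiffpos : (star x ⬝ᵥ ((a:ℂ) • B + (b:ℂ) • 1) *ᵥ x).re ≤ (star x ⬝ᵥ C *ᵥ x).re := by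
      have := psd_re_nonneg hCab x
      rw [quad_sub] at this
      linarith
    have hchain : (f (d j) - ε) * Sy ≤ e j * Sy := by
      calc (f (d j) - ε) * Sy ≤ (a * d j + b) * Sy :=
            mul_le_mul_of_nonneg_right hval (le_of_lt hSpos)
        _ ≤ (star x ⬝ᵥ ((a:ℂ) • B + (b:ℂ) • 1) *ᵥ x).re := hqAB
        _ ≤ (star x ⬝ᵥ C *ᵥ x).re := hdiffpos
        _ ≤ e j * Sy := hqC
    have := (mul_le_mul_iff_left₀ hSpos).mp hchain
    linarith
  -- final assembly
  refine ⟨WB * WCᴴ, ?_, ?_⟩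
  · rw [Matrix.mem_unitaryGroup_iff, Matrix.star_eq_conjTranspose, Matrix.conjTranspose_mul,
      conjTranspose_conjTranspose]
    calc WB * WCᴴ * (WC * WBᴴ) = WB * (WCᴴ * WC) * WBᴴ := by
          rw [Matrix.mul_assoc, Matrix.mul_assoc, Matrix.mul_assoc]
      _ = 1 := by rw [hWC1', Matrix.mul_one, hWB1]
  · have hUCU : (WB * WCᴴ) * C * (WB * WCᴴ)ᴴ = conjDiag WB e := by
      rw [Matrix.conjTranspose_mul, conjTranspose_conjTranspose]
      conv_lhs => rw [hrepC]
      unfold conjDiag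
      have hcc : ∀ X : Matrix (Fin m) (Fin m) ℂ, WCᴴ * (WC * X) = X := by
        intro X; rw [← Matrix.mul_assoc, hWC1', Matrix.one_mul]
      calc (WB * WCᴴ) * (WC * Matrix.diagonal (fun i => (e i : ℂ)) * WCᴴ) * (WC * WBᴴ)
          = WB * (WCᴴ * (WC * (Matrix.diagonal (fun i => (e i : ℂ)) * (WCᴴ * (WC * WBᴴ))))) := by
            simp only [Matrix.mul_assoc]
        _ = WB * Matrix.diagonal (fun i => (e i : ℂ)) * WBᴴ := by
            rw [hcc, hcc, ← Matrix.mul_assoc]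
    rw [hUCU, hcfcB f, conjDiag_sub]
    exact conjDiag_psd _ fun i => by
      simp only [Pi.sub_apply]
      have := hkey i
      linarith

end Main
end
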